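/- arXiv:2407.12041 — 6 statements merged into one kernel-verified Lean document; each statement's English description precedes it below -/
import Mathlib

section
/- Let (U_m) and U₀ be bounded convex domains in R^n with d_H(U_m, U₀) → 0. Then for any fixed x₀ ∈ U₀ and k ∈ N, I_k^{U_m}(x₀) → I_k^{U₀}(x₀), and consequently v_{U_m}(x₀) → v_{U₀}(x₀), as m → ∞. -/
open MeasureTheory Metric

/-- The distance from `x` to the boundary of `U` in direction `σ`:
the length of the intersection of the ray `{x + t σ : t ≥ 0}` with `U`. -/
noncomputable def rayDist {n : ℕ} (U : Set (EuclideanSpace ℝ (Fin n)))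
    (x σ : EuclideanSpace ℝ (Fin n)) : ℝ :=
  sSup {t : ℝ | 0 ≤ t ∧ x + t • σ ∈ U}

/-- The `k`-th integral mean of the distance-to-the-boundary function over the unit sphere. -/
noncomputable def sphereMoment {n : ℕ} (U : Set (EuclideanSpace ℝ (Fin n))) (k : ℕ)
    (x : EuclideanSpace ℝ (Fin n)) : ℝ :=
  (((volume : Measure (EuclideanSpace ℝ (Fin n))).toSphere Set.univ).toReal)⁻¹ *
    ∫ σ : sphere (0 : EuclideanSpace ℝ (Fin n)) 1, (rayDist U x (σ : EuclideanSpace ℝ (Fin n)))^k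
      ∂((volume : Measure (EuclideanSpace ℝ (Fin n))).toSphere)

/-- The variance of the distance to the boundary. -/
noncomputable def varDist {n : ℕ} (U : Set (EuclideanSpace ℝ (Fin n)))
    (x : EuclideanSpace ℝ (Fin n)) : ℝ :=
  sphereMoment U 2 x - (sphereMoment U 1 x)^2

section Aux

variable {n : ℕ}

local notation "𝔼" => EuclideanSpace ℝ (Fin n)

/-- Elementary estimate: `|a^k - b^k| ≤ k M^(k-1) |a-b|` for `0 ≤ a, b ≤ M`. -/
lemma aux_abs_pow_sub_pow_le {a b M : ℝ} (ha : 0 ≤ a) (haM : a ≤ M) (hb : 0 ≤ b) (hbM : b ≤ M) :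
    ∀ k : ℕ, |a ^ k - b ^ k| ≤ (k : ℝ) * M ^ (k - 1) * |a - b| := by
  intro k
  have hM : 0 ≤ M := ha.trans haM
  induction k with
  | zero => simp
  | succ j ih =>
    have key : a ^ (j + 1) - b ^ (j + 1) = a * (a ^ j - b ^ j) + (a - b) * b ^ j := by ring
    have h1 : |a ^ (j + 1) - b ^ (j + 1)| ≤ a * |a ^ j - b ^ j| + |a - b| * b ^ j := by
      rw [key]
      calc |a * (a ^ j - b ^ j) + (a - b) * b ^ j|
          ≤ |a * (a ^ j - b ^ j)| + |(a - b) * b ^ j| := abs_add_le _ _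
        _ = a * |a ^ j - b ^ j| + |a - b| * b ^ j := by
            rw [abs_mul, abs_mul, abs_of_nonneg ha, abs_of_nonneg (pow_nonneg hb j)]
    have h2 : a * |a ^ j - b ^ j| ≤ M * ((j : ℝ) * M ^ (j - 1) * |a - b|) :=
      mul_le_mul haM ih (abs_nonneg _) hM
    have h3 : M * ((j : ℝ) * M ^ (j - 1) * |a - b|) ≤ (j : ℝ) * M ^ j * |a - b| := by
      cases j with
      | zero => simp
      | succ i =>
        have hii : (i + 1) - 1 = i := rfl
        rw [hii]
        have : M * ((↑(i + 1) : ℝ) * M ^ i * |a - b|) = (↑(i + 1) : ℝ) * M ^ (i + 1) * |a - b| := by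
          ring
        rw [this]
    have h4 : |a - b| * b ^ j ≤ |a - b| * M ^ j :=
      mul_le_mul_of_nonneg_left (pow_le_pow_left₀ hb hbM j) (abs_nonneg _)
    have hcast : ((j + 1 : ℕ) : ℝ) = (j : ℝ) + 1 := by push_cast; ring
    have hend : ((j + 1 : ℕ) : ℝ) * M ^ ((j + 1) - 1) * |a - b|
        = (j : ℝ) * M ^ j * |a - b| + |a - b| * M ^ j := by
      rw [hcast, Nat.add_sub_cancel]; ring
    rw [hend]
    linarith

lemma aux_rayDist_nonneg (U : Set 𝔼) (x σ : 𝔼) : 0 ≤ rayDist U x σ :=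
  Real.sSup_nonneg fun _t ht => ht.1

lemma aux_rayDist_le_of_subset {U : Set 𝔼} {x₀ : 𝔼} {B : ℝ} (hB : 0 ≤ B)
    (hUB : U ⊆ closedBall x₀ B) {σ : 𝔼} (hσ : ‖σ‖ = 1) :
    rayDist U x₀ σ ≤ B := by
  apply Real.sSup_le _ hB
  rintro t ⟨ht0, htU⟩
  have h := hUB htU
  rw [mem_closedBall, dist_eq_norm] at h
  simpa [add_sub_cancel_left, norm_smul, hσ, abs_of_nonneg ht0] using h

/-- Absorption lemma: if `V` is convex, contains `closedBall x₀ ρ`, and `q` is within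
distance `d` of a point of `V`, then the point obtained by shrinking `q` towards `x₀`
by factor `ρ/(ρ+d)` lies in `V`. -/
lemma aux_absorb {V : Set 𝔼} (hV : Convex ℝ V) {x₀ : 𝔼} {ρ d : ℝ}
    (hball : closedBall x₀ ρ ⊆ V) (hρ : 0 < ρ) (hd : 0 < d)
    {y q : 𝔼} (hy : y ∈ V) (hq : dist q y ≤ d) :
    x₀ + (ρ / (ρ + d)) • (q - x₀) ∈ V := by
  have hρd : 0 < ρ + d := by linarith
  set a : ℝ := ρ / (ρ + d) with ha_def
  have ha0 : 0 < a := div_pos hρ hρd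
  have ha1 : a ≤ 1 := by
    rw [ha_def, div_le_one hρd]; linarith
  set u : 𝔼 := x₀ + (ρ / d) • (q - y) with hu_def
  have hu : u ∈ V := by
    apply hball
    have hnorm : dist u x₀ = ‖(ρ / d) • (q - y)‖ := by
      rw [hu_def, dist_eq_norm, add_sub_cancel_left]
    rw [mem_closedBall, hnorm, norm_smul, Real.norm_eq_abs,
      abs_of_nonneg (div_nonneg hρ.le hd.le)]
    have hqy : ‖q - y‖ ≤ d := by rwa [← dist_eq_norm]
    calc ρ / d * ‖q - y‖ ≤ ρ / d * d :=
          mul_le_mul_of_nonneg_left hqy (div_nonneg hρ.le hd.le)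
      _ = ρ := div_mul_cancel₀ ρ hd.ne'
  have hcomb : a • y + (1 - a) • u ∈ V := hV hy hu ha0.le (by linarith) (by ring)
  have hdne : d ≠ 0 := hd.ne'
  have hρdne : ρ + d ≠ 0 := hρd.ne'
  have h1 : (1 - a) * (ρ / d) = a := by
    rw [ha_def]
    field_simp
    ring
  have heq : a • y + (1 - a) • u = x₀ + a • (q - x₀) := by
    rw [hu_def, smul_add, smul_smul, h1]
    module
  rwa [heq] at hcomb

/-- Comparison lemma: if every point of `U'` along direction `σ` is, after transporting to
direction `σ'`, within distance `d` of `W`, then the radial function of `U'` in direction `σ`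
is at most `(1 + d/ρ)` times that of `W` in direction `σ'`. -/
lemma aux_rayDist_le_comp {U' W : Set 𝔼} {x₀ σ σ' : 𝔼} {ρ B d : ℝ}
    (hW : Convex ℝ W) (hball : closedBall x₀ ρ ⊆ W) (hρ : 0 < ρ)
    (hWB : W ⊆ closedBall x₀ B) (hσ' : ‖σ'‖ = 1) (hd : 0 < d)
    (hnear : ∀ t : ℝ, 0 ≤ t → x₀ + t • σ ∈ U' → ∃ y ∈ W, dist (x₀ + t • σ') y ≤ d) :
    rayDist U' x₀ σ ≤ (1 + d / ρ) * rayDist W x₀ σ' := by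
  have hρd : 0 < ρ + d := by linarith
  have hbdd : BddAbove {t : ℝ | 0 ≤ t ∧ x₀ + t • σ' ∈ W} := by
    refine ⟨B, ?_⟩
    rintro t ⟨ht0, htW⟩
    have h := hWB htW
    rw [mem_closedBall, dist_eq_norm] at h
    simpa [add_sub_cancel_left, norm_smul, hσ', abs_of_nonneg ht0] using h
  have hfW0 : 0 ≤ rayDist W x₀ σ' := aux_rayDist_nonneg W x₀ σ'
  have hcoef : (0:ℝ) ≤ 1 + d / ρ := by positivity
  apply Real.sSup_le _ (mul_nonneg hcoef hfW0)
  rintro t ⟨ht0, htU⟩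
  obtain ⟨y, hyW, hdy⟩ := hnear t ht0 htU
  have hmem := aux_absorb hW hball hρ hd hyW hdy
  have hsm : x₀ + (ρ / (ρ + d)) • ((x₀ + t • σ') - x₀) = x₀ + ((ρ / (ρ + d)) * t) • σ' := by
    rw [add_sub_cancel_left, smul_smul]
  rw [hsm] at hmem
  have hmemT : (ρ / (ρ + d)) * t ∈ {t : ℝ | 0 ≤ t ∧ x₀ + t • σ' ∈ W} :=
    ⟨mul_nonneg (div_nonneg hρ.le hρd.le) ht0, hmem⟩
  have hle : (ρ / (ρ + d)) * t ≤ rayDist W x₀ σ' := le_csSup hbdd hmemT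
  have hkey : t = (1 + d / ρ) * ((ρ / (ρ + d)) * t) := by
    field_simp
  calc t = (1 + d / ρ) * ((ρ / (ρ + d)) * t) := hkey
    _ ≤ (1 + d / ρ) * rayDist W x₀ σ' := mul_le_mul_of_nonneg_left hle hcoef

/-- If every point of `closedBall x₀ r` is within distance `< ε` of the open convex set `V`,
then `closedBall x₀ (r - 2ε) ⊆ V`. -/
lemma aux_ball_subset_of_near {V : Set 𝔼} (hV : Convex ℝ V) (hVopen : IsOpen V)
    {x₀ : 𝔼} {r ε : ℝ} (hε : 0 < ε)
    (hnear : ∀ u ∈ closedBall x₀ r, ∃ y ∈ V, dist u y < ε) :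
    closedBall x₀ (r - 2 * ε) ⊆ V := by
  intro z hz
  rw [mem_closedBall, dist_eq_norm] at hz
  have hr2 : 0 ≤ r - 2 * ε := le_trans (norm_nonneg _) hz
  have hr0 : 0 ≤ r := by linarith
  by_contra hzV
  obtain ⟨f, hf⟩ := geometric_hahn_banach_open_point hV hVopen hzV
  have hf0 : f ≠ 0 := by
    rintro rfl
    obtain ⟨y, hyV, -⟩ := hnear x₀ (mem_closedBall_self hr0)
    exact lt_irrefl (0 : ℝ) (hf y hyV)
  set v : 𝔼 := (InnerProductSpace.toDual ℝ 𝔼).symm f with hv_def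
  have hvf : ∀ w : 𝔼, @inner ℝ _ _ v w = f w := fun w =>
    InnerProductSpace.toDual_symm_apply
  have hv0 : v ≠ 0 := by
    intro h
    apply hf0
    have := (InnerProductSpace.toDual ℝ 𝔼).symm.map_eq_zero_iff.1 (hv_def ▸ h)
    exact this
  have hvn : 0 < ‖v‖ := norm_pos_iff.2 hv0
  set p : 𝔼 := z + (2 * ε / ‖v‖) • v with hp_def
  have hp : p ∈ closedBall x₀ r := by
    rw [mem_closedBall, dist_eq_norm]
    have : p - x₀ = (z - x₀) + (2 * ε / ‖v‖) • v := by rw [hp_def]; abel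
    rw [this]
    calc ‖(z - x₀) + (2 * ε / ‖v‖) • v‖ ≤ ‖z - x₀‖ + ‖(2 * ε / ‖v‖) • v‖ := norm_add_le _ _
      _ ≤ (r - 2 * ε) + 2 * ε := by
          have h1 : ‖(2 * ε / ‖v‖) • v‖ = 2 * ε := by
            rw [norm_smul, Real.norm_eq_abs, abs_of_nonneg (by positivity),
              div_mul_cancel₀ _ hvn.ne']
          rw [h1]
          linarith
      _ = r := by ring
  obtain ⟨y, hyV, hdy⟩ := hnear p hp
  have e3 : f y < f z := hf y hyV
  have e2 : f p = f z + 2 * ε * ‖v‖ := by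
    rw [hp_def, map_add, f.map_smul]
    have hfv : f v = ‖v‖ * ‖v‖ := by
      rw [← hvf v, real_inner_self_eq_norm_mul_norm]
    rw [smul_eq_mul, hfv]
    field_simp
  have e1 : f p - f y < ε * ‖v‖ := by
    have h1 : f p - f y = @inner ℝ _ _ v (p - y) := by rw [hvf (p - y), map_sub]
    have h2 : @inner ℝ _ _ v (p - y) ≤ ‖v‖ * ‖p - y‖ := real_inner_le_norm v (p - y)
    have h3 : ‖p - y‖ < ε := by rwa [← dist_eq_norm]
    have h4 : ‖v‖ * ‖p - y‖ < ‖v‖ * ε := mul_lt_mul_of_pos_left h3 hvn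
    rw [h1]
    calc @inner ℝ _ _ v (p - y) ≤ ‖v‖ * ‖p - y‖ := h2
      _ < ‖v‖ * ε := h4
      _ = ε * ‖v‖ := mul_comm _ _
  have e4 : 0 < ε * ‖v‖ := mul_pos hε hvn
  linarith

/-- Key estimate: if `hausdorffDist (U m) U₀ < ε` with `ε` small, then `U m` contains an inner
ball, is contained in an outer ball, and its radial function is uniformly close to that of
`U₀`. -/
lemma aux_key {Um U₀ : Set 𝔼} (hUmo : IsOpen Um) (hUmc : Convex ℝ Um)
    (hUmb : Bornology.IsBounded Um) (hUmne : Um.Nonempty)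
    (h₀conv : Convex ℝ U₀) (h₀bdd : Bornology.IsBounded U₀) (h₀ne : U₀.Nonempty)
    {x₀ : 𝔼} {r R ε : ℝ} (hr : 0 < r) (hrR : r ≤ R)
    (hball : closedBall x₀ r ⊆ U₀) (hUR : U₀ ⊆ closedBall x₀ R)
    (hε : 0 < ε) (hεr : ε ≤ r / 12) (hδ : hausdorffDist Um U₀ < ε) :
    closedBall x₀ (r / 2) ⊆ Um ∧ Um ⊆ closedBall x₀ (2 * R) ∧
      ∀ σ : 𝔼, ‖σ‖ = 1 → |rayDist Um x₀ σ - rayDist U₀ x₀ σ| ≤ 8 * R / r * ε := by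
  have hR : 0 < R := lt_of_lt_of_le hr hrR
  have hnetop : EMetric.hausdorffEdist Um U₀ ≠ ⊤ :=
    hausdorffEdist_ne_top_of_nonempty_of_bounded hUmne h₀ne hUmb h₀bdd
  have hnetop' : EMetric.hausdorffEdist U₀ Um ≠ ⊤ := by
    unfold EMetric.hausdorffEdist at hnetop ⊢
    rwa [EMetric.hausdorffEdist_comm]
  have hδ' : hausdorffDist U₀ Um < ε := by rwa [hausdorffDist_comm]
  have hnear₁ : ∀ p ∈ Um, ∃ y ∈ U₀, dist p y < 2 * ε := by
    intro p hp
    have h1 : infDist p U₀ < 2 * ε :=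
      lt_of_le_of_lt (infDist_le_hausdorffDist_of_mem hp hnetop) (by linarith)
    exact (infDist_lt_iff h₀ne).1 h1
  have hnear₂ : ∀ p ∈ U₀, ∃ y ∈ Um, dist p y < 2 * ε := by
    intro p hp
    have h1 : infDist p Um < 2 * ε :=
      lt_of_le_of_lt (infDist_le_hausdorffDist_of_mem hp hnetop') (by linarith)
    exact (infDist_lt_iff hUmne).1 h1
  have hinner0 : closedBall x₀ (r - 2 * (2 * ε)) ⊆ Um :=
    aux_ball_subset_of_near hUmc hUmo (by positivity) fun u hu => hnear₂ u (hball hu)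
  have hin : closedBall x₀ (r / 2) ⊆ Um :=
    (closedBall_subset_closedBall (by linarith)).trans hinner0
  have hout : Um ⊆ closedBall x₀ (2 * R) := by
    intro p hp
    obtain ⟨y, hy, hdy⟩ := hnear₁ p hp
    have h2 : dist y x₀ ≤ R := hUR hy
    rw [mem_closedBall]
    calc dist p x₀ ≤ dist p y + dist y x₀ := dist_triangle _ _ _
      _ ≤ 2 * ε + R := by linarith
      _ ≤ 2 * R := by linarith
  refine ⟨hin, hout, ?_⟩
  intro σ hσ
  have hupper : rayDist Um x₀ σ ≤ (1 + 2 * ε / r) * rayDist U₀ x₀ σ := by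
    apply aux_rayDist_le_comp h₀conv hball hr hUR hσ (by positivity)
    intro t ht0 htU
    obtain ⟨y, hy, hdy⟩ := hnear₁ _ htU
    exact ⟨y, hy, hdy.le⟩
  have hlower : rayDist U₀ x₀ σ ≤ (1 + 2 * ε / (r / 2)) * rayDist Um x₀ σ := by
    apply aux_rayDist_le_comp hUmc hin (by positivity) hout hσ (by positivity)
    intro t ht0 htU
    obtain ⟨y, hy, hdy⟩ := hnear₂ _ htU
    exact ⟨y, hy, hdy.le⟩
  have hf00 : 0 ≤ rayDist U₀ x₀ σ := aux_rayDist_nonneg _ _ _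
  have hf0R : rayDist U₀ x₀ σ ≤ R := aux_rayDist_le_of_subset hR.le hUR hσ
  have hfm0 : 0 ≤ rayDist Um x₀ σ := aux_rayDist_nonneg _ _ _
  have hfmR : rayDist Um x₀ σ ≤ 2 * R := aux_rayDist_le_of_subset (by positivity) hout hσ
  set fm := rayDist Um x₀ σ
  set f0 := rayDist U₀ x₀ σ
  set κ : ℝ := ε / r with hκ_def
  have hκ0 : 0 < κ := by positivity
  have hup2 : fm ≤ (1 + 2 * κ) * f0 := by
    have h : (2:ℝ) * ε / r = 2 * κ := by rw [hκ_def]; ring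
    rwa [h] at hupper
  have hlo2 : f0 ≤ (1 + 4 * κ) * fm := by
    have h : (2:ℝ) * ε / (r / 2) = 4 * κ := by
      rw [hκ_def]; field_simp; ring
    rwa [h] at hlower
  have htarget : 8 * R / r * ε = 8 * R * κ := by rw [hκ_def]; ring
  rw [htarget, abs_le]
  constructor
  · nlinarith [mul_nonneg hκ0.le (sub_nonneg.2 hfmR), mul_nonneg hκ0.le hR.le,
      mul_nonneg hκ0.le hfm0]
  · nlinarith [mul_nonneg hκ0.le (sub_nonneg.2 hf0R), mul_nonneg hκ0.le hR.le,
      mul_nonneg hκ0.le hf00]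

/-- The radial function of a convex body (with inner and outer balls centered at `x₀`)
is Lipschitz, hence continuous, on the unit sphere. -/
lemma aux_rayDist_continuous {V : Set 𝔼} (hV : Convex ℝ V) {x₀ : 𝔼} {ρ B : ℝ}
    (hρ : 0 < ρ) (hball : closedBall x₀ ρ ⊆ V) (hVB : V ⊆ closedBall x₀ B) :
    Continuous (fun σ : sphere (0:𝔼) 1 => rayDist V x₀ (σ : 𝔼)) := by
  have hB0 : 0 ≤ B := by simpa using hVB (hball (mem_closedBall_self hρ.le))
  have hone : ∀ σ σ' : 𝔼, ‖σ‖ = 1 → ‖σ'‖ = 1 →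
      rayDist V x₀ σ - rayDist V x₀ σ' ≤ B * B / ρ * ‖σ - σ'‖ := by
    intro σ σ' hσ hσ'
    have hBρ : 0 < B := by
      have h1 : x₀ + ρ • σ ∈ closedBall x₀ ρ := by
        rw [mem_closedBall, dist_eq_norm]
        simp [add_sub_cancel_left, norm_smul, hσ, abs_of_nonneg hρ.le]
      have h2 := hVB (hball h1)
      rw [mem_closedBall, dist_eq_norm] at h2
      have h3 : ρ ≤ B := by
        simpa [add_sub_cancel_left, norm_smul, hσ, abs_of_nonneg hρ.le] using h2
      linarith
    have hfσ' : rayDist V x₀ σ' ≤ B := aux_rayDist_le_of_subset hB0 hVB hσ'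
    refine le_of_forall_pos_le_add fun η hη => ?_
    set d : ℝ := B * ‖σ - σ'‖ + ρ * η / B with hd_def
    have hd : 0 < d := by
      have : 0 ≤ B * ‖σ - σ'‖ := by positivity
      have : 0 < ρ * η / B := by positivity
      rw [hd_def]; linarith
    have hcomp : rayDist V x₀ σ ≤ (1 + d / ρ) * rayDist V x₀ σ' := by
      apply aux_rayDist_le_comp hV hball hρ hVB hσ' hd
      intro t ht0 htV
      refine ⟨x₀ + t • σ, htV, ?_⟩
      have htB : t ≤ B := by
        have h := hVB htV
        rw [mem_closedBall, dist_eq_norm] at h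
        simpa [add_sub_cancel_left, norm_smul, hσ, abs_of_nonneg ht0] using h
      have hdist : dist (x₀ + t • σ') (x₀ + t • σ) = t * ‖σ' - σ‖ := by
        rw [dist_eq_norm, add_sub_add_left_eq_sub, ← smul_sub, norm_smul,
          Real.norm_eq_abs, abs_of_nonneg ht0]
      rw [hdist, norm_sub_rev]
      have h5 : t * ‖σ - σ'‖ ≤ B * ‖σ - σ'‖ :=
        mul_le_mul_of_nonneg_right htB (norm_nonneg _)
      have h7 : 0 < ρ * η / B := by positivity
      rw [hd_def]
      linarith
    have h5 : d / ρ * rayDist V x₀ σ' ≤ d / ρ * B :=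
      mul_le_mul_of_nonneg_left hfσ' (by positivity)
    have h6 : (1 + d / ρ) * rayDist V x₀ σ' = rayDist V x₀ σ' + d / ρ * rayDist V x₀ σ' := by
      ring
    have h4 : d / ρ * B = B * B / ρ * ‖σ - σ'‖ + η := by
      rw [hd_def]; field_simp
    linarith
  have hlip : LipschitzWith (Real.toNNReal (B * B / ρ))
      (fun σ : sphere (0:𝔼) 1 => rayDist V x₀ (σ : 𝔼)) := by
    apply LipschitzWith.of_dist_le_mul
    intro σ σ'
    have hσ : ‖(σ : 𝔼)‖ = 1 := norm_eq_of_mem_sphere σ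
    have hσ' : ‖(σ' : 𝔼)‖ = 1 := norm_eq_of_mem_sphere σ'
    rw [Real.dist_eq, Subtype.dist_eq, dist_eq_norm]
    have hc : B * B / ρ ≤ (Real.toNNReal (B * B / ρ) : ℝ) := Real.le_coe_toNNReal _
    have habs : |rayDist V x₀ (σ : 𝔼) - rayDist V x₀ (σ' : 𝔼)| ≤ B * B / ρ * ‖(σ : 𝔼) - σ'‖ := by
      rw [abs_sub_le_iff]
      refine ⟨hone _ _ hσ hσ', ?_⟩
      rw [norm_sub_rev]
      exact hone _ _ hσ' hσ
    calc |rayDist V x₀ (σ : 𝔼) - rayDist V x₀ (σ' : 𝔼)| ≤ B * B / ρ * ‖(σ : 𝔼) - σ'‖ := habs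
      _ ≤ (Real.toNNReal (B * B / ρ) : ℝ) * ‖(σ : 𝔼) - σ'‖ :=
          mul_le_mul_of_nonneg_right hc (norm_nonneg _)
  exact hlip.continuous

lemma aux_rayDist_integrable {V : Set 𝔼} (hV : Convex ℝ V) {x₀ : 𝔼} {ρ B : ℝ}
    (hρ : 0 < ρ) (hball : closedBall x₀ ρ ⊆ V) (hVB : V ⊆ closedBall x₀ B) (k : ℕ) :
    Integrable (fun σ : sphere (0:𝔼) 1 => rayDist V x₀ (σ : 𝔼) ^ k)
      ((volume : Measure 𝔼).toSphere) := by
  have hB0 : 0 ≤ B := by simpa using hVB (hball (mem_closedBall_self hρ.le))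
  have hc : Continuous (fun σ : sphere (0:𝔼) 1 => rayDist V x₀ (σ : 𝔼) ^ k) :=
    (aux_rayDist_continuous hV hρ hball hVB).pow k
  refine (integrable_const (B ^ k)).mono' hc.aestronglyMeasurable
    (Filter.Eventually.of_forall fun σ => ?_)
  have h0 : 0 ≤ rayDist V x₀ (σ : 𝔼) := aux_rayDist_nonneg _ _ _
  have h1 : rayDist V x₀ (σ : 𝔼) ≤ B :=
    aux_rayDist_le_of_subset hB0 hVB (norm_eq_of_mem_sphere σ)
  rw [Real.norm_eq_abs, abs_of_nonneg (pow_nonneg h0 k)]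
  exact pow_le_pow_left₀ h0 h1 k

end Aux

theorem moments_and_variance_tendsto_of_hausdorff {n : ℕ}
    (U : ℕ → Set (EuclideanSpace ℝ (Fin n))) (U₀ : Set (EuclideanSpace ℝ (Fin n)))
    (hopen : ∀ m, IsOpen (U m)) (hconv : ∀ m, Convex ℝ (U m))
    (hbdd : ∀ m, Bornology.IsBounded (U m)) (hne : ∀ m, (U m).Nonempty)
    (h₀open : IsOpen U₀) (h₀conv : Convex ℝ U₀) (h₀bdd : Bornology.IsBounded U₀)
    (h₀ne : U₀.Nonempty)
    (hH : Filter.Tendsto (fun m => Metric.hausdorffDist (U m) U₀) Filter.atTop (nhds 0))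
    (x₀ : EuclideanSpace ℝ (Fin n)) (hx₀ : x₀ ∈ U₀) :
    (∀ k : ℕ, Filter.Tendsto (fun m => sphereMoment (U m) k x₀) Filter.atTop
        (nhds (sphereMoment U₀ k x₀))) ∧
      Filter.Tendsto (fun m => varDist (U m) x₀) Filter.atTop (nhds (varDist U₀ x₀)) := by
  obtain ⟨r0, hr0, hball0⟩ := Metric.isOpen_iff.1 h₀open x₀ hx₀
  set r : ℝ := r0 / 2 with hr_def
  have hr : 0 < r := by positivity
  have hball : closedBall x₀ r ⊆ U₀ :=
    (closedBall_subset_ball (by rw [hr_def]; linarith)).trans hball0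
  obtain ⟨R0, hR0⟩ := h₀bdd.subset_closedBall x₀
  set R : ℝ := max R0 r with hR_def
  have hrR : r ≤ R := le_max_right _ _
  have hR : 0 < R := lt_of_lt_of_le hr hrR
  have hUR : U₀ ⊆ closedBall x₀ R :=
    hR0.trans (closedBall_subset_closedBall (le_max_left _ _))
  have hmain : ∀ k : ℕ, Filter.Tendsto (fun m => sphereMoment (U m) k x₀) Filter.atTop
      (nhds (sphereMoment U₀ k x₀)) := by
    intro k
    simp only [sphereMoment]
    apply Filter.Tendsto.const_mul
    rw [Metric.tendsto_atTop]
    intro η hη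
    set μt : ℝ := (((volume : Measure (EuclideanSpace ℝ (Fin n))).toSphere) Set.univ).toReal
      with hμt_def
    have hμt : 0 ≤ μt := ENNReal.toReal_nonneg
    set P : ℝ := (k : ℝ) * (2 * R) ^ (k - 1) with hP_def
    have hP : 0 ≤ P := by positivity
    set L : ℝ := 8 * R / r with hL_def
    have hL : 0 ≤ L := by positivity
    set C : ℝ := μt * (P * L) + 1 with hC_def
    have hC : 0 < C := by positivity
    set ε : ℝ := min (r / 24) (η / C) with hε_def
    have hε : 0 < ε := lt_min (by positivity) (div_pos hη hC)
    have hεr : ε ≤ r / 12 := le_trans (min_le_left _ _) (by linarith)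
    have hev : ∀ᶠ m in Filter.atTop, hausdorffDist (U m) U₀ < ε :=
      hH.eventually (eventually_lt_nhds hε)
    obtain ⟨N, hN⟩ := Filter.eventually_atTop.1 hev
    refine ⟨N, fun m hm => ?_⟩
    obtain ⟨hin, hout, hest⟩ := aux_key (hopen m) (hconv m) (hbdd m) (hne m)
      h₀conv h₀bdd h₀ne hr hrR hball hUR hε hεr (hN m hm)
    have hint_m : Integrable
        (fun σ : sphere (0 : EuclideanSpace ℝ (Fin n)) 1 =>
          rayDist (U m) x₀ (σ : EuclideanSpace ℝ (Fin n)) ^ k)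
        ((volume : Measure (EuclideanSpace ℝ (Fin n))).toSphere) :=
      aux_rayDist_integrable (hconv m) (by positivity) hin hout k
    have hint_0 : Integrable
        (fun σ : sphere (0 : EuclideanSpace ℝ (Fin n)) 1 =>
          rayDist U₀ x₀ (σ : EuclideanSpace ℝ (Fin n)) ^ k)
        ((volume : Measure (EuclideanSpace ℝ (Fin n))).toSphere) :=
      aux_rayDist_integrable h₀conv hr hball hUR k
    have hbd : ∀ σ : sphere (0 : EuclideanSpace ℝ (Fin n)) 1,
        ‖rayDist (U m) x₀ (σ : EuclideanSpace ℝ (Fin n)) ^ k -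
          rayDist U₀ x₀ (σ : EuclideanSpace ℝ (Fin n)) ^ k‖ ≤ P * (L * ε) := by
      intro σ
      have hσ : ‖(σ : EuclideanSpace ℝ (Fin n))‖ = 1 := norm_eq_of_mem_sphere σ
      have h1 := hest σ hσ
      have hfm0 : 0 ≤ rayDist (U m) x₀ (σ : EuclideanSpace ℝ (Fin n)) :=
        aux_rayDist_nonneg _ _ _
      have hfmB : rayDist (U m) x₀ (σ : EuclideanSpace ℝ (Fin n)) ≤ 2 * R :=
        aux_rayDist_le_of_subset (by positivity) hout hσ
      have hf00 : 0 ≤ rayDist U₀ x₀ (σ : EuclideanSpace ℝ (Fin n)) :=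
        aux_rayDist_nonneg _ _ _
      have hf0B : rayDist U₀ x₀ (σ : EuclideanSpace ℝ (Fin n)) ≤ 2 * R :=
        aux_rayDist_le_of_subset (by positivity)
          (hUR.trans (closedBall_subset_closedBall (by linarith))) hσ
      have h2 := aux_abs_pow_sub_pow_le hfm0 hfmB hf00 hf0B k
      rw [Real.norm_eq_abs]
      calc |rayDist (U m) x₀ (σ : EuclideanSpace ℝ (Fin n)) ^ k -
            rayDist U₀ x₀ (σ : EuclideanSpace ℝ (Fin n)) ^ k|
          ≤ (k : ℝ) * (2 * R) ^ (k - 1) *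
            |rayDist (U m) x₀ (σ : EuclideanSpace ℝ (Fin n)) -
              rayDist U₀ x₀ (σ : EuclideanSpace ℝ (Fin n))| := h2
        _ ≤ P * (L * ε) := by
            rw [hP_def]
            apply mul_le_mul_of_nonneg_left _ (by positivity)
            calc |rayDist (U m) x₀ (σ : EuclideanSpace ℝ (Fin n)) -
                  rayDist U₀ x₀ (σ : EuclideanSpace ℝ (Fin n))| ≤ 8 * R / r * ε := h1
              _ = L * ε := by rw [hL_def]
    have hIb : dist
        (∫ σ : sphere (0 : EuclideanSpace ℝ (Fin n)) 1,
          rayDist (U m) x₀ (σ : EuclideanSpace ℝ (Fin n)) ^ k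
            ∂((volume : Measure (EuclideanSpace ℝ (Fin n))).toSphere))
        (∫ σ : sphere (0 : EuclideanSpace ℝ (Fin n)) 1,
          rayDist U₀ x₀ (σ : EuclideanSpace ℝ (Fin n)) ^ k
            ∂((volume : Measure (EuclideanSpace ℝ (Fin n))).toSphere)) ≤ P * (L * ε) * μt := by
      rw [dist_eq_norm, ← integral_sub hint_m hint_0]
      exact norm_integral_le_of_norm_le_const (Filter.Eventually.of_forall hbd)
    have key2 : C * ε ≤ η := by
      have h := mul_le_mul_of_nonneg_left (min_le_right (r / 24) (η / C)) hC.le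
      have h2 : C * (η / C) = η := by field_simp
      calc C * ε ≤ C * (η / C) := h
        _ = η := h2
    have e0 : P * (L * ε) * μt = μt * (P * L) * ε := by ring
    have e1 : μt * (P * L) < C := by rw [hC_def]; linarith
    have e2 := mul_lt_mul_of_pos_right e1 hε
    have hfin : P * (L * ε) * μt < η := by linarith
    exact lt_of_le_of_lt hIb hfin
  refine ⟨hmain, ?_⟩
  have h2 := hmain 2
  have h1 := hmain 1
  simp only [varDist]
  exact h2.sub (h1.pow 2)
end

section
/- Let U be a bounded convex domain in R². For z₀ ∈ U and direction σ, the directional derivative of I_1^U satisfies D_σ I_1^U(z₀) = −(1/2π) ∫₀^{2π} sin(φ−σ) · ∂_φ d_U(z₀,φ) / d_U(z₀,φ) dφ, which by integration by parts equals (1/2π) ∫₀^{2π} cos(φ−σ) ln d_U(z₀,φ) dφ. -/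
open MeasureTheory Real

/-- Distance from `z` to the boundary of `U ⊆ ℂ` along the ray in direction `e^{iφ}`. -/
noncomputable def rayDist2 (U : Set ℂ) (z : ℂ) (φ : ℝ) : ℝ :=
  sSup {t : ℝ | 0 ≤ t ∧ z + (t : ℂ) * Complex.exp (φ * Complex.I) ∈ U}

/-- The `k`-th integral mean of the distance-to-the-boundary function. -/
noncomputable def Imom2 (U : Set ℂ) (k : ℕ) (z : ℂ) : ℝ :=
  (1 / (2 * π)) * ∫ φ in (0:ℝ)..(2 * π), (rayDist2 U z φ) ^ k

/-- The variance of the distance to the boundary. -/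
noncomputable def varDist2 (U : Set ℂ) (z : ℂ) : ℝ :=
  Imom2 U 2 z - (Imom2 U 1 z) ^ 2

/-- Directional derivative of `v` at `z` in the direction `e^{iσ}`. -/
noncomputable def dirDeriv2 (v : ℂ → ℝ) (σ : ℝ) (z : ℂ) : ℝ :=
  deriv (fun t : ℝ => v (z + (t : ℂ) * Complex.exp (σ * Complex.I))) 0

noncomputable def edir (φ : ℝ) : ℂ := Complex.exp ((φ:ℂ) * Complex.I)

lemma edir_norm (φ : ℝ) : ‖edir φ‖ = 1 := Complex.norm_exp_ofReal_mul_I φ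

lemma hasDerivAt_edir (φ : ℝ) : HasDerivAt edir (edir φ * Complex.I) φ := by
  have h : HasDerivAt (fun z : ℂ => Complex.exp (z * Complex.I))
      (Complex.exp ((φ:ℂ) * Complex.I) * Complex.I) (φ:ℂ) := by
    have := (Complex.hasDerivAt_exp ((φ:ℂ) * Complex.I)).comp (φ:ℂ)
      ((hasDerivAt_id ((φ:ℂ))).mul_const Complex.I)
    simpa [Function.comp_def] using this
  exact h.comp_ofReal

lemma edir_lipschitz : LipschitzWith 1 edir := by
  apply lipschitzWith_of_nnnorm_deriv_le (fun x => (hasDerivAt_edir x).differentiableAt)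
  intro x
  rw [(hasDerivAt_edir x).deriv]
  apply le_of_eq
  have h : ‖edir x * Complex.I‖ = 1 := by
    rw [norm_mul, edir_norm]; simp
  exact NNReal.coe_injective (by simpa using h)

lemma edir_dist_le (φ φ' : ℝ) : ‖edir φ' - edir φ‖ ≤ |φ' - φ| := by
  have := edir_lipschitz.dist_le_mul φ' φ
  simpa [dist_eq_norm, Real.dist_eq] using this

lemma rayDist2_def (U : Set ℂ) (z : ℂ) (φ : ℝ) :
    rayDist2 U z φ = sSup {t : ℝ | 0 ≤ t ∧ z + (t : ℂ) * edir φ ∈ U} := rfl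

section geom
variable {U : Set ℂ}

/-- membership characterization -/
lemma mem_iff_lt_rayDist (hU_open : IsOpen U) (hU_conv : Convex ℝ U)
    (hU_bdd : Bornology.IsBounded U) {z : ℂ} (hz : z ∈ U) (φ : ℝ) {s : ℝ} (hs : 0 ≤ s) :
    z + (s:ℂ) * edir φ ∈ U ↔ s < rayDist2 U z φ := by
  set S := {t : ℝ | 0 ≤ t ∧ z + (t:ℂ) * edir φ ∈ U} with hS
  rw [rayDist2_def]
  have h0 : (0:ℝ) ∈ S := ⟨le_refl 0, by simpa using hz⟩
  have hne : S.Nonempty := ⟨0, h0⟩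
  obtain ⟨M, hM⟩ := hU_bdd.subset_ball z
  have hbdd : BddAbove S := by
    refine ⟨M, fun t ht => ?_⟩
    have h1 : dist (z + (t:ℂ) * edir φ) z < M := Metric.mem_ball.mp (hM ht.2)
    have h2 : dist (z + (t:ℂ) * edir φ) z = |t| := by
      rw [dist_eq_norm]
      simp only [add_sub_cancel_left, norm_mul, edir_norm, mul_one, Complex.norm_real,
        Real.norm_eq_abs]
    rw [h2, abs_of_nonneg ht.1] at h1
    exact h1.le
  have hsup0 : 0 ≤ sSup S := le_csSup hbdd h0
  have hstar : ∀ t ∈ S, ∀ t', 0 ≤ t' → t' ≤ t → t' ∈ S := by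
    intro t ht t' ht'0 ht't
    rcases eq_or_lt_of_le ht't with rfl | hlt
    · exact ht
    have ht0 : 0 < t := lt_of_le_of_lt ht'0 hlt
    set a := t'/t with ha
    have ht'eq : t' = a * t := by rw [ha, div_mul_cancel₀ _ ht0.ne']
    have ha0 : 0 ≤ a := div_nonneg ht'0 ht0.le
    have ha1 : a ≤ 1 := (div_le_one ht0).mpr ht't
    have key : z + (t':ℂ) * edir φ
        = (1 - a) • z + a • (z + (t:ℂ) * edir φ) := by
      rw [Complex.real_smul, Complex.real_smul, ht'eq]
      push_cast
      ring
    refine ⟨ht'0, ?_⟩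
    rw [key]
    exact hU_conv hz ht.2 (by linarith) ha0 (by ring)
  have hnotmem : sSup S ∉ S := by
    intro hmem
    obtain ⟨ε, hε, hball⟩ := Metric.isOpen_iff.mp hU_open _ hmem.2
    have hmem2 : sSup S + ε/2 ∈ S := by
      refine ⟨by positivity, hball ?_⟩
      rw [Metric.mem_ball, dist_eq_norm]
      have heq : z + ((sSup S + ε/2 :ℝ):ℂ) * edir φ - (z + ((sSup S:ℝ):ℂ) * edir φ)
          = ((ε/2:ℝ):ℂ) * edir φ := by push_cast; ring
      rw [heq, norm_mul, edir_norm, mul_one, Complex.norm_real, Real.norm_eq_abs,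
        abs_of_pos (by positivity)]
      linarith
    have := le_csSup hbdd hmem2
    linarith
  constructor
  · intro hmemU
    have hsS : s ∈ S := ⟨hs, hmemU⟩
    have hle : s ≤ sSup S := le_csSup hbdd hsS
    rcases eq_or_lt_of_le hle with heq | hlt
    · exact absurd (heq ▸ hsS) hnotmem
    · exact hlt
  · intro hlt
    obtain ⟨t, htS, hst⟩ := exists_lt_of_lt_csSup hne hlt
    exact (hstar t htS s hs hst.le).2

lemma rayDist_pos {δ : ℝ} (hδ : 0 < δ) {z₀ : ℂ} (hball : Metric.ball z₀ δ ⊆ U)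
    (hU_open : IsOpen U) (hU_conv : Convex ℝ U) (hU_bdd : Bornology.IsBounded U)
    (φ : ℝ) : δ/2 < rayDist2 U z₀ φ := by
  have hz : z₀ ∈ U := hball (Metric.mem_ball_self hδ)
  rw [← mem_iff_lt_rayDist hU_open hU_conv hU_bdd hz φ (by positivity)]
  apply hball
  rw [Metric.mem_ball, dist_eq_norm]
  have heq : z₀ + ((δ/2:ℝ):ℂ) * edir φ - z₀ = ((δ/2:ℝ):ℂ) * edir φ := by ring
  rw [heq, norm_mul, edir_norm, mul_one, Complex.norm_real, Real.norm_eq_abs,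
    abs_of_pos (by positivity)]
  linarith

lemma rayDist_le {M : ℝ} (hM : 0 < M) {z₀ : ℂ} (hsub : U ⊆ Metric.ball z₀ M)
    (hU_open : IsOpen U) (hU_conv : Convex ℝ U) (hU_bdd : Bornology.IsBounded U)
    {z : ℂ} (hz : z ∈ U) (φ : ℝ) : rayDist2 U z φ ≤ 2*M := by
  by_contra h
  push_neg at h
  have h2M : (0:ℝ) ≤ 2*M := by positivity
  have := (mem_iff_lt_rayDist hU_open hU_conv hU_bdd hz φ h2M).mpr h
  have h1 := hsub this
  have h2 := hsub hz
  rw [Metric.mem_ball] at h1 h2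
  have : dist (z + ((2*M:ℝ):ℂ) * edir φ) z₀ ≥ 2*M - M := by
    calc dist (z + ((2*M:ℝ):ℂ) * edir φ) z₀
        ≥ dist (z + ((2*M:ℝ):ℂ) * edir φ) z - dist z₀ z := by
          have := dist_triangle (z + ((2*M:ℝ):ℂ) * edir φ) z₀ z
          linarith [dist_comm z₀ z ▸ this]
      _ ≥ 2*M - M := by
          have heq : dist (z + ((2*M:ℝ):ℂ) * edir φ) z = 2*M := by
            rw [dist_eq_norm]
            simp only [add_sub_cancel_left, norm_mul, edir_norm, mul_one, Complex.norm_real,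
              Real.norm_eq_abs]
            rw [abs_of_nonneg (by norm_num : (0:ℝ) ≤ 2), abs_of_nonneg hM.le]
          rw [heq, dist_comm]
          linarith
  linarith

end geom

section lip
variable {U : Set ℂ}

lemma rayDist_pos' (hU_open : IsOpen U) (hU_conv : Convex ℝ U)
    (hU_bdd : Bornology.IsBounded U) {z : ℂ} (hz : z ∈ U) (φ : ℝ) :
    0 < rayDist2 U z φ :=
  (mem_iff_lt_rayDist hU_open hU_conv hU_bdd hz φ (le_refl 0)).mp (by simpa using hz)

lemma rayDist_lip (hU_open : IsOpen U) (hU_conv : Convex ℝ U)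
    (hU_bdd : Bornology.IsBounded U) {δ M : ℝ} (hδ : 0 < δ) (hM : 0 < M) {z₀ : ℂ}
    (hball : Metric.ball z₀ δ ⊆ U) (hsub : U ⊆ Metric.ball z₀ M)
    {z z' : ℂ} (hz : z ∈ Metric.ball z₀ (δ/4)) (hz' : z' ∈ Metric.ball z₀ (δ/4))
    (φ φ' : ℝ) :
    rayDist2 U z φ - (8*M/δ) * (‖z' - z‖ + 2*M*|φ' - φ|) ≤ rayDist2 U z' φ' := by
  have hzU : z ∈ U := hball (Metric.ball_subset_ball (by linarith) hz)
  have hz'U : z' ∈ U := hball (Metric.ball_subset_ball (by linarith) hz')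
  set D := ‖z' - z‖ + 2*M*|φ' - φ| with hD
  have hD0 : 0 ≤ D := by positivity
  set lam := 4*D/δ with hlam
  have hlam0 : 0 ≤ lam := by positivity
  have hrz' : 0 < rayDist2 U z' φ' := rayDist_pos' hU_open hU_conv hU_bdd hz'U φ'
  have hrz2M : rayDist2 U z φ ≤ 2*M := rayDist_le hM hsub hU_open hU_conv hU_bdd hzU φ
  have hcoef : (8*M/δ) * D = 2*M*lam := by rw [hlam]; ring
  rcases le_or_gt 1 lam with hge | hlt
  · have : rayDist2 U z φ - (8*M/δ)*D ≤ 0 := by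
      rw [hcoef]
      nlinarith
    linarith
  · -- lam < 1
    rcases eq_or_lt_of_le hD0 with hD0' | hDpos
    · have h1 : ‖z' - z‖ = 0 := by
        nlinarith [norm_nonneg (z' - z), abs_nonneg (φ' - φ)]
      have h2 : φ' = φ := by
        have habs : |φ' - φ| = 0 := by
          nlinarith [norm_nonneg (z' - z), abs_nonneg (φ' - φ)]
        have := abs_eq_zero.mp habs
        linarith
      have hzz : z' = z := sub_eq_zero.mp (norm_eq_zero.mp h1)
      rw [hzz, h2, ← hD0']
      simp
    have hlampos : 0 < lam := by positivity
    clear_value D lam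
    -- key step
    have key : ∀ t : ℝ, 0 ≤ t → t < rayDist2 U z φ → (1-lam)*t < rayDist2 U z' φ' := by
      intro t ht0 htlt
      have ht2M : t ≤ 2*M := le_trans htlt.le hrz2M
      have hmemt : z + (t:ℂ) * edir φ ∈ U :=
        (mem_iff_lt_rayDist hU_open hU_conv hU_bdd hzU φ ht0).mpr htlt
      set v : ℂ := ((lam:ℝ):ℂ)⁻¹ * ((z'-z) + ((lam:ℝ):ℂ)*(z-z₀)
          + ((1-lam:ℝ):ℂ)*(t:ℂ)*(edir φ' - edir φ)) with hv
      have hvnorm : ‖v‖ < δ := by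
        have hb : ‖(z'-z) + ((lam:ℝ):ℂ)*(z-z₀) + ((1-lam:ℝ):ℂ)*(t:ℂ)*(edir φ' - edir φ)‖
            ≤ ‖z'-z‖ + lam*(δ/4) + 2*M*|φ' - φ| := by
          calc ‖(z'-z) + ((lam:ℝ):ℂ)*(z-z₀) + ((1-lam:ℝ):ℂ)*(t:ℂ)*(edir φ' - edir φ)‖
              ≤ ‖z'-z‖ + ‖((lam:ℝ):ℂ)*(z-z₀)‖ + ‖((1-lam:ℝ):ℂ)*(t:ℂ)*(edir φ' - edir φ)‖ :=
                norm_add₃_le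
            _ ≤ ‖z'-z‖ + lam*(δ/4) + 2*M*|φ' - φ| := by
                have h1 : ‖((lam:ℝ):ℂ)*(z-z₀)‖ ≤ lam*(δ/4) := by
                  rw [norm_mul, Complex.norm_real, Real.norm_eq_abs, abs_of_nonneg hlam0]
                  have : ‖z - z₀‖ ≤ δ/4 := by
                    have := Metric.mem_ball.mp hz
                    rw [dist_eq_norm] at this
                    linarith
                  nlinarith
                have h2 : ‖((1-lam:ℝ):ℂ)*(t:ℂ)*(edir φ' - edir φ)‖ ≤ 2*M*|φ' - φ| := by
                  rw [norm_mul, norm_mul, Complex.norm_real, Complex.norm_real,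
                    Real.norm_eq_abs, Real.norm_eq_abs, abs_of_nonneg (by linarith : (0:ℝ) ≤ 1 - lam),
                    abs_of_nonneg ht0]
                  have he := edir_dist_le φ φ'
                  have h1lam : (1-lam)*t ≤ 2*M := by nlinarith
                  have hprod : (1-lam)*t*‖edir φ' - edir φ‖ ≤ 2*M*|φ' - φ| := by
                    have h0 : 0 ≤ (1-lam)*t := by nlinarith
                    calc (1-lam)*t*‖edir φ' - edir φ‖ ≤ (1-lam)*t*|φ' - φ| := by
                          exact mul_le_mul_of_nonneg_left he h0
                      _ ≤ 2*M*|φ' - φ| := by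
                          exact mul_le_mul_of_nonneg_right h1lam (abs_nonneg _)
                  exact hprod
                linarith
        have : ‖v‖ ≤ lam⁻¹ * (‖z'-z‖ + lam*(δ/4) + 2*M*|φ' - φ|) := by
          rw [hv, norm_mul]
          have : ‖(((lam:ℝ)):ℂ)⁻¹‖ = lam⁻¹ := by
            rw [norm_inv, Complex.norm_real, Real.norm_eq_abs, abs_of_nonneg hlam0]
          rw [this]
          exact mul_le_mul_of_nonneg_left hb (by positivity)
        have hinner : lam⁻¹ * (‖z'-z‖ + 2*M*|φ'-φ|) = δ/4 := by
          rw [← hD, hlam]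
          field_simp
        have heval : lam⁻¹ * (‖z'-z‖ + lam*(δ/4) + 2*M*|φ' - φ|) = δ/4 + δ/4 := by
          calc lam⁻¹ * (‖z'-z‖ + lam*(δ/4) + 2*M*|φ' - φ|)
              = lam⁻¹ * (‖z'-z‖ + 2*M*|φ'-φ|) + lam⁻¹*lam*(δ/4) := by ring
            _ = δ/4 + δ/4 := by
                rw [hinner, inv_mul_cancel₀ hlampos.ne']
                ring
        rw [heval] at this
        linarith
      have hmemv : z₀ + v ∈ U := by
        apply hball
        rw [Metric.mem_ball, dist_eq_norm]
        simpa using hvnorm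
      have hcombo : z' + (((1-lam)*t:ℝ):ℂ) * edir φ'
          = (1-lam) • (z + (t:ℂ) * edir φ) + lam • (z₀ + v) := by
        rw [Complex.real_smul, Complex.real_smul, hv]
        have hlamne : ((lam:ℝ):ℂ) ≠ 0 := by
          exact_mod_cast hlampos.ne'
        push_cast
        field_simp
        ring
      have hmems : z' + (((1-lam)*t:ℝ):ℂ) * edir φ' ∈ U := by
        rw [hcombo]
        exact hU_conv hmemt hmemv (by linarith) hlam0 (by ring)
      exact (mem_iff_lt_rayDist hU_open hU_conv hU_bdd hz'U φ' (by nlinarith)).mp hmems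
    -- conclude
    have hconc : (1-lam) * rayDist2 U z φ ≤ rayDist2 U z' φ' := by
      by_contra hcon
      push_neg at hcon
      have h1lam : 0 < 1 - lam := by linarith
      set t := rayDist2 U z' φ' / (1-lam) with htdef
      have ht0 : 0 ≤ t := by positivity
      have htlt : t < rayDist2 U z φ := by
        rw [htdef, div_lt_iff₀ h1lam]
        nlinarith
      have := key t ht0 htlt
      rw [htdef, mul_div_cancel₀ _ h1lam.ne'] at this
      exact lt_irrefl _ this
    calc rayDist2 U z φ - (8*M/δ)*D = rayDist2 U z φ - 2*M*lam := by rw [hcoef]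
      _ ≤ rayDist2 U z φ - rayDist2 U z φ * lam := by nlinarith
      _ = (1-lam) * rayDist2 U z φ := by ring
      _ ≤ rayDist2 U z' φ' := hconc

end lip

lemma abs_mul_exp_arctan {w : ℂ} (hw : 0 < w.re) :
    ((‖w‖ : ℝ):ℂ) * Complex.exp (((Real.arctan (w.im/w.re) : ℝ):ℂ) * Complex.I) = w := by
  set x := w.im / w.re with hx
  have hwne : w ≠ 0 := by
    intro h; rw [h] at hw; simp at hw
  have habspos : 0 < ‖w‖ := norm_pos_iff.mpr hwne
  have h2 : (‖w‖)^2 = w.re^2 + w.im^2 := by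
    rw [Complex.sq_norm, Complex.normSq_apply]; ring
  have hsqrt : Real.sqrt (1 + x^2) = ‖w‖ / w.re := by
    rw [show 1 + x^2 = (‖w‖ / w.re)^2 by
      rw [hx]; field_simp; linarith [h2]]
    exact Real.sqrt_sq (by positivity)
  have hcos : ‖w‖ * Real.cos (Real.arctan x) = w.re := by
    rw [Real.cos_arctan, hsqrt]
    field_simp
  have hsin : ‖w‖ * Real.sin (Real.arctan x) = w.im := by
    rw [Real.sin_arctan, hsqrt, hx]
    field_simp
  rw [Complex.exp_mul_I]
  rw [show Complex.cos ((Real.arctan x : ℝ):ℂ) = ((Real.cos (Real.arctan x) : ℝ):ℂ) by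
    rw [Complex.ofReal_cos]]
  rw [show Complex.sin ((Real.arctan x : ℝ):ℂ) = ((Real.sin (Real.arctan x) : ℝ):ℂ) by
    rw [Complex.ofReal_sin]]
  calc ((‖w‖ :ℝ):ℂ) * (((Real.cos (Real.arctan x) : ℝ):ℂ)
        + ((Real.sin (Real.arctan x) : ℝ):ℂ) * Complex.I)
      = ((‖w‖ * Real.cos (Real.arctan x) : ℝ):ℂ)
        + ((‖w‖ * Real.sin (Real.arctan x) : ℝ):ℂ) * Complex.I := by
        push_cast; ring
    _ = ((w.re : ℝ):ℂ) + ((w.im : ℝ):ℂ) * Complex.I := by rw [hcos, hsin]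
    _ = w := Complex.re_add_im w

lemma edir_add (x y : ℝ) : edir (x + y) = edir x * edir y := by
  unfold edir
  rw [← Complex.exp_add]
  push_cast
  ring_nf

section pointwise
variable {U : Set ℂ}

set_option maxHeartbeats 1000000 in
lemma hasDerivAt_rayDist_dir (hU_open : IsOpen U) (hU_conv : Convex ℝ U)
    (hU_bdd : Bornology.IsBounded U) {z₀ : ℂ} (hz₀ : z₀ ∈ U)
    (σ φ : ℝ) (hdiffφ : DifferentiableAt ℝ (rayDist2 U z₀) φ) :
    HasDerivAt (fun t : ℝ => rayDist2 U (z₀ + (t:ℂ) * edir σ) φ)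
      (-Real.cos (φ - σ) - Real.sin (φ - σ) * deriv (rayDist2 U z₀) φ / rayDist2 U z₀ φ) 0 := by
  have hr₀pos : 0 < rayDist2 U z₀ φ := rayDist_pos' hU_open hU_conv hU_bdd hz₀ φ
  set r₀ := rayDist2 U z₀ φ with hr₀
  set r' := deriv (rayDist2 U z₀) φ with hr'
  set L := -Real.cos (φ - σ) - Real.sin (φ - σ) * r' / r₀ with hL
  set co := Real.cos (σ - φ) with hco
  set si := Real.sin (σ - φ) with hsi
  set A : ℝ → ℝ → ℝ := fun c t => (r₀ + c*t) + t*co with hA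
  set B : ℝ → ℝ := fun t => t*si with hB
  set W : ℝ → ℝ → ℂ := fun c t => ((r₀ + c*t : ℝ):ℂ) + (t:ℂ) * edir (σ - φ) with hW
  set RR : ℝ → ℝ → ℝ := fun c t => Real.sqrt (A c t^2 + B t^2) with hRR
  set PS : ℝ → ℝ → ℝ := fun c t => φ + Real.arctan (B t / A c t) with hPS
  set HH : ℝ → ℝ → ℝ := fun c t => RR c t - rayDist2 U z₀ (PS c t) with hHH
  have hedre : (edir (σ - φ)).re = co ∧ (edir (σ - φ)).im = si := by
    constructor
    · rw [show edir (σ - φ) = Complex.exp (((σ - φ : ℝ):ℂ) * Complex.I) from rfl,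
        Complex.exp_ofReal_mul_I_re, hco]
    · rw [show edir (σ - φ) = Complex.exp (((σ - φ : ℝ):ℂ) * Complex.I) from rfl,
        Complex.exp_ofReal_mul_I_im, hsi]
  have hWre : ∀ c t : ℝ, (W c t).re = A c t := by
    intro c t
    rw [hW, hA]
    simp only [Complex.add_re, Complex.mul_re, Complex.ofReal_re, Complex.ofReal_im,
      hedre.1, hedre.2]
    ring
  have hWim : ∀ c t : ℝ, (W c t).im = B t := by
    intro c t
    rw [hW, hB]
    simp only [Complex.add_im, Complex.mul_im, Complex.ofReal_re, Complex.ofReal_im,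
      hedre.1, hedre.2]
    ring
  have habsW : ∀ c t : ℝ, ‖W c t‖ = RR c t := by
    intro c t
    rw [Complex.norm_def, Complex.normSq_apply, hWre, hWim, hRR]
    congr 1
    ring
  have hA0 : ∀ c, A c 0 = r₀ := by intro c; simp [hA]
  have hB0 : B 0 = 0 := by simp [hB]
  have hRR0 : ∀ c, RR c 0 = r₀ := by
    intro c
    rw [hRR]
    simp only
    rw [hA0, hB0]
    rw [show r₀^2 + (0:ℝ)^2 = r₀^2 by ring]
    exact Real.sqrt_sq hr₀pos.le
  have hPS0 : ∀ c, PS c 0 = φ := by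
    intro c
    rw [hPS]
    simp [hB]
  have hHH0 : ∀ c, HH c 0 = 0 := by
    intro c
    rw [hHH]
    simp only
    rw [hRR0, hPS0]
    simp [hr₀]
  -- geometric identity
  have hHHdef : ∀ c t : ℝ, HH c t = RR c t - rayDist2 U z₀ (PS c t) := fun c t => rfl
  have hgeom : ∀ c t : ℝ, 0 < A c t →
      z₀ + (t:ℂ) * edir σ + ((r₀ + c*t : ℝ):ℂ) * edir φ
        = z₀ + ((RR c t : ℝ):ℂ) * edir (PS c t) := by
    intro c t hApos
    have hwre : 0 < (W c t).re := by rw [hWre]; exact hApos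
    have h1 := abs_mul_exp_arctan hwre
    rw [hWre, hWim, habsW] at h1
    have h2 : edir (PS c t) = edir φ * Complex.exp (((Real.arctan (B t / A c t) : ℝ):ℂ) * Complex.I) := by
      rw [hPS]
      simp only
      rw [edir_add]
      rfl
    have h3 : edir (σ - φ) * edir φ = edir σ := by
      rw [← edir_add]
      ring_nf
    calc z₀ + (t:ℂ) * edir σ + ((r₀ + c*t : ℝ):ℂ) * edir φ
        = z₀ + (W c t) * edir φ := by rw [hW]; push_cast; rw [← h3]; ring
      _ = z₀ + (((RR c t : ℝ):ℂ) * Complex.exp (((Real.arctan (B t / A c t) : ℝ):ℂ) * Complex.I)) * edir φ := by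
          rw [h1]
      _ = z₀ + ((RR c t : ℝ):ℂ) * edir (PS c t) := by
          rw [h2]; ring
  -- membership characterization
  have hmem : ∀ c t : ℝ, z₀ + (t:ℂ) * edir σ ∈ U → 0 < A c t → 0 ≤ r₀ + c*t →
      ((r₀ + c*t < rayDist2 U (z₀ + (t:ℂ) * edir σ) φ) ↔ RR c t < rayDist2 U z₀ (PS c t)) := by
    intro c t hzt hApos hy
    rw [← mem_iff_lt_rayDist hU_open hU_conv hU_bdd hzt φ hy,
      ← mem_iff_lt_rayDist hU_open hU_conv hU_bdd hz₀ (PS c t) (Real.sqrt_nonneg _)]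
    rw [hgeom c t hApos]
  -- derivative of HH c at 0
  have hderivH : ∀ c, HasDerivAt (HH c) (c - L) 0 := by
    intro c
    have hA' : HasDerivAt (A c) (c + co) 0 := by
      have h1 : HasDerivAt (fun t : ℝ => r₀ + c*t) c 0 := by
        simpa using ((hasDerivAt_id (0:ℝ)).const_mul c).const_add r₀
      have h2 : HasDerivAt (fun t : ℝ => t*co) co 0 := by
        simpa using (hasDerivAt_id (0:ℝ)).mul_const co
      exact h1.add h2
    have hB' : HasDerivAt B si 0 := by
      rw [hB]; simpa using (hasDerivAt_id (0:ℝ)).mul_const si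
    have hN : HasDerivAt (fun t => A c t^2 + B t^2) (2*r₀*(c+co)) 0 := by
      have := (hA'.pow 2).add (hB'.pow 2)
      rw [hA0, hB0] at this
      exact this.congr_deriv (by norm_num <;> ring)
    have hNne : A c 0^2 + B 0^2 ≠ 0 := by
      rw [hA0, hB0]
      positivity
    have hR' : HasDerivAt (RR c) (c + co) 0 := by
      have := hN.sqrt hNne
      rw [hA0, hB0] at this
      have heq : (2*r₀*(c+co)) / (2 * Real.sqrt (r₀^2 + 0^2)) = c + co := by
        rw [show r₀^2 + 0^2 = r₀^2 by ring, Real.sqrt_sq hr₀pos.le]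
        field_simp
      rw [heq] at this
      exact this
    have hq : HasDerivAt (fun t => B t / A c t) (si/r₀) 0 := by
      have := hB'.div hA' (by rw [hA0]; exact hr₀pos.ne')
      rw [hA0, hB0] at this
      have heq : (si * r₀ - 0*(c+co)) / r₀^2 = si/r₀ := by
        field_simp
        ring
      rw [heq] at this
      exact this
    have hΨ : HasDerivAt (PS c) (si/r₀) 0 := by
      have harctan := Real.hasDerivAt_arctan (B 0 / A c 0)
      have := (harctan.comp 0 hq).const_add φ
      rw [hA0, hB0] at this
      rw [hPS]; simpa using this
    have hrΨ : HasDerivAt (fun t => rayDist2 U z₀ (PS c t)) (r' * (si/r₀)) 0 := by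
      have hrd : HasDerivAt (rayDist2 U z₀) r' (PS c 0) := by
        rw [hPS0]
        exact hdiffφ.hasDerivAt
      exact hrd.comp 0 hΨ
    have hH' : HasDerivAt (HH c) ((c + co) - r' * (si/r₀)) 0 := hR'.sub hrΨ
    have heqL : (c + co) - r' * (si/r₀) = c - L := by
      rw [hL, hco, hsi, show σ - φ = -(φ - σ) by ring, Real.cos_neg, Real.sin_neg]
      field_simp
      ring
    rw [heqL] at hH'
    exact hH'
  -- now the little-o argument
  rw [hasDerivAt_iff_isLittleO, Asymptotics.isLittleO_iff]
  intro ε hε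
  have hg0 : rayDist2 U (z₀ + ((0:ℝ):ℂ) * edir σ) φ = r₀ := by norm_num [hr₀]
  -- eventual facts on the punctured neighborhood
  have hev1 : ∀ᶠ (t : ℝ) in nhdsWithin (0:ℝ) {(0:ℝ)}ᶜ, z₀ + (t:ℂ) * edir σ ∈ U := by
    apply Filter.Eventually.filter_mono nhdsWithin_le_nhds
    have hcont : ContinuousAt (fun t : ℝ => z₀ + (t:ℂ) * edir σ) 0 := by
      apply Continuous.continuousAt
      continuity
    have h0 : z₀ + ((0:ℝ):ℂ) * edir σ ∈ U := by simpa using hz₀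
    exact hcont.eventually_mem (hU_open.mem_nhds h0)
  have hev2 : ∀ c : ℝ, ∀ᶠ (t : ℝ) in nhdsWithin (0:ℝ) {(0:ℝ)}ᶜ, 0 < A c t := by
    intro c
    apply Filter.Eventually.filter_mono nhdsWithin_le_nhds
    have hcont : ContinuousAt (A c) 0 := by
      apply Continuous.continuousAt
      rw [hA]; continuity
    have : Filter.Tendsto (A c) (nhds 0) (nhds r₀) := by
      rw [← hA0 c]; exact hcont
    exact this.eventually (eventually_gt_nhds hr₀pos)
  have hev3 : ∀ c : ℝ, ∀ᶠ (t : ℝ) in nhdsWithin (0:ℝ) {(0:ℝ)}ᶜ, 0 ≤ r₀ + c*t := by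
    intro c
    apply Filter.Eventually.filter_mono nhdsWithin_le_nhds
    have hcont : ContinuousAt (fun t : ℝ => r₀ + c*t) 0 := by
      apply Continuous.continuousAt; continuity
    have htd : Filter.Tendsto (fun t : ℝ => r₀ + c*t) (nhds 0) (nhds (r₀ + c*0)) :=
      hcont.tendsto
    have h0 : r₀ + c*0 = r₀ := by ring
    rw [h0] at htd
    exact (htd.eventually (eventually_gt_nhds hr₀pos)).mono (fun t ht => ht.le)
  have hslope : ∀ c, Filter.Tendsto (fun t => HH c t / t) (nhdsWithin (0:ℝ) {(0:ℝ)}ᶜ) (nhds (c - L)) := by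
    intro c
    have := hasDerivAt_iff_tendsto_slope.mp (hderivH c)
    apply this.congr
    intro t
    rw [slope_def_field, hHH0, sub_zero, sub_zero]
  have hev4 : ∀ᶠ (t : ℝ) in nhdsWithin (0:ℝ) {(0:ℝ)}ᶜ, 0 < HH (L + ε) t / t := by
    have := (hslope (L + ε)).eventually (eventually_gt_nhds (by linarith : (0:ℝ) < L + ε - L))
    exact this
  have hev5 : ∀ᶠ (t : ℝ) in nhdsWithin (0:ℝ) {(0:ℝ)}ᶜ, HH (L - ε) t / t < 0 := by
    have := (hslope (L - ε)).eventually (eventually_lt_nhds (by linarith : L - ε - L < 0))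
    exact this
  have hevne : ∀ᶠ (t : ℝ) in nhdsWithin (0:ℝ) {(0:ℝ)}ᶜ, t ≠ 0 := by
    have := self_mem_nhdsWithin (a := (0:ℝ)) (s := {(0:ℝ)}ᶜ)
    filter_upwards [this] with t ht
    simpa using ht
  have hkey : ∀ᶠ (t : ℝ) in nhdsWithin (0:ℝ) {(0:ℝ)}ᶜ,
      |rayDist2 U (z₀ + (t:ℂ) * edir σ) φ - r₀ - t*L| ≤ ε * |t| := by
    filter_upwards [hev1, hev2 (L+ε), hev2 (L-ε), hev3 (L+ε), hev3 (L-ε), hev4, hev5, hevne]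
      with t h1 h2p h2m h3p h3m h4 h5 hne
    have hiffp := hmem (L+ε) t h1 h2p h3p
    have hiffm := hmem (L-ε) t h1 h2m h3m
    set g := rayDist2 U (z₀ + (t:ℂ) * edir σ) φ with hg
    rcases hne.lt_or_gt with htneg | htpos
    · -- t < 0
      have hHp : HH (L+ε) t < 0 := by
        have h := mul_neg_of_pos_of_neg h4 htneg
        rwa [div_mul_cancel₀ _ hne] at h
      have hHm : 0 < HH (L-ε) t := by
        have h := mul_pos_of_neg_of_neg h5 htneg
        rwa [div_mul_cancel₀ _ hne] at h
      have hub : g ≤ r₀ + (L-ε)*t := by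
        by_contra hcon
        push_neg at hcon
        have := hiffm.mp hcon
        have hd := hHHdef (L-ε) t
        linarith
      have hlb : r₀ + (L+ε)*t < g := by
        apply hiffp.mpr
        have hd := hHHdef (L+ε) t
        linarith
      rw [abs_of_neg htneg]
      rw [abs_le]
      constructor <;> nlinarith
    · -- 0 < t
      have hHp : 0 < HH (L+ε) t := by
        have h := mul_pos h4 htpos
        rwa [div_mul_cancel₀ _ hne] at h
      have hHm : HH (L-ε) t < 0 := by
        have h := mul_neg_of_neg_of_pos h5 htpos
        rwa [div_mul_cancel₀ _ hne] at h
      have hub : g ≤ r₀ + (L+ε)*t := by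
        by_contra hcon
        push_neg at hcon
        have := hiffp.mp hcon
        have hd := hHHdef (L+ε) t
        linarith
      have hlb : r₀ + (L-ε)*t < g := by
        apply hiffm.mpr
        have hd := hHHdef (L-ε) t
        linarith
      rw [abs_of_pos htpos]
      rw [abs_le]
      constructor <;> nlinarith
  -- upgrade from punctured to full neighborhood
  rw [eventually_nhdsWithin_iff] at hkey
  filter_upwards [hkey] with t ht
  by_cases h0 : t = 0
  · subst h0
    simp [hg0]
  · have := ht (by simpa using h0)
    simp only [sub_zero, smul_eq_mul, Real.norm_eq_abs]
    calc |rayDist2 U (z₀ + (t:ℂ) * edir σ) φ - rayDist2 U (z₀ + ((0:ℝ):ℂ) * edir σ) φ - t * L|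
        = |rayDist2 U (z₀ + (t:ℂ) * edir σ) φ - r₀ - t*L| := by rw [hg0]
      _ ≤ ε * |t| := this

end pointwise

section assemble
variable {U : Set ℂ}

lemma abs_deriv_le_of_lip {f : ℝ → ℝ} {x K : ℝ}
    (hf : DifferentiableAt ℝ f x) (hlip : ∀ y, |f y - f x| ≤ K * |y - x|) :
    |deriv f x| ≤ K := by
  have h := hasDerivAt_iff_tendsto_slope.mp hf.hasDerivAt
  have habs : Filter.Tendsto (fun y => |slope f x y|) (nhdsWithin x {x}ᶜ) (nhds |deriv f x|) :=
    h.abs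
  apply le_of_tendsto habs
  filter_upwards [self_mem_nhdsWithin] with y hy
  have hyne : y ≠ x := by simpa using hy
  have hpos : 0 < |y - x| := abs_pos.mpr (sub_ne_zero.mpr hyne)
  rw [slope_def_field, abs_div, div_le_iff₀ hpos]
  exact hlip y

set_option maxHeartbeats 1000000 in
lemma hasDerivAt_integral_ray (hU_open : IsOpen U) (hU_conv : Convex ℝ U)
    (hU_bdd : Bornology.IsBounded U) {z₀ : ℂ} (hz₀ : z₀ ∈ U)
    (hdiff : ∀ φ : ℝ, DifferentiableAt ℝ (rayDist2 U z₀) φ) (σ : ℝ)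
    {δ M : ℝ} (hδpos : 0 < δ) (hMpos : 0 < M)
    (hball : Metric.ball z₀ δ ⊆ U) (hsub : U ⊆ Metric.ball z₀ M) :
    HasDerivAt (fun t : ℝ => ∫ φ in (0:ℝ)..(2*π), rayDist2 U (z₀ + (t:ℂ) * edir σ) φ)
      (∫ φ in (0:ℝ)..(2*π),
        (-Real.cos (φ - σ) - Real.sin (φ - σ) * deriv (rayDist2 U z₀) φ / rayDist2 U z₀ φ)) 0 := by
  have h2π : (0:ℝ) ≤ 2*π := by positivity
  have hlipφ : ∀ z ∈ Metric.ball z₀ (δ/4), ∀ φ φ' : ℝ,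
      |rayDist2 U z φ' - rayDist2 U z φ| ≤ (16*M^2/δ) * |φ' - φ| := by
    intro z hz φ φ'
    have h1 := rayDist_lip hU_open hU_conv hU_bdd hδpos hMpos hball hsub hz hz φ φ'
    have h2 := rayDist_lip hU_open hU_conv hU_bdd hδpos hMpos hball hsub hz hz φ' φ
    simp only [sub_self, norm_zero, zero_add] at h1 h2
    have hc1 : (8*M/δ) * (2*M*|φ' - φ|) = (16*M^2/δ) * |φ' - φ| := by ring
    have hc2 : (8*M/δ) * (2*M*|φ - φ'|) = (16*M^2/δ) * |φ' - φ| := by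
      rw [abs_sub_comm φ φ']; ring
    rw [abs_sub_le_iff]
    constructor <;> nlinarith [h1, h2]
  have hcontz : ∀ z ∈ Metric.ball z₀ (δ/4), Continuous (fun φ => rayDist2 U z φ) := by
    intro z hz
    apply LipschitzWith.continuous (K := Real.toNNReal (16*M^2/δ))
    apply LipschitzWith.of_dist_le_mul
    intro x y
    rw [Real.dist_eq, Real.dist_eq, Real.coe_toNNReal _ (by positivity)]
    exact hlipφ z hz y x
  have hnormt : ∀ t : ℝ, ‖(z₀ + (t:ℂ) * edir σ) - z₀‖ = |t| := by
    intro t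
    simp only [add_sub_cancel_left, norm_mul, edir_norm, mul_one, Complex.norm_real,
      Real.norm_eq_abs]
  have hmemball : ∀ t : ℝ, |t| < δ/4 → z₀ + (t:ℂ) * edir σ ∈ Metric.ball z₀ (δ/4) := by
    intro t ht
    rw [Metric.mem_ball, dist_eq_norm, hnormt]
    exact ht
  have hqbound : ∀ t : ℝ, |t| < δ/4 → ∀ φ : ℝ,
      |rayDist2 U (z₀ + (t:ℂ) * edir σ) φ - rayDist2 U z₀ φ| ≤ (8*M/δ) * |t| := by
    intro t ht φ
    have hz0b : z₀ ∈ Metric.ball z₀ (δ/4) := Metric.mem_ball_self (by positivity)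
    have hztb := hmemball t ht
    have h1 := rayDist_lip hU_open hU_conv hU_bdd hδpos hMpos hball hsub hztb hz0b φ φ
    have h2 := rayDist_lip hU_open hU_conv hU_bdd hδpos hMpos hball hsub hz0b hztb φ φ
    have hn1 : ‖z₀ - (z₀ + (t:ℂ) * edir σ)‖ = |t| := by
      rw [← norm_neg]; simp only [neg_sub]; exact hnormt t
    rw [hnormt] at h2
    rw [hn1] at h1
    simp only [sub_self, abs_zero, mul_zero, add_zero] at h1 h2
    rw [abs_sub_le_iff]
    constructor <;> nlinarith [h1, h2]
  have hG00 : ∀ φ : ℝ, rayDist2 U (z₀ + ((0:ℝ):ℂ) * edir σ) φ = rayDist2 U z₀ φ := by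
    intro φ; norm_num
  have hG_int : ∀ t : ℝ, |t| < δ/4 →
      IntegrableOn (fun φ => rayDist2 U (z₀ + (t:ℂ) * edir σ) φ) (Set.Ioc (0:ℝ) (2*π)) := by
    intro t ht
    exact (hcontz _ (hmemball t ht)).integrableOn_Ioc
  have hsmall : ∀ᶠ (t : ℝ) in nhdsWithin (0:ℝ) {(0:ℝ)}ᶜ, |t| < δ/4 := by
    apply Filter.Eventually.filter_mono nhdsWithin_le_nhds
    have := Metric.ball_mem_nhds (0:ℝ) (by positivity : (0:ℝ) < δ/4)
    filter_upwards [this] with t ht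
    simpa [Real.dist_eq] using ht
  have hevne : ∀ᶠ (t : ℝ) in nhdsWithin (0:ℝ) {(0:ℝ)}ᶜ, t ≠ 0 := by
    filter_upwards [self_mem_nhdsWithin] with t ht
    simpa using ht
  rw [hasDerivAt_iff_tendsto_slope]
  have hLset : ∫ φ in (0:ℝ)..(2*π),
      (-Real.cos (φ - σ) - Real.sin (φ - σ) * deriv (rayDist2 U z₀) φ / rayDist2 U z₀ φ)
      = ∫ φ in Set.Ioc (0:ℝ) (2*π),
      (-Real.cos (φ - σ) - Real.sin (φ - σ) * deriv (rayDist2 U z₀) φ / rayDist2 U z₀ φ) :=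
    intervalIntegral.integral_of_le h2π
  rw [hLset]
  have hdct := tendsto_integral_filter_of_dominated_convergence
    (μ := volume.restrict (Set.Ioc (0:ℝ) (2*π)))
    (l := nhdsWithin (0:ℝ) {(0:ℝ)}ᶜ)
    (F := fun t φ => (rayDist2 U (z₀ + (t:ℂ) * edir σ) φ - rayDist2 U z₀ φ)/t)
    (f := fun φ => -Real.cos (φ - σ) - Real.sin (φ - σ) * deriv (rayDist2 U z₀) φ / rayDist2 U z₀ φ)
    (bound := fun _ => 8*M/δ)
    (by -- measurability
      filter_upwards [hsmall] with t ht
      have hc : Continuous (fun φ => (rayDist2 U (z₀ + (t:ℂ) * edir σ) φ - rayDist2 U z₀ φ)/t) := by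
        exact ((hcontz _ (hmemball t ht)).sub
          (hcontz z₀ (Metric.mem_ball_self (by positivity)))).div_const t
      exact hc.aestronglyMeasurable)
    (by -- bound
      filter_upwards [hsmall, hevne] with t ht htne
      apply Filter.Eventually.of_forall
      intro φ
      have htpos : 0 < |t| := abs_pos.mpr htne
      rw [Real.norm_eq_abs, abs_div, div_le_iff₀ htpos]
      exact hqbound t ht φ)
    (by -- integrable bound
      rw [show (Integrable (fun _ : ℝ => 8*M/δ) (volume.restrict (Set.Ioc (0:ℝ) (2*π)))) =
        (IntegrableOn (fun _ : ℝ => 8*M/δ) (Set.Ioc (0:ℝ) (2*π)) volume) from rfl]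
      rw [integrableOn_const_iff]
      right
      rw [Real.volume_Ioc]
      exact ENNReal.ofReal_lt_top)
    (by -- pointwise convergence
      apply Filter.Eventually.of_forall
      intro φ
      have hpt := hasDerivAt_rayDist_dir hU_open hU_conv hU_bdd hz₀ σ φ (hdiff φ)
      have := hasDerivAt_iff_tendsto_slope.mp hpt
      apply this.congr
      intro t
      rw [slope_def_field, sub_zero, hG00])
  apply hdct.congr'
  filter_upwards [hsmall, hevne] with t ht htne
  have h0small : |(0:ℝ)| < δ/4 := by simpa using (by positivity : (0:ℝ) < δ/4)
  have hsub_int : ∫ φ in Set.Ioc (0:ℝ) (2*π),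
      (rayDist2 U (z₀ + (t:ℂ) * edir σ) φ - rayDist2 U z₀ φ)/t
      = ((∫ φ in Set.Ioc (0:ℝ) (2*π), rayDist2 U (z₀ + (t:ℂ) * edir σ) φ)
        - (∫ φ in Set.Ioc (0:ℝ) (2*π), rayDist2 U z₀ φ))/t := by
    rw [← integral_sub (hG_int t ht) (by
      have := hG_int 0 h0small
      apply this.congr_fun ?_ measurableSet_Ioc
      intro φ _
      exact hG00 φ)]
    rw [← integral_div]
  rw [hsub_int, slope_def_field, sub_zero]
  congr 1
  · congr 1
    · rw [intervalIntegral.integral_of_le h2π]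
    · rw [intervalIntegral.integral_of_le h2π]
      apply MeasureTheory.setIntegral_congr_fun measurableSet_Ioc
      intro φ _
      exact (hG00 φ).symm

end assemble

set_option maxHeartbeats 1000000 in
/-- Explicit formula for the directional derivative of the average distance to the
boundary, in two equivalent forms. -/
theorem dirDeriv_I1_formula (U : Set ℂ) (hU_open : IsOpen U) (hU_conv : Convex ℝ U)
    (hU_bdd : Bornology.IsBounded U) (hU_ne : U.Nonempty) (z₀ : ℂ) (hz₀ : z₀ ∈ U)
    (hdiff : ∀ φ : ℝ, DifferentiableAt ℝ (rayDist2 U z₀) φ) (σ : ℝ) :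
    dirDeriv2 (Imom2 U 1) σ z₀
        = -(1 / (2 * π)) * ∫ φ in (0:ℝ)..(2 * π),
            sin (φ - σ) * deriv (rayDist2 U z₀) φ / rayDist2 U z₀ φ ∧
      -(1 / (2 * π)) * (∫ φ in (0:ℝ)..(2 * π),
            sin (φ - σ) * deriv (rayDist2 U z₀) φ / rayDist2 U z₀ φ)
        = (1 / (2 * π)) * ∫ φ in (0:ℝ)..(2 * π), cos (φ - σ) * Real.log (rayDist2 U z₀ φ) := by
  obtain ⟨δ, hδpos, hball⟩ := Metric.isOpen_iff.mp hU_open z₀ hz₀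
  obtain ⟨M₀, hM₀⟩ := hU_bdd.subset_ball z₀
  have hMpos : 0 < max M₀ δ := lt_of_lt_of_le hδpos (le_max_right _ _)
  have hsub : U ⊆ Metric.ball z₀ (max M₀ δ) :=
    hM₀.trans (Metric.ball_subset_ball (le_max_left _ _))
  set M := max M₀ δ with hM
  have h2π : (0:ℝ) ≤ 2*π := by positivity
  have hrpos : ∀ φ, 0 < rayDist2 U z₀ φ := rayDist_pos' hU_open hU_conv hU_bdd hz₀
  have hrlb : ∀ φ, δ/2 < rayDist2 U z₀ φ := fun φ =>
    rayDist_pos hδpos hball hU_open hU_conv hU_bdd φ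
  have hrcont : Continuous (rayDist2 U z₀) :=
    continuous_iff_continuousAt.mpr fun φ => (hdiff φ).continuousAt
  have hz₀ball : z₀ ∈ Metric.ball z₀ (δ/4) := Metric.mem_ball_self (by positivity)
  have hlipr : ∀ φ y : ℝ, |rayDist2 U z₀ y - rayDist2 U z₀ φ| ≤ (16*M^2/δ) * |y - φ| := by
    intro φ y
    have h1 := rayDist_lip hU_open hU_conv hU_bdd hδpos hMpos hball hsub hz₀ball hz₀ball φ y
    have h2 := rayDist_lip hU_open hU_conv hU_bdd hδpos hMpos hball hsub hz₀ball hz₀ball y φ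
    simp only [sub_self, norm_zero, zero_add] at h1 h2
    have hc1 : (8*M/δ) * (2*M*|y - φ|) = (16*M^2/δ) * |y - φ| := by ring
    have hc2 : (8*M/δ) * (2*M*|φ - y|) = (16*M^2/δ) * |y - φ| := by
      rw [abs_sub_comm φ y]; ring
    rw [abs_sub_le_iff]
    constructor <;> nlinarith [h1, h2]
  have hderivK : ∀ φ, |deriv (rayDist2 U z₀) φ| ≤ 16*M^2/δ := fun φ =>
    abs_deriv_le_of_lip (hdiff φ) (fun y => hlipr φ y)
  have hmeasd : Measurable (deriv (rayDist2 U z₀)) := measurable_deriv _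
  have hsin_cont : Continuous (fun φ : ℝ => Real.sin (φ - σ)) :=
    Real.continuous_sin.comp (continuous_id.sub continuous_const)
  have hcos_cont : Continuous (fun φ : ℝ => Real.cos (φ - σ)) :=
    Real.continuous_cos.comp (continuous_id.sub continuous_const)
  have h2int : IntervalIntegrable
      (fun φ => Real.sin (φ - σ) * deriv (rayDist2 U z₀) φ / rayDist2 U z₀ φ) volume 0 (2*π) := by
    rw [intervalIntegrable_iff_integrableOn_Ioc_of_le h2π]
    apply Integrable.mono' (g := fun _ => (16*M^2/δ) / (δ/2))
    · exact ((integrableOn_const_iff).mpr (Or.inr (by rw [Real.volume_Ioc]; exact ENNReal.ofReal_lt_top)))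
    · exact ((hsin_cont.measurable.mul hmeasd).div hrcont.measurable).aestronglyMeasurable
    · apply Filter.Eventually.of_forall
      intro φ
      rw [Real.norm_eq_abs, abs_div, abs_mul]
      have h1 : |Real.sin (φ - σ)| ≤ 1 := abs_le.mpr ⟨Real.neg_one_le_sin _, Real.sin_le_one _⟩
      have h2 := hderivK φ
      have h3 : δ/2 ≤ |rayDist2 U z₀ φ| := by
        rw [abs_of_pos (hrpos φ)]; linarith [hrlb φ]
      apply div_le_div₀ (by positivity) ?_ (by positivity) h3
      calc |Real.sin (φ - σ)| * |deriv (rayDist2 U z₀) φ| ≤ 1 * (16*M^2/δ) :=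
            mul_le_mul h1 h2 (abs_nonneg _) zero_le_one
        _ = 16*M^2/δ := one_mul _
  have hcoslog_cont : Continuous (fun φ => Real.cos (φ - σ) * Real.log (rayDist2 U z₀ φ)) :=
    hcos_cont.mul (hrcont.log (fun φ => (hrpos φ).ne'))
  have hF := hasDerivAt_integral_ray hU_open hU_conv hU_bdd hz₀ hdiff σ hδpos hMpos hball hsub
  have hcoszero : ∫ φ in (0:ℝ)..(2*π), -Real.cos (φ - σ) = 0 := by
    rw [intervalIntegral.integral_neg]
    rw [intervalIntegral.integral_comp_sub_right (fun x => Real.cos x) σ]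
    rw [integral_cos, zero_sub, Real.sin_two_pi_sub, Real.sin_neg]
    ring
  have hcos_int : IntervalIntegrable (fun φ : ℝ => -Real.cos (φ - σ)) volume 0 (2*π) :=
    hcos_cont.neg.intervalIntegrable 0 (2*π)
  have hsplit : (∫ φ in (0:ℝ)..(2*π),
        (-Real.cos (φ - σ) - Real.sin (φ - σ) * deriv (rayDist2 U z₀) φ / rayDist2 U z₀ φ))
      = (∫ φ in (0:ℝ)..(2*π), -Real.cos (φ - σ))
        - ∫ φ in (0:ℝ)..(2*π), Real.sin (φ - σ) * deriv (rayDist2 U z₀) φ / rayDist2 U z₀ φ :=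
    intervalIntegral.integral_sub hcos_int h2int
  have hconj1 : dirDeriv2 (Imom2 U 1) σ z₀
      = -(1 / (2 * π)) * ∫ φ in (0:ℝ)..(2 * π),
          Real.sin (φ - σ) * deriv (rayDist2 U z₀) φ / rayDist2 U z₀ φ := by
    unfold dirDeriv2
    have hfun : (fun t : ℝ => Imom2 U 1 (z₀ + (t:ℂ) * Complex.exp ((σ:ℂ) * Complex.I)))
        = fun t : ℝ => (1/(2*π)) * ∫ φ in (0:ℝ)..(2*π), rayDist2 U (z₀ + (t:ℂ) * edir σ) φ := by
      funext t
      unfold Imom2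
      congr 1
      apply intervalIntegral.integral_congr
      intro x _
      simp only [pow_one]
      rfl
    rw [hfun]
    rw [(hF.const_mul (1/(2*π))).deriv]
    rw [hsplit, hcoszero]
    ring
  refine ⟨hconj1, ?_⟩
  have hfd : ∀ x : ℝ, HasDerivAt (fun φ => Real.sin (φ - σ) * Real.log (rayDist2 U z₀ φ))
      (Real.cos (x - σ) * Real.log (rayDist2 U z₀ x)
        + Real.sin (x - σ) * deriv (rayDist2 U z₀) x / rayDist2 U z₀ x) x := by
    intro x
    have h1 : HasDerivAt (fun φ : ℝ => Real.sin (φ - σ)) (Real.cos (x - σ)) x := by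
      have := (Real.hasDerivAt_sin (x - σ)).comp x ((hasDerivAt_id x).sub_const σ)
      exact this.congr_deriv (by simp)
    have h2 : HasDerivAt (fun φ => Real.log (rayDist2 U z₀ φ))
        (deriv (rayDist2 U z₀) x / rayDist2 U z₀ x) x :=
      (hdiff x).hasDerivAt.log (hrpos x).ne'
    have := h1.mul h2
    exact this.congr_deriv (by ring)
  have hfint : IntervalIntegrable (fun x => Real.cos (x - σ) * Real.log (rayDist2 U z₀ x)
      + Real.sin (x - σ) * deriv (rayDist2 U z₀) x / rayDist2 U z₀ x) volume 0 (2*π) :=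
    (hcoslog_cont.intervalIntegrable _ _).add h2int
  have hFTC := intervalIntegral.integral_eq_sub_of_hasDerivAt
    (f := fun φ => Real.sin (φ - σ) * Real.log (rayDist2 U z₀ φ)) (fun x _ => hfd x) hfint
  have hper : rayDist2 U z₀ (2*π) = rayDist2 U z₀ 0 := by
    unfold rayDist2
    have hexp : Complex.exp (((2*π:ℝ):ℂ) * Complex.I) = Complex.exp (((0:ℝ):ℂ) * Complex.I) := by
      push_cast
      rw [Complex.exp_two_pi_mul_I]
      simp
    rw [hexp]
  have hbound : Real.sin (2*π - σ) * Real.log (rayDist2 U z₀ (2*π))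
      - Real.sin (0 - σ) * Real.log (rayDist2 U z₀ 0) = 0 := by
    rw [hper, Real.sin_two_pi_sub, zero_sub, Real.sin_neg]
    ring
  have hadd : (∫ x in (0:ℝ)..(2*π), (Real.cos (x - σ) * Real.log (rayDist2 U z₀ x)
      + Real.sin (x - σ) * deriv (rayDist2 U z₀) x / rayDist2 U z₀ x))
      = (∫ x in (0:ℝ)..(2*π), Real.cos (x - σ) * Real.log (rayDist2 U z₀ x))
        + ∫ x in (0:ℝ)..(2*π), Real.sin (x - σ) * deriv (rayDist2 U z₀) x / rayDist2 U z₀ x :=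
    intervalIntegral.integral_add (hcoslog_cont.intervalIntegrable _ _) h2int
  have hzero : (∫ x in (0:ℝ)..(2*π), Real.cos (x - σ) * Real.log (rayDist2 U z₀ x))
      + (∫ x in (0:ℝ)..(2*π), Real.sin (x - σ) * deriv (rayDist2 U z₀) x / rayDist2 U z₀ x) = 0 := by
    rw [← hadd, hFTC]
    exact hbound
  have heq : (∫ x in (0:ℝ)..(2*π), Real.sin (x - σ) * deriv (rayDist2 U z₀) x / rayDist2 U z₀ x)
      = -(∫ x in (0:ℝ)..(2*π), Real.cos (x - σ) * Real.log (rayDist2 U z₀ x)) := by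
    linarith
  rw [heq]
  ring
end

section
/- Let U be a bounded convex domain in R² and suppose z₀ ∈ U satisfies d_U(z₀,φ) = d_U(z₀,φ+π) for all φ ∈ [0,2π). Then D_σ v_U(z₀) = 0 for every direction σ, and z₀ is the variocentre of U, i.e., the unique minimum of the strictly convex function v_U. -/
open MeasureTheory Real

section Ray

variable {U : Set ℂ} (hU_open : IsOpen U) (hU_conv : Convex ℝ U)
  (hU_bdd : Bornology.IsBounded U)

lemma norm_exp_mul_I (φ : ℝ) : ‖Complex.exp ((φ : ℂ) * Complex.I)‖ = 1 := by
  simpa using Complex.abs_exp_ofReal_mul_I φ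

include hU_bdd in
lemma raySet_bddAbove (x : ℂ) (φ : ℝ) :
    BddAbove {t : ℝ | 0 ≤ t ∧ x + (t : ℂ) * Complex.exp (φ * Complex.I) ∈ U} := by
  obtain ⟨R, hR⟩ := (Metric.isBounded_iff_subset_ball 0).1 hU_bdd
  refine ⟨R + ‖x‖, fun t ht => ?_⟩
  obtain ⟨ht0, htU⟩ := ht
  have := hR htU
  rw [Metric.mem_ball, dist_zero_right] at this
  have h1 : ‖(t : ℂ) * Complex.exp (φ * Complex.I)‖ = t := by
    rw [norm_mul, norm_exp_mul_I, mul_one, Complex.norm_real, Real.norm_eq_abs, abs_of_nonneg ht0]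
  calc t = ‖x + (t : ℂ) * Complex.exp (φ * Complex.I) - x‖ := by rw [add_sub_cancel_left, h1]
    _ ≤ ‖x + (t : ℂ) * Complex.exp (φ * Complex.I)‖ + ‖x‖ := norm_sub_le _ _
    _ ≤ R + ‖x‖ := by linarith

variable {x : ℂ} (hx : x ∈ U)

include hx in
lemma raySet_zero_mem (φ : ℝ) :
    (0:ℝ) ∈ {t : ℝ | 0 ≤ t ∧ x + (t : ℂ) * Complex.exp (φ * Complex.I) ∈ U} := by
  simp [hx]

include hU_bdd hx in
lemma rayDist2_nonneg (φ : ℝ) : 0 ≤ rayDist2 U x φ :=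
  le_csSup (raySet_bddAbove hU_bdd x φ) (raySet_zero_mem hx φ)

include hU_open hU_bdd hx in
lemma rayDist2_not_memU (φ : ℝ) :
    x + (rayDist2 U x φ : ℂ) * Complex.exp (φ * Complex.I) ∉ U := by
  intro hmem
  set d := rayDist2 U x φ with hd
  obtain ⟨ε, hε, hball⟩ := Metric.isOpen_iff.1 hU_open _ hmem
  have hd0 : 0 ≤ d := rayDist2_nonneg hU_bdd hx φ
  have hmem2 : (d + ε/2) ∈ {t : ℝ | 0 ≤ t ∧ x + (t : ℂ) * Complex.exp (φ * Complex.I) ∈ U} := by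
    refine ⟨by linarith, hball ?_⟩
    rw [Metric.mem_ball]
    have : x + ((d + ε/2 : ℝ) : ℂ) * Complex.exp (φ * Complex.I)
        - (x + (d : ℂ) * Complex.exp (φ * Complex.I))
        = ((ε/2 : ℝ) : ℂ) * Complex.exp (φ * Complex.I) := by push_cast; ring
    rw [dist_eq_norm, this, norm_mul, norm_exp_mul_I, mul_one, Complex.norm_real,
      Real.norm_eq_abs, abs_of_nonneg (by linarith)]
    linarith
  have h3 : d + ε / 2 ≤ d := le_csSup (raySet_bddAbove hU_bdd x φ) hmem2
  linarith

include hU_conv hx in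
lemma raySet_downward (φ : ℝ) {s t : ℝ} (hs0 : 0 ≤ s) (hst : s ≤ t)
    (ht : x + (t : ℂ) * Complex.exp (φ * Complex.I) ∈ U) :
    x + (s : ℂ) * Complex.exp (φ * Complex.I) ∈ U := by
  rcases eq_or_lt_of_le (hs0.trans hst) with h | htpos
  · have hs : s = 0 := le_antisymm (hst.trans h.symm.le) hs0
    simpa [hs] using hx
  · have key := hU_conv hx ht (a := 1 - s/t) (b := s/t)
      (by have : s/t ≤ 1 := (div_le_one htpos).2 hst; linarith)
      (div_nonneg hs0 htpos.le) (by ring)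
    have : (1 - s/t) • x + (s/t) • (x + (t : ℂ) * Complex.exp (φ * Complex.I))
        = x + (s : ℂ) * Complex.exp (φ * Complex.I) := by
      rw [Complex.real_smul, Complex.real_smul]
      push_cast
      have htne : (t:ℂ) ≠ 0 := by exact_mod_cast htpos.ne'
      field_simp
      ring
    rwa [this] at key

include hU_open hU_conv hU_bdd hx in
lemma mem_iff_lt_rayDist_s9 (φ : ℝ) {t : ℝ} (ht : 0 ≤ t) :
    x + (t : ℂ) * Complex.exp (φ * Complex.I) ∈ U ↔ t < rayDist2 U x φ := by
  constructor
  · intro hmem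
    have hle := le_csSup (raySet_bddAbove hU_bdd x φ) (Set.mem_setOf.2 ⟨ht, hmem⟩)
    rcases eq_or_lt_of_le hle with h | h
    · have h' : t = rayDist2 U x φ := h
      exact absurd (h' ▸ hmem) (rayDist2_not_memU hU_open hU_bdd hx φ)
    · exact h
  · intro hlt
    obtain ⟨s, hsmem, hs⟩ := exists_lt_of_lt_csSup ⟨0, raySet_zero_mem hx φ⟩ hlt
    exact raySet_downward hU_conv hx φ ht hs.le hsmem.2

include hU_open hU_bdd hx in
lemma rayDist2_pos (φ : ℝ) : 0 < rayDist2 U x φ := by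
  rcases eq_or_lt_of_le (rayDist2_nonneg hU_bdd hx φ) with h | h
  · exact absurd (by simpa using h ▸ rayDist2_not_memU hU_open hU_bdd hx φ) (by simp [hx])
  · exact h

end Ray
section Sym

variable {U : Set ℂ} (hU_open : IsOpen U) (hU_conv : Convex ℝ U)
  (hU_bdd : Bornology.IsBounded U) {z₀ : ℂ} (hz₀ : z₀ ∈ U)

lemma rayDist2_periodic (U : Set ℂ) (x : ℂ) : Function.Periodic (rayDist2 U x) (2*π) := by
  intro φ
  unfold rayDist2
  congr 2
  ext t
  have h : Complex.exp (↑(φ + 2*π) * Complex.I) = Complex.exp (↑φ * Complex.I) := by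
    push_cast
    rw [add_mul, Complex.exp_add, Complex.exp_two_pi_mul_I, mul_one]
  rw [h]

include hU_open hU_conv hU_bdd hz₀ in
lemma hsym_ext (hsym : ∀ φ ∈ Set.Ico (0:ℝ) (2 * π), rayDist2 U z₀ φ = rayDist2 U z₀ (φ + π)) :
    ∀ φ : ℝ, rayDist2 U z₀ φ = rayDist2 U z₀ (φ + π) := by
  intro φ
  have h2π : (0:ℝ) < 2*π := by positivity
  set ψ := toIcoMod h2π 0 φ with hψdef
  have hmem : ψ ∈ Set.Ico (0:ℝ) (2*π) := toIcoMod_mem_Ico' h2π φ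
  have hsub : ψ = φ - toIcoDiv h2π 0 φ • (2*π) := rfl
  have hper := rayDist2_periodic U z₀
  have h1 : rayDist2 U z₀ φ = rayDist2 U z₀ ψ := by
    rw [hsub, hper.sub_zsmul_eq]
  have h2 : rayDist2 U z₀ (φ + π) = rayDist2 U z₀ (ψ + π) := by
    have : ψ + π = (φ + π) - toIcoDiv h2π 0 φ • (2*π) := by rw [hsub]; ring
    rw [this, hper.sub_zsmul_eq]
  rw [h1, h2, hsym ψ hmem]

lemma exp_add_pi (φ : ℝ) :
    Complex.exp (↑(φ + π) * Complex.I) = -Complex.exp (↑φ * Complex.I) := by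
  push_cast
  rw [add_mul, Complex.exp_add, Complex.exp_pi_mul_I, mul_neg_one]

include hU_open hU_conv hU_bdd hz₀ in
lemma symmU (hsym' : ∀ φ : ℝ, rayDist2 U z₀ φ = rayDist2 U z₀ (φ + π)) :
    ∀ x ∈ U, 2*z₀ - x ∈ U := by
  intro x hxU
  rcases eq_or_ne x z₀ with rfl | hne
  · simpa [two_mul] using hxU
  · have hxz : x - z₀ ≠ 0 := sub_ne_zero.2 hne
    set ρ := ‖x - z₀‖ with hρdef
    set θ := Complex.arg (x - z₀) with hθdef
    have hrep : (ρ:ℂ) * Complex.exp ((θ:ℂ) * Complex.I) = x - z₀ :=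
      Complex.norm_mul_exp_arg_mul_I _
    have hρ0 : 0 ≤ ρ := norm_nonneg _
    have hxrep : x = z₀ + (ρ:ℂ) * Complex.exp ((θ:ℂ) * Complex.I) := by
      rw [hrep]; ring
    have hlt : ρ < rayDist2 U z₀ θ := by
      rw [← mem_iff_lt_rayDist_s9 hU_open hU_conv hU_bdd hz₀ θ hρ0, ← hxrep]
      exact hxU
    rw [hsym' θ] at hlt
    have hmem : z₀ + (ρ:ℂ) * Complex.exp (↑(θ + π) * Complex.I) ∈ U :=
      (mem_iff_lt_rayDist_s9 hU_open hU_conv hU_bdd hz₀ (θ+π) hρ0).2 hlt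
    rw [exp_add_pi] at hmem
    have : 2*z₀ - x = z₀ + (ρ:ℂ) * -Complex.exp ((θ:ℂ) * Complex.I) := by
      rw [hxrep]; ring
    rwa [this]

lemma rayDist2_reflect {z₀ : ℂ} (hsymU : ∀ y ∈ U, 2*z₀ - y ∈ U) (x : ℂ) (φ : ℝ) :
    rayDist2 U (2*z₀ - x) φ = rayDist2 U x (φ + π) := by
  have hsymU' : ∀ y : ℂ, y ∈ U ↔ 2*z₀ - y ∈ U := by
    intro y
    refine ⟨hsymU y, fun h => ?_⟩
    have := hsymU _ h
    simpa using this
  unfold rayDist2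
  congr 2
  ext t
  simp only [Set.mem_setOf_eq, and_congr_right_iff]
  intro ht
  rw [exp_add_pi, hsymU' (x + (t:ℂ) * -Complex.exp ((φ:ℂ) * Complex.I))]
  have heq : 2*z₀ - (x + (t:ℂ) * -Complex.exp ((φ:ℂ) * Complex.I))
      = 2*z₀ - x + (t:ℂ) * Complex.exp ((φ:ℂ) * Complex.I) := by ring
  rw [heq]

include hU_open hU_conv hU_bdd hz₀ in
lemma rayDist2_ray {ρ : ℝ} (hρ : 0 ≤ ρ) (θ : ℝ)
    (hxU : z₀ + (ρ:ℂ) * Complex.exp ((θ:ℂ) * Complex.I) ∈ U) :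
    rayDist2 U (z₀ + (ρ:ℂ) * Complex.exp ((θ:ℂ) * Complex.I)) θ = rayDist2 U z₀ θ - ρ := by
  have hρd : ρ < rayDist2 U z₀ θ := (mem_iff_lt_rayDist_s9 hU_open hU_conv hU_bdd hz₀ θ hρ).1 hxU
  unfold rayDist2
  have hset : {t : ℝ | 0 ≤ t ∧ z₀ + (ρ:ℂ) * Complex.exp ((θ:ℂ) * Complex.I)
      + (t:ℂ) * Complex.exp ((θ:ℂ) * Complex.I) ∈ U}
      = Set.Ico 0 (rayDist2 U z₀ θ - ρ) := by
    ext t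
    simp only [Set.mem_setOf_eq, Set.mem_Ico]
    constructor
    · rintro ⟨ht0, htU⟩
      refine ⟨ht0, ?_⟩
      have heq : z₀ + (ρ:ℂ) * Complex.exp ((θ:ℂ) * Complex.I)
          + (t:ℂ) * Complex.exp ((θ:ℂ) * Complex.I)
          = z₀ + ((t + ρ : ℝ):ℂ) * Complex.exp ((θ:ℂ) * Complex.I) := by push_cast; ring
      rw [heq] at htU
      have := (mem_iff_lt_rayDist_s9 hU_open hU_conv hU_bdd hz₀ θ (by linarith)).1 htU
      linarith
    · rintro ⟨ht0, htlt⟩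
      refine ⟨ht0, ?_⟩
      have heq : z₀ + (ρ:ℂ) * Complex.exp ((θ:ℂ) * Complex.I)
          + (t:ℂ) * Complex.exp ((θ:ℂ) * Complex.I)
          = z₀ + ((t + ρ : ℝ):ℂ) * Complex.exp ((θ:ℂ) * Complex.I) := by push_cast; ring
      rw [heq]
      exact (mem_iff_lt_rayDist_s9 hU_open hU_conv hU_bdd hz₀ θ (by linarith)).2 (by linarith)
  rw [hset, csSup_Ico (by linarith)]
  rfl

end Sym
section Lip

variable {U : Set ℂ} (hU_open : IsOpen U) (hU_conv : Convex ℝ U)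
  (hU_bdd : Bornology.IsBounded U) {x : ℂ} (hx : x ∈ U)

include hU_bdd hx in
lemma rayDist2_le_bound {R : ℝ} (hR : U ⊆ Metric.ball 0 R) (φ : ℝ) :
    rayDist2 U x φ ≤ R + ‖x‖ := by
  apply csSup_le ⟨0, raySet_zero_mem hx φ⟩
  rintro t ⟨ht0, htU⟩
  have hb := hR htU
  rw [Metric.mem_ball, dist_zero_right] at hb
  have h1 : ‖(t : ℂ) * Complex.exp ((φ:ℂ) * Complex.I)‖ = t := by
    rw [norm_mul, norm_exp_mul_I, mul_one, Complex.norm_real, Real.norm_eq_abs, abs_of_nonneg ht0]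
  calc t = ‖x + (t : ℂ) * Complex.exp ((φ:ℂ) * Complex.I) - x‖ := by rw [add_sub_cancel_left, h1]
    _ ≤ ‖x + (t : ℂ) * Complex.exp ((φ:ℂ) * Complex.I)‖ + ‖x‖ := norm_sub_le _ _
    _ ≤ R + ‖x‖ := by linarith

include hU_open hU_conv hU_bdd hx in
lemma rayDist2_lip {r M : ℝ} (hr : 0 < r) (hball : Metric.ball x r ⊆ U)
    (hM : ∀ ψ : ℝ, rayDist2 U x ψ ≤ M) (hrM : r ≤ M) (φ φ' : ℝ) :
    rayDist2 U x φ' ≤ rayDist2 U x φ + (M^2/r) * |φ - φ'| := by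
  rcases eq_or_ne φ φ' with rfl | hne
  · simp
  set C := M^2/r with hC
  set γ := φ - φ' with hγ
  have hγne : γ ≠ 0 := sub_ne_zero.2 hne
  have hγpos : 0 < |γ| := abs_pos.2 hγne
  have hM0 : 0 < M := lt_of_lt_of_le hr hrM
  have hC0 : 0 < C := by positivity
  have hCr : C * r = M^2 := by rw [hC]; field_simp
  have hd0 : 0 ≤ rayDist2 U x φ := rayDist2_nonneg hU_bdd hx φ
  apply csSup_le ⟨0, raySet_zero_mem hx φ'⟩
  rintro t' ⟨ht'0, ht'U⟩
  have ht'd : t' < rayDist2 U x φ' :=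
    (mem_iff_lt_rayDist_s9 hU_open hU_conv hU_bdd hx φ' ht'0).1 ht'U
  have ht'M : t' < M := lt_of_lt_of_le ht'd (hM φ')
  set t := t' - C * |γ| with htdef
  rcases le_or_gt t 0 with ht0 | htpos
  · linarith [abs_nonneg γ]
  have hCγt' : C * |γ| < t' := by linarith
  have ht'pos : 0 < t' := lt_trans (mul_pos hC0 hγpos) hCγt'
  have htt' : t < t' := by
    have := mul_pos hC0 hγpos
    linarith
  have hγsmall : |γ| < r / M := by
    have h1 : C * |γ| < M := lt_trans hCγt' ht'M
    rw [lt_div_iff₀ hM0]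
    have h2 : C * |γ| * r < M * r := by nlinarith
    rw [hC] at h2
    have h3 : M^2/r * |γ| * r = M * (|γ| * M) := by field_simp
    rw [h3] at h2
    exact lt_of_mul_lt_mul_left h2 hM0.le
  have hγlt1 : |γ| < 1 := lt_of_lt_of_le hγsmall ((div_le_one hM0).2 hrM)
  have hγhalfpi : |γ| < π/2 := lt_of_lt_of_le hγlt1 (by linarith [Real.pi_gt_three])
  have hcos : 0 < Real.cos γ := by
    apply Real.cos_pos_of_mem_Ioo
    obtain ⟨h1, h2⟩ := abs_lt.1 hγhalfpi
    exact ⟨by linarith, h2⟩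
  have hcos1 : Real.cos γ ≤ 1 := Real.cos_le_one γ
  set μ := t * Real.cos γ / t' with hμdef
  have hμ0 : 0 ≤ μ := by positivity
  have hμ1 : μ < 1 := by
    rw [hμdef, div_lt_one ht'pos]
    have := mul_le_mul_of_nonneg_left hcos1 htpos.le
    linarith
  have h1μ : 0 < 1 - μ := by linarith
  set q : ℂ := x + ((t * Real.sin γ / (1-μ) : ℝ) : ℂ) *
      (Complex.I * Complex.exp ((φ':ℂ) * Complex.I)) with hqdef
  have hsinγ : |Real.sin γ| ≤ |γ| := Real.abs_sin_le_abs
  have hqball : q ∈ Metric.ball x r := by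
    rw [Metric.mem_ball, dist_eq_norm]
    have hqx : q - x = ((t * Real.sin γ / (1-μ) : ℝ) : ℂ) *
        (Complex.I * Complex.exp ((φ':ℂ) * Complex.I)) := by rw [hqdef]; ring
    rw [hqx, norm_mul, norm_mul, Complex.norm_I, one_mul, norm_exp_mul_I, mul_one,
      Complex.norm_real, Real.norm_eq_abs, abs_div, abs_of_pos h1μ, div_lt_iff₀ h1μ]
    have hkey : C * |γ| ≤ t' - t * Real.cos γ := by
      have := mul_le_mul_of_nonneg_left hcos1 htpos.le
      linarith
    have h1μeq : 1 - μ = (t' - t * Real.cos γ) / t' := by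
      rw [hμdef]; field_simp
    rw [h1μeq, abs_mul, abs_of_pos htpos, ← mul_div_assoc, lt_div_iff₀ ht'pos]
    calc t * |Real.sin γ| * t' ≤ t * |γ| * t' :=
          mul_le_mul_of_nonneg_right (mul_le_mul_of_nonneg_left hsinγ htpos.le) ht'pos.le
      _ = |γ| * (t * t') := by ring
      _ < |γ| * (M * M) := by
          have h4 : t * t' < M * M := mul_lt_mul'' (htt'.trans ht'M) ht'M htpos.le ht'0
          exact mul_lt_mul_of_pos_left h4 hγpos
      _ = M * |γ| * M := by ring
      _ = r * (C * |γ|) := by rw [hC]; field_simp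
      _ ≤ r * (t' - t * Real.cos γ) := mul_le_mul_of_nonneg_left hkey hr.le
  have hexp : Complex.exp ((φ:ℂ) * Complex.I)
      = Complex.exp ((φ':ℂ) * Complex.I) * ((Real.cos γ : ℂ) + (Real.sin γ : ℂ) * Complex.I) := by
    rw [Complex.ofReal_cos, Complex.ofReal_sin, ← Complex.exp_mul_I, ← Complex.exp_add]
    congr 1
    rw [hγ]
    push_cast
    ring
  have hμt' : (μ:ℝ) * t' = t * Real.cos γ := by
    rw [hμdef]; field_simp
  have e1 : (1-μ) * (t * Real.sin γ / (1-μ)) = t * Real.sin γ := by field_simp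
  have e1C := congrArg (Complex.ofReal) e1
  have e2C := congrArg (Complex.ofReal) hμt'
  push_cast at e1C e2C
  have hcomb : x + (t:ℂ) * Complex.exp ((φ:ℂ) * Complex.I)
      = (1-μ) • q + μ • (x + (t':ℂ) * Complex.exp ((φ':ℂ) * Complex.I)) := by
    rw [hqdef, Complex.real_smul, Complex.real_smul, hexp]
    push_cast
    linear_combination (-(Complex.I * Complex.exp ((φ':ℂ) * Complex.I))) * e1C
      - Complex.exp ((φ':ℂ) * Complex.I) * e2C
  have hmemU : x + (t:ℂ) * Complex.exp ((φ:ℂ) * Complex.I) ∈ U := by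
    rw [hcomb]
    exact hU_conv (hball hqball) ht'U (by linarith) hμ0 (by ring)
  have htd : t < rayDist2 U x φ :=
    (mem_iff_lt_rayDist_s9 hU_open hU_conv hU_bdd hx φ htpos.le).1 hmemU
  linarith [htd]

include hU_open hU_conv hU_bdd hx in
lemma rayDist2_cont : Continuous (fun φ => rayDist2 U x φ) := by
  obtain ⟨r, hr, hball⟩ := Metric.isOpen_iff.1 hU_open x hx
  obtain ⟨R, hR⟩ := (Metric.isBounded_iff_subset_ball 0).1 hU_bdd
  set M := max (R + ‖x‖) r with hMdef
  have hM : ∀ ψ : ℝ, rayDist2 U x ψ ≤ M :=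
    fun ψ => le_trans (rayDist2_le_bound hU_bdd hx hR ψ) (le_max_left _ _)
  have hrM : r ≤ M := le_max_right _ _
  have hM0 : 0 < M := lt_of_lt_of_le hr hrM
  have hlip : LipschitzWith (Real.toNNReal (M^2/r)) (fun φ => rayDist2 U x φ) := by
    apply LipschitzWith.of_dist_le_mul
    intro φ φ'
    rw [Real.dist_eq, Real.dist_eq, Real.coe_toNNReal _ (by positivity)]
    have h1 := rayDist2_lip hU_open hU_conv hU_bdd hx hr hball hM hrM φ' φ
    have h2 := rayDist2_lip hU_open hU_conv hU_bdd hx hr hball hM hrM φ φ'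
    rw [abs_sub_comm φ' φ] at h1
    rw [abs_sub_le_iff]
    constructor <;> linarith
  exact hlip.continuous

end Lip
section Int

variable {U : Set ℂ} (hU_open : IsOpen U) (hU_conv : Convex ℝ U)
  (hU_bdd : Bornology.IsBounded U)

lemma integral_shift_pi {f : ℝ → ℝ} (hf : Function.Periodic f (2*π)) :
    ∫ φ in (0:ℝ)..(2*π), f (φ + π) = ∫ φ in (0:ℝ)..(2*π), f φ := by
  rw [intervalIntegral.integral_comp_add_right f π]
  have h2 : (2*π+π) = π + 2*π := by ring
  have h0 : (0:ℝ)+π = π := by ring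
  rw [h0, h2, hf.intervalIntegral_add_eq π 0, zero_add]

include hU_open hU_conv hU_bdd in
lemma integral_sq_eq {x : ℂ} (hx : x ∈ U) :
    ∫ φ in (0:ℝ)..(2*π), (rayDist2 U x φ)^2 = 2 * (volume U).toReal := by
  obtain ⟨R, hR⟩ := (Metric.isBounded_iff_subset_ball 0).1 hU_bdd
  set M := R + ‖x‖ with hMdef
  have hM : ∀ ψ : ℝ, rayDist2 U x ψ ≤ M := rayDist2_le_bound hU_bdd hx hR
  have hM0 : 0 < M := lt_of_lt_of_le (rayDist2_pos hU_open hU_bdd hx 0) (hM 0)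
  have hUm : MeasurableSet U := hU_open.measurableSet
  have hsymm : ∀ p : ℝ × ℝ, Complex.polarCoord.symm p
      = (p.1 : ℂ) * Complex.exp ((p.2 : ℂ) * Complex.I) := by
    intro p
    rw [Complex.polarCoord_symm_apply, Complex.exp_mul_I, ← Complex.ofReal_cos,
      ← Complex.ofReal_sin]
  set F : ℝ × ℝ → ℝ := fun p =>
    p.1 * Set.indicator U (fun _ => (1:ℝ)) (x + (p.1 : ℂ) * Complex.exp ((p.2:ℂ) * Complex.I))
    with hFdef
  have h1 : (∫ p in polarCoord.target, F p) = (volume U).toReal := by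
    have hpol := Complex.integral_comp_polarCoord_symm
      (fun w => Set.indicator U (fun _ => (1:ℝ)) (x + w))
    rw [MeasureTheory.integral_add_left_eq_self
      (fun w => Set.indicator U (fun _ => (1:ℝ)) w) x] at hpol
    rw [MeasureTheory.integral_indicator_const (1:ℝ) hUm] at hpol
    simp only [smul_eq_mul, mul_one, hsymm] at hpol
    exact hpol
  have hTm : MeasurableSet (Set.Ioc (0:ℝ) M ×ˢ Set.Ioo (-π) π) :=
    measurableSet_Ioc.prod measurableSet_Ioo
  have hTsub : Set.Ioc (0:ℝ) M ×ˢ Set.Ioo (-π) π ⊆ polarCoord.target := by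
    rw [polarCoord_target]
    exact Set.prod_mono Set.Ioc_subset_Ioi_self subset_rfl
  have hsupp : ∀ p ∈ polarCoord.target \ (Set.Ioc (0:ℝ) M ×ˢ Set.Ioo (-π) π), F p = 0 := by
    rintro ⟨r, θ⟩ ⟨htar, hnot⟩
    rw [polarCoord_target] at htar
    obtain ⟨hr, hθ⟩ := htar
    simp only [Set.mem_Ioi] at hr
    have hrM : M < r := by
      by_contra hcon
      exact hnot ⟨⟨hr, not_lt.1 hcon⟩, hθ⟩
    have hnmem : x + (r:ℂ) * Complex.exp ((θ:ℂ)*Complex.I) ∉ U := by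
      intro hmem
      have := (mem_iff_lt_rayDist_s9 hU_open hU_conv hU_bdd hx θ hr.le).1 hmem
      linarith [hM θ]
    simp only [hFdef, Set.indicator_of_notMem hnmem, mul_zero]
  have h2 : (∫ p in polarCoord.target, F p)
      = ∫ p in Set.Ioc (0:ℝ) M ×ˢ Set.Ioo (-π) π, F p := by
    apply MeasureTheory.setIntegral_eq_of_subset_of_ae_diff_eq_zero
      polarCoord.open_target.measurableSet.nullMeasurableSet hTsub
    filter_upwards with p
    exact hsupp p
  have hg : Continuous (fun p : ℝ × ℝ => x + (p.1:ℂ) * Complex.exp ((p.2:ℂ)*Complex.I)) := by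
    apply continuous_const.add
    exact (Complex.continuous_ofReal.comp continuous_fst).mul
      (Complex.continuous_exp.comp ((Complex.continuous_ofReal.comp continuous_snd).mul
        continuous_const))
  have hFmeas : Measurable F :=
    measurable_fst.mul ((measurable_const.indicator hUm).comp hg.measurable)
  have hTvol : volume (Set.Ioc (0:ℝ) M ×ˢ Set.Ioo (-π) π) < ⊤ := by
    rw [MeasureTheory.Measure.volume_eq_prod, MeasureTheory.Measure.prod_prod]
    exact ENNReal.mul_lt_top measure_Ioc_lt_top measure_Ioo_lt_top
  have hFint : MeasureTheory.IntegrableOn F (Set.Ioc (0:ℝ) M ×ˢ Set.Ioo (-π) π) := by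
    apply MeasureTheory.Integrable.mono' (g := fun _ => M)
      (MeasureTheory.integrableOn_const hTvol.ne enorm_ne_top)
      hFmeas.aestronglyMeasurable.restrict
    rw [MeasureTheory.ae_restrict_iff' hTm]
    filter_upwards with p hp
    obtain ⟨hp1, _⟩ := hp
    obtain ⟨hp10, hp1M⟩ := hp1
    rw [Real.norm_eq_abs]
    show |p.1 * Set.indicator U (fun _ => (1:ℝ))
      (x + (p.1 : ℂ) * Complex.exp ((p.2:ℂ) * Complex.I))| ≤ M
    have hind01 : Set.indicator U (fun _ => (1:ℝ))
        (x + (p.1 : ℂ) * Complex.exp ((p.2:ℂ) * Complex.I)) = 0 ∨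
        Set.indicator U (fun _ => (1:ℝ))
        (x + (p.1 : ℂ) * Complex.exp ((p.2:ℂ) * Complex.I)) = 1 := by
      unfold Set.indicator
      split <;> simp
    rcases hind01 with h | h <;> rw [h]
    · rw [mul_zero, abs_zero]
      linarith
    · rw [mul_one, abs_of_pos hp10]
      exact hp1M
  have h3 : ∫ p in Set.Ioc (0:ℝ) M ×ˢ Set.Ioo (-π) π, F p
      = ∫ θ in Set.Ioo (-π) π, (∫ r in Set.Ioc (0:ℝ) M, F (r, θ)) := by
    rw [MeasureTheory.Measure.volume_eq_prod, ← MeasureTheory.Measure.prod_restrict]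
    apply MeasureTheory.integral_prod_symm
    rw [MeasureTheory.Measure.prod_restrict]
    rw [MeasureTheory.Measure.volume_eq_prod] at hFint
    exact hFint
  have h4 : ∀ θ : ℝ, (∫ r in Set.Ioc (0:ℝ) M, F (r, θ)) = (rayDist2 U x θ)^2/2 := by
    intro θ
    have hd0 : 0 < rayDist2 U x θ := rayDist2_pos hU_open hU_bdd hx θ
    have hdM : rayDist2 U x θ ≤ M := hM θ
    have hcong : ∀ r ∈ Set.Ioc (0:ℝ) M, F (r, θ)
        = Set.indicator (Set.Ioo (0:ℝ) (rayDist2 U x θ)) id r := by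
      intro r hr
      obtain ⟨hr0, hrM⟩ := hr
      rw [hFdef]
      dsimp only
      rcases lt_or_ge r (rayDist2 U x θ) with h | h
      · have hmem := (mem_iff_lt_rayDist_s9 hU_open hU_conv hU_bdd hx θ hr0.le).2 h
        rw [Set.indicator_of_mem hmem, Set.indicator_of_mem (Set.mem_Ioo.2 ⟨hr0, h⟩), mul_one, id_eq]
      · have hnmem : x + (r:ℂ) * Complex.exp ((θ:ℂ)*Complex.I) ∉ U := fun hmem =>
          absurd ((mem_iff_lt_rayDist_s9 hU_open hU_conv hU_bdd hx θ hr0.le).1 hmem) (not_lt.2 h)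
        rw [Set.indicator_of_notMem hnmem,
          Set.indicator_of_notMem (fun hc : r ∈ Set.Ioo (0:ℝ) _ => absurd hc.2 (not_lt.2 h)),
          mul_zero]
    rw [MeasureTheory.setIntegral_congr_fun measurableSet_Ioc hcong,
      MeasureTheory.setIntegral_indicator measurableSet_Ioo]
    have hinter : Set.Ioc (0:ℝ) M ∩ Set.Ioo 0 (rayDist2 U x θ) = Set.Ioo 0 (rayDist2 U x θ) := by
      rw [Set.inter_eq_right]
      intro r hr
      exact ⟨hr.1, le_trans hr.2.le hdM⟩
    rw [hinter, ← MeasureTheory.integral_Ioc_eq_integral_Ioo,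
      ← intervalIntegral.integral_of_le hd0.le]
    have : ∫ r in (0:ℝ)..(rayDist2 U x θ), id r = ∫ r in (0:ℝ)..(rayDist2 U x θ), r := rfl
    rw [this, integral_id]
    ring
  have h5 : ∫ θ in Set.Ioo (-π) π, (rayDist2 U x θ)^2/2 = (volume U).toReal := by
    rw [← h1, h2, h3]
    exact MeasureTheory.setIntegral_congr_fun measurableSet_Ioo (fun θ _ => (h4 θ).symm)
  have h6 : ∫ θ in Set.Ioo (-π) π, (rayDist2 U x θ)^2/2
      = (1/2) * ∫ θ in (-π:ℝ)..π, (rayDist2 U x θ)^2 := by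
    rw [intervalIntegral.integral_of_le (by linarith [pi_pos] : (-π:ℝ) ≤ π),
      MeasureTheory.integral_Ioc_eq_integral_Ioo, MeasureTheory.integral_div]
    ring
  have hper : Function.Periodic (fun θ => (rayDist2 U x θ)^2) (2*π) :=
    (rayDist2_periodic U x).comp (· ^ 2)
  have h7 : ∫ θ in (-π:ℝ)..π, (rayDist2 U x θ)^2
      = ∫ θ in (0:ℝ)..(2*π), (rayDist2 U x θ)^2 := by
    have h := hper.intervalIntegral_add_eq (-π) 0
    rw [zero_add] at h
    have he : -π + 2*π = π := by ring
    rw [he] at h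
    exact h
  rw [← h7]
  rw [h6, h7] at h5
  rw [← h7] at h5
  linarith

end Int
section Final

variable {U : Set ℂ} (hU_open : IsOpen U) (hU_conv : Convex ℝ U)
  (hU_bdd : Bornology.IsBounded U)

lemma Imom2_reflect {z₀ : ℂ} (hsymU : ∀ y ∈ U, 2*z₀ - y ∈ U) (x : ℂ) (k : ℕ) :
    Imom2 U k (2*z₀ - x) = Imom2 U k x := by
  unfold Imom2
  congr 1
  have hcong : Set.EqOn (fun φ => (rayDist2 U (2*z₀-x) φ)^k)
      (fun φ => ((fun ψ => (rayDist2 U x ψ)^k) (φ + π))) (Set.uIcc (0:ℝ) (2*π)) := fun φ _ => by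
    simp only [rayDist2_reflect hsymU]
  rw [intervalIntegral.integral_congr hcong]
  exact integral_shift_pi ((rayDist2_periodic U x).comp (· ^ k))

lemma varDist2_reflect {z₀ : ℂ} (hsymU : ∀ y ∈ U, 2*z₀ - y ∈ U) (x : ℂ) :
    varDist2 U (2*z₀ - x) = varDist2 U x := by
  unfold varDist2
  rw [Imom2_reflect hsymU, Imom2_reflect hsymU]

include hU_conv hU_bdd in
lemma rayDist2_midpoint {y z : ℂ} (hy : y ∈ U) (hz : z ∈ U) (φ : ℝ) :
    rayDist2 U y φ + rayDist2 U z φ ≤ 2 * rayDist2 U ((y+z)/2) φ := by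
  have key : ∀ s : ℝ, 0 ≤ s → y + (s:ℂ) * Complex.exp ((φ:ℂ)*Complex.I) ∈ U →
      ∀ t : ℝ, 0 ≤ t → z + (t:ℂ) * Complex.exp ((φ:ℂ)*Complex.I) ∈ U →
      (y+z)/2 + (((s+t)/2 : ℝ):ℂ) * Complex.exp ((φ:ℂ)*Complex.I) ∈ U := by
    intro s hs0 hsU t ht0 htU
    have hcomb := hU_conv hsU htU (a := 1/2) (b := 1/2) (by norm_num) (by norm_num) (by norm_num)
    have heq : (1/2:ℝ) • (y + (s:ℂ) * Complex.exp ((φ:ℂ)*Complex.I))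
        + (1/2:ℝ) • (z + (t:ℂ) * Complex.exp ((φ:ℂ)*Complex.I))
        = (y+z)/2 + (((s+t)/2 : ℝ):ℂ) * Complex.exp ((φ:ℂ)*Complex.I) := by
      rw [Complex.real_smul, Complex.real_smul]
      push_cast
      ring
    rwa [heq] at hcomb
  have h1 : ∀ t : ℝ, 0 ≤ t → z + (t:ℂ) * Complex.exp ((φ:ℂ)*Complex.I) ∈ U →
      rayDist2 U y φ ≤ 2 * rayDist2 U ((y+z)/2) φ - t := by
    intro t ht0 htU
    apply csSup_le ⟨0, raySet_zero_mem hy φ⟩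
    rintro s ⟨hs0, hsU⟩
    have hmem : ((s+t)/2 : ℝ) ∈ {u : ℝ | 0 ≤ u ∧
        (y+z)/2 + (u:ℂ) * Complex.exp ((φ:ℂ)*Complex.I) ∈ U} :=
      ⟨by linarith, key s hs0 hsU t ht0 htU⟩
    have := le_csSup (raySet_bddAbove hU_bdd ((y+z)/2) φ) hmem
    have h2 : (s+t)/2 ≤ rayDist2 U ((y+z)/2) φ := this
    linarith
  have h3 : rayDist2 U z φ ≤ 2 * rayDist2 U ((y+z)/2) φ - rayDist2 U y φ := by
    apply csSup_le ⟨0, raySet_zero_mem hz φ⟩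
    rintro t ⟨ht0, htU⟩
    linarith [h1 t ht0 htU]
  linarith

lemma zero_on_Ioo {g : ℝ → ℝ} (hc : Continuous g) (hnn : ∀ φ, 0 ≤ g φ) {a : ℝ}
    (hint : ∫ φ in a..(a+2*π), g φ = 0) : ∀ φ ∈ Set.Ioo a (a+2*π), g φ = 0 := by
  intro φ₀ hφ₀
  by_contra hne
  have hpos : 0 < g φ₀ := lt_of_le_of_ne (hnn φ₀) (Ne.symm hne)
  have hab : a < a + 2*π := by linarith [pi_pos]
  have hio : MeasureTheory.IntegrableOn g (Set.Ioc a (a+2*π)) :=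
    (hc.intervalIntegrable _ _).1
  have hopen : IsOpen ({ψ | g ψ ≠ 0} ∩ Set.Ioo a (a+2*π)) :=
    (isOpen_compl_singleton.preimage hc).inter isOpen_Ioo
  obtain ⟨ε, hε, hball⟩ := Metric.isOpen_iff.1 hopen φ₀ ⟨hne, hφ₀⟩
  have hsubsup : Metric.ball φ₀ ε ⊆ Function.support g ∩ Set.Ioc a (a+2*π) := by
    intro ψ hψ
    obtain ⟨h1, h2⟩ := hball hψ
    exact ⟨h1, Set.Ioo_subset_Ioc_self h2⟩
  have hsupp_pos : 0 < volume (Function.support g ∩ Set.Ioc a (a+2*π)) := by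
    calc (0:ENNReal) < volume (Metric.ball φ₀ ε) := by
          rw [Real.volume_ball]
          simp only [ENNReal.ofReal_pos]
          linarith
      _ ≤ _ := measure_mono hsubsup
  have hposint := (MeasureTheory.setIntegral_pos_iff_support_of_nonneg_ae
    (MeasureTheory.ae_of_all _ hnn) hio).2 hsupp_pos
  rw [intervalIntegral.integral_of_le hab.le] at hint
  linarith

lemma zero_everywhere {g : ℝ → ℝ} (hc : Continuous g) (hnn : ∀ φ, 0 ≤ g φ)
    (hper : Function.Periodic g (2*π))
    (hint : ∫ φ in (0:ℝ)..(2*π), g φ = 0) : ∀ φ, g φ = 0 := by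
  have h2π : (0:ℝ) < 2*π := by positivity
  have hint2 : ∫ φ in (-π:ℝ)..(-π+2*π), g φ = 0 := by
    rw [hper.intervalIntegral_add_eq (-π) 0, zero_add]
    exact hint
  have hint0 : ∫ φ in (0:ℝ)..(0+2*π), g φ = 0 := by rw [zero_add]; exact hint
  intro φ
  set ψ := toIcoMod h2π 0 φ with hψdef
  have hmem : ψ ∈ Set.Ico (0:ℝ) (2*π) := toIcoMod_mem_Ico' h2π φ
  have hsub : ψ = φ - toIcoDiv h2π 0 φ • (2*π) := rfl
  have hgψ : g φ = g ψ := by rw [hsub, hper.sub_zsmul_eq]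
  rw [hgψ]
  rcases eq_or_lt_of_le hmem.1 with h0 | h0
  · exact zero_on_Ioo hc hnn hint2 ψ ⟨by rw [← h0]; linarith [pi_pos], by rw [← h0]; linarith [pi_pos]⟩
  · exact zero_on_Ioo hc hnn hint0 ψ ⟨h0, by linarith [hmem.2]⟩

end Final

/-- If the distance to the boundary from z₀ is symmetric under φ ↦ φ + π, then z₀ is a
critical point of the variance, and is its unique minimum (the variocentre). -/
theorem variocentre_of_symmetry (U : Set ℂ) (hU_open : IsOpen U) (hU_conv : Convex ℝ U)
    (hU_bdd : Bornology.IsBounded U) (hU_ne : U.Nonempty) (z₀ : ℂ) (hz₀ : z₀ ∈ U)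
    (hsym : ∀ φ ∈ Set.Ico (0:ℝ) (2 * π), rayDist2 U z₀ φ = rayDist2 U z₀ (φ + π)) :
    (∀ σ : ℝ, dirDeriv2 (varDist2 U) σ z₀ = 0) ∧
      ∀ z ∈ U, z ≠ z₀ → varDist2 U z₀ < varDist2 U z := by
  have hsym' := hsym_ext hU_open hU_conv hU_bdd hz₀ hsym
  have hsymU := symmU hU_open hU_conv hU_bdd hz₀ hsym'
  have h2π : (0:ℝ) < 2*π := by positivity
  constructor
  · intro σ
    set f : ℝ → ℝ := fun t => varDist2 U (z₀ + (t:ℂ) * Complex.exp ((σ:ℂ) * Complex.I)) with hfdef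
    have heven : (fun t => f (-t)) = f := by
      funext t
      show varDist2 U (z₀ + ((-t:ℝ):ℂ) * Complex.exp ((σ:ℂ)*Complex.I)) = _
      have heq : (z₀ + ((-t:ℝ):ℂ) * Complex.exp ((σ:ℂ)*Complex.I))
          = 2*z₀ - (z₀ + (t:ℂ)*Complex.exp ((σ:ℂ)*Complex.I)) := by push_cast; ring
      rw [heq, varDist2_reflect hsymU]
    have h1 : deriv (fun t => f (-t)) 0 = deriv f 0 := by rw [heven]
    rw [deriv_comp_neg, neg_zero] at h1
    show deriv f 0 = 0
    linarith
  · intro z hzU hzne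
    by_contra hcon
    push_neg at hcon
    set w : ℂ := 2*z₀ - z with hw
    have hwU : w ∈ U := hsymU z hzU
    have hcz : Continuous (fun φ => rayDist2 U z φ) := rayDist2_cont hU_open hU_conv hU_bdd hzU
    have hcz₀ : Continuous (fun φ => rayDist2 U z₀ φ) := rayDist2_cont hU_open hU_conv hU_bdd hz₀
    have hczπ : Continuous (fun φ => rayDist2 U z (φ+π)) :=
      hcz.comp (continuous_id.add continuous_const)
    have hI2 : Imom2 U 2 z = Imom2 U 2 z₀ := by
      unfold Imom2
      rw [integral_sq_eq hU_open hU_conv hU_bdd hzU, integral_sq_eq hU_open hU_conv hU_bdd hz₀]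
    have hI1nnz : 0 ≤ Imom2 U 1 z := by
      unfold Imom2
      apply mul_nonneg (by positivity)
      apply intervalIntegral.integral_nonneg (by linarith)
      intro φ _
      simpa using rayDist2_nonneg hU_bdd hzU φ
    have hI1nnz₀ : 0 ≤ Imom2 U 1 z₀ := by
      unfold Imom2
      apply mul_nonneg (by positivity)
      apply intervalIntegral.integral_nonneg (by linarith)
      intro φ _
      simpa using rayDist2_nonneg hU_bdd hz₀ φ
    have hIsq : Imom2 U 1 z₀ ^ 2 ≤ Imom2 U 1 z ^ 2 := by
      unfold varDist2 at hcon
      rw [hI2] at hcon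
      linarith
    have hI1le : Imom2 U 1 z₀ ≤ Imom2 U 1 z := by nlinarith
    have hmid : (z+w)/2 = z₀ := by rw [hw]; ring
    have hdw : ∀ φ : ℝ, rayDist2 U w φ = rayDist2 U z (φ+π) := fun φ => by
      rw [hw, rayDist2_reflect hsymU z φ]
    have hchord : ∀ φ : ℝ, rayDist2 U z φ + rayDist2 U z (φ+π) ≤ 2*rayDist2 U z₀ φ := by
      intro φ
      have h := rayDist2_midpoint hU_conv hU_bdd hzU hwU φ
      rw [hmid, hdw φ] at h
      linarith
    have hshift : ∫ φ in (0:ℝ)..(2*π), rayDist2 U z (φ+π)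
        = ∫ φ in (0:ℝ)..(2*π), rayDist2 U z φ :=
      integral_shift_pi (rayDist2_periodic U z)
    have hA : ∀ y : ℂ, ∫ φ in (0:ℝ)..(2*π), rayDist2 U y φ = 2*π * Imom2 U 1 y := by
      intro y
      unfold Imom2
      have hp1 : (fun φ => (rayDist2 U y φ)^1) = fun φ => rayDist2 U y φ := by
        funext φ; rw [pow_one]
      rw [hp1]
      field_simp
    set g : ℝ → ℝ := fun φ => 2*rayDist2 U z₀ φ - rayDist2 U z φ - rayDist2 U z (φ+π) with hgdef
    have hgc : Continuous g := ((continuous_const.mul hcz₀).sub hcz).sub hczπ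
    have hgnn : ∀ φ, 0 ≤ g φ := fun φ => by
      have := hchord φ
      simp only [hgdef]
      linarith
    have hgper : Function.Periodic g (2*π) := by
      intro φ
      simp only [hgdef]
      have e3 : φ + 2*π + π = φ + π + 2*π := by ring
      rw [rayDist2_periodic U z₀ φ, rayDist2_periodic U z φ, e3, rayDist2_periodic U z (φ+π)]
    have hgint : ∫ φ in (0:ℝ)..(2*π), g φ = 0 := by
      have h1 : ∫ φ in (0:ℝ)..(2*π), g φ
          = 2*(∫ φ in (0:ℝ)..(2*π), rayDist2 U z₀ φ)
            - (∫ φ in (0:ℝ)..(2*π), rayDist2 U z φ)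
            - (∫ φ in (0:ℝ)..(2*π), rayDist2 U z (φ+π)) := by
        simp only [hgdef]
        rw [intervalIntegral.integral_sub (f := fun φ => 2 * rayDist2 U z₀ φ - rayDist2 U z φ)
            (g := fun φ => rayDist2 U z (φ + π))
            (((continuous_const.mul hcz₀).sub hcz).intervalIntegrable _ _)
            (hczπ.intervalIntegrable _ _),
          intervalIntegral.integral_sub (f := fun φ => 2 * rayDist2 U z₀ φ)
            (g := fun φ => rayDist2 U z φ)
            ((continuous_const.mul hcz₀).intervalIntegrable _ _)
            (hcz.intervalIntegrable _ _),
          intervalIntegral.integral_const_mul]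
      have hge : 0 ≤ ∫ φ in (0:ℝ)..(2*π), g φ :=
        intervalIntegral.integral_nonneg (by linarith) (fun φ _ => hgnn φ)
      have hle : ∫ φ in (0:ℝ)..(2*π), g φ ≤ 0 := by
        rw [h1, hshift, hA z, hA z₀]
        nlinarith
      linarith
    have hgzero : ∀ φ, g φ = 0 := zero_everywhere hgc hgnn hgper hgint
    -- midpoints
    set mp : ℂ := (z₀+z)/2 with hmp
    set mm : ℂ := (z₀+w)/2 with hmm
    have hmpU : mp ∈ U := by
      have h := hU_conv hz₀ hzU (a := 1/2) (b := 1/2) (by norm_num) (by norm_num) (by norm_num)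
      have he : (1/2:ℝ) • z₀ + (1/2:ℝ) • z = mp := by
        rw [hmp, Complex.real_smul, Complex.real_smul]; push_cast; ring
      rwa [he] at h
    have hmmU : mm ∈ U := by
      have h := hU_conv hz₀ hwU (a := 1/2) (b := 1/2) (by norm_num) (by norm_num) (by norm_num)
      have he : (1/2:ℝ) • z₀ + (1/2:ℝ) • w = mm := by
        rw [hmm, Complex.real_smul, Complex.real_smul]; push_cast; ring
      rwa [he] at h
    set b : ℝ → ℝ := fun φ => rayDist2 U z φ - rayDist2 U z₀ φ with hbdef
    have hbc : Continuous b := hcz.sub hcz₀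
    have hplus : ∀ φ, rayDist2 U z₀ φ + b φ/2 ≤ rayDist2 U mp φ := by
      intro φ
      have h := rayDist2_midpoint hU_conv hU_bdd hz₀ hzU φ
      rw [← hmp] at h
      simp only [hbdef]
      linarith
    have hminus : ∀ φ, rayDist2 U z₀ φ - b φ/2 ≤ rayDist2 U mm φ := by
      intro φ
      have h := rayDist2_midpoint hU_conv hU_bdd hz₀ hwU φ
      rw [← hmm, hdw φ] at h
      have hg0 := hgzero φ
      simp only [hgdef] at hg0
      simp only [hbdef]
      linarith
    have hppos : ∀ φ, 0 ≤ rayDist2 U z₀ φ + b φ/2 := fun φ => by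
      have h1 := rayDist2_pos hU_open hU_bdd hzU φ
      have h2 := rayDist2_pos hU_open hU_bdd hz₀ φ
      simp only [hbdef]
      linarith
    have hmpos : ∀ φ, 0 ≤ rayDist2 U z₀ φ - b φ/2 := fun φ => by
      have h1 := rayDist2_pos hU_open hU_bdd hzU (φ+π)
      have h2 := rayDist2_pos hU_open hU_bdd hz₀ φ
      have hg0 := hgzero φ
      simp only [hgdef] at hg0
      simp only [hbdef]
      linarith
    have hsq : ∀ φ, 2*(rayDist2 U z₀ φ)^2 + (b φ)^2/2
        ≤ (rayDist2 U mp φ)^2 + (rayDist2 U mm φ)^2 := fun φ => by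
      have h1 := hplus φ
      have h2 := hminus φ
      have h3 := hppos φ
      have h4 := hmpos φ
      nlinarith
    have hintineq : ∫ φ in (0:ℝ)..(2*π), (2*(rayDist2 U z₀ φ)^2 + (b φ)^2/2)
        ≤ ∫ φ in (0:ℝ)..(2*π), ((rayDist2 U mp φ)^2 + (rayDist2 U mm φ)^2) := by
      apply intervalIntegral.integral_mono_on (by linarith)
      · exact ((continuous_const.mul (hcz₀.pow 2)).add ((hbc.pow 2).div_const 2)).intervalIntegrable _ _
      · exact (((rayDist2_cont hU_open hU_conv hU_bdd hmpU).pow 2).add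
          ((rayDist2_cont hU_open hU_conv hU_bdd hmmU).pow 2)).intervalIntegrable _ _
      · intro φ _
        exact hsq φ
    have hlhs : ∫ φ in (0:ℝ)..(2*π), (2*(rayDist2 U z₀ φ)^2 + (b φ)^2/2)
        = 2*(2*(volume U).toReal) + (1/2) * ∫ φ in (0:ℝ)..(2*π), (b φ)^2 := by
      rw [intervalIntegral.integral_add (f := fun φ => 2*(rayDist2 U z₀ φ)^2)
          (g := fun φ => (b φ)^2/2)
          ((continuous_const.mul (hcz₀.pow 2)).intervalIntegrable _ _)
          (((hbc.pow 2).div_const 2).intervalIntegrable _ _),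
        intervalIntegral.integral_const_mul, integral_sq_eq hU_open hU_conv hU_bdd hz₀,
        intervalIntegral.integral_div]
      ring
    have hrhs : ∫ φ in (0:ℝ)..(2*π), ((rayDist2 U mp φ)^2 + (rayDist2 U mm φ)^2)
        = 2*(volume U).toReal + 2*(volume U).toReal := by
      rw [intervalIntegral.integral_add (f := fun φ => (rayDist2 U mp φ)^2)
          (g := fun φ => (rayDist2 U mm φ)^2)
          (((rayDist2_cont hU_open hU_conv hU_bdd hmpU).pow 2).intervalIntegrable _ _)
          (((rayDist2_cont hU_open hU_conv hU_bdd hmmU).pow 2).intervalIntegrable _ _),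
        integral_sq_eq hU_open hU_conv hU_bdd hmpU, integral_sq_eq hU_open hU_conv hU_bdd hmmU]
    have hbsqle : ∫ φ in (0:ℝ)..(2*π), (b φ)^2 ≤ 0 := by
      rw [hlhs, hrhs] at hintineq
      linarith
    have hbsqge : 0 ≤ ∫ φ in (0:ℝ)..(2*π), (b φ)^2 :=
      intervalIntegral.integral_nonneg (by linarith) (fun φ _ => sq_nonneg _)
    have hbper : Function.Periodic b (2*π) := by
      intro φ
      simp only [hbdef]
      rw [rayDist2_periodic U z φ, rayDist2_periodic U z₀ φ]
    have hbsqzero : ∀ φ, (b φ)^2 = 0 :=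
      zero_everywhere (hbc.pow 2) (fun φ => sq_nonneg _) (hbper.comp (· ^ 2))
        (le_antisymm hbsqle hbsqge)
    have hbzero : ∀ φ, b φ = 0 := fun φ => by
      have := hbsqzero φ
      exact pow_eq_zero_iff (n := 2) (by norm_num) |>.1 this
    -- contradiction via the ray through z
    have hzz : z - z₀ ≠ 0 := sub_ne_zero.2 hzne
    set ρ := ‖z - z₀‖ with hρ
    set θ := Complex.arg (z - z₀) with hθ
    have hrep : (ρ:ℂ) * Complex.exp ((θ:ℂ)*Complex.I) = z - z₀ :=
      Complex.norm_mul_exp_arg_mul_I _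
    have hρpos : 0 < ρ := by
      rw [hρ]
      exact norm_pos_iff.2 hzz
    have hzrep : z = z₀ + (ρ:ℂ)*Complex.exp ((θ:ℂ)*Complex.I) := by rw [hrep]; ring
    have hray := rayDist2_ray hU_open hU_conv hU_bdd hz₀ hρpos.le θ (by rw [← hzrep]; exact hzU)
    rw [← hzrep] at hray
    have hbθ := hbzero θ
    simp only [hbdef] at hbθ
    rw [hray] at hbθ
    linarith
end

section
/- Let D be the open unit disk in R² (viewed as C). For z ∈ D, the variance of the distance to the boundary is v_D(z) = 1 − 4E(|z|)²/π², where E is the complete elliptic integral of the second kind. In particular v_D(0) = 0. -/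
open MeasureTheory Real

/-- The complete elliptic integral of the second kind. -/
noncomputable def ellipticE (k : ℝ) : ℝ :=
  ∫ θ in (0:ℝ)..(π / 2), Real.sqrt (1 - k ^ 2 * (sin θ) ^ 2)

/-- The complete elliptic integral of the first kind. -/
noncomputable def ellipticK (k : ℝ) : ℝ :=
  ∫ θ in (0:ℝ)..(π / 2), 1 / Real.sqrt (1 - k ^ 2 * (sin θ) ^ 2)

/-! ### Auxiliary material -/

open intervalIntegral

/-- The explicit distance function for the unit disk, in rotated coordinates. -/
noncomputable def ggAux (r ψ : ℝ) : ℝ := -(r * Real.cos ψ) + Real.sqrt (1 - r^2 * Real.sin ψ^2)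

lemma rayDist_eq_aux (z : ℂ) (hz : ‖z‖ < 1) (φ : ℝ) :
    rayDist2 (Metric.ball 0 1) z φ = ggAux ‖z‖ (φ - Complex.arg z) := by
  set r := ‖z‖ with hrdef
  set θ := Complex.arg z with hθdef
  have hr0 : 0 ≤ r := norm_nonneg z
  have hpolar : z = (r : ℂ) * (Complex.cos θ + Complex.sin θ * Complex.I) := by
    rw [hrdef, hθdef]
    exact_mod_cast (Complex.norm_mul_cos_add_sin_mul_I z).symm
  have hre : z.re = r * Real.cos θ := by rw [hpolar]; simp [Complex.cos_ofReal_re]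
  have him : z.im = r * Real.sin θ := by rw [hpolar]; simp [Complex.sin_ofReal_re]
  set b := r * Real.cos (φ - θ) with hbdef
  set s := Real.sqrt (1 - r^2 * Real.sin (φ - θ)^2) with hsdef
  have hsin1 : Real.sin (φ - θ)^2 ≤ 1 := Real.sin_sq_le_one _
  have hpy : Real.sin (φ - θ)^2 + Real.cos (φ - θ)^2 = 1 := Real.sin_sq_add_cos_sq _
  have hs2 : s^2 = 1 - r^2 * Real.sin (φ - θ)^2 :=
    Real.sq_sqrt (by nlinarith)
  have hs0 : 0 ≤ s := Real.sqrt_nonneg _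
  have hb2 : b^2 < s^2 := by
    rw [hs2, hbdef]
    nlinarith [hpy, sq_nonneg (Real.sin (φ - θ))]
  have hbs : b < s := by nlinarith
  have hbs' : -s < b := by nlinarith
  have hmem : ∀ t : ℝ, (0 ≤ t ∧ z + (t : ℂ) * Complex.exp (φ * Complex.I) ∈ Metric.ball (0:ℂ) 1)
      ↔ (0 ≤ t ∧ t < -b + s) := by
    intro t
    have h1 : z + (t : ℂ) * Complex.exp (φ * Complex.I) ∈ Metric.ball (0:ℂ) 1
        ↔ Complex.normSq (z + (t : ℂ) * Complex.exp (φ * Complex.I)) < 1 := by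
      rw [mem_ball_zero_iff, ← Complex.sq_norm]
      constructor
      · intro h; nlinarith [norm_nonneg (z + (t : ℂ) * Complex.exp (φ * Complex.I))]
      · intro h; nlinarith [norm_nonneg (z + (t : ℂ) * Complex.exp (φ * Complex.I))]
    have h2 : Complex.normSq (z + (t : ℂ) * Complex.exp (φ * Complex.I))
        = t^2 + 2*b*t + r^2 := by
      rw [Complex.normSq_apply]
      simp only [Complex.exp_mul_I, Complex.add_re, Complex.add_im, Complex.mul_re,
        Complex.mul_im, Complex.ofReal_re, Complex.ofReal_im, Complex.I_re, Complex.I_im,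
        Complex.cos_ofReal_re, Complex.cos_ofReal_im, Complex.sin_ofReal_re,
        Complex.sin_ofReal_im, hre, him, hbdef]
      have hc : Real.cos (φ - θ) = Real.cos φ * Real.cos θ + Real.sin φ * Real.sin θ :=
        Real.cos_sub φ θ
      have hφpy : Real.sin φ ^2 + Real.cos φ ^2 = 1 := Real.sin_sq_add_cos_sq φ
      have hθpy : Real.sin θ ^2 + Real.cos θ ^2 = 1 := Real.sin_sq_add_cos_sq θ
      linear_combination r^2*hθpy + t^2*hφpy - 2*r*t*hc
    rw [h1, h2]
    constructor
    · rintro ⟨ht0, h⟩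
      refine ⟨ht0, ?_⟩
      have : (t + b)^2 < s^2 := by nlinarith
      have := abs_lt_of_sq_lt_sq' this hs0
      linarith [this.2]
    · rintro ⟨ht0, h⟩
      refine ⟨ht0, ?_⟩
      have h1' : t + b < s := by linarith
      have h2' : -s < t + b := by linarith
      nlinarith
  have hset : {t : ℝ | 0 ≤ t ∧ z + (t : ℂ) * Complex.exp (φ * Complex.I) ∈ Metric.ball (0:ℂ) 1}
      = Set.Ico 0 (-b + s) := by
    ext t; simpa [Set.mem_Ico] using hmem t
  rw [rayDist2, hset, csSup_Ico (by linarith)]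
  rw [ggAux, hbdef]

lemma cont_sq_aux (r : ℝ) : Continuous fun φ : ℝ => Real.sqrt (1 - r^2 * Real.sin φ ^ 2) :=
  Real.continuous_sqrt.comp (by fun_prop)

lemma int_sqrt_aux (r : ℝ) :
    ∫ φ in (0:ℝ)..(2*π), Real.sqrt (1 - r^2 * Real.sin φ ^ 2) = 4 * ellipticE r := by
  set f : ℝ → ℝ := fun φ => Real.sqrt (1 - r^2 * Real.sin φ ^ 2) with hf
  have hc : Continuous f := cont_sq_aux r
  have hint : ∀ a b : ℝ, IntervalIntegrable f volume a b := fun a b => hc.intervalIntegrable a b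
  have hper : Function.Periodic f π := by
    intro x; simp [hf, Real.sin_add_pi, neg_sq]
  have h1 : ∫ φ in (π:ℝ)..(2*π), f φ = ∫ φ in (0:ℝ)..π, f φ := by
    have := hper.intervalIntegral_add_eq π 0
    simpa [two_mul] using this
  have h2 : ∫ φ in (π/2:ℝ)..π, f φ = ∫ φ in (0:ℝ)..(π/2), f φ := by
    have hsym : ∀ x : ℝ, f (π - x) = f x := by
      intro x; simp [hf, Real.sin_pi_sub]
    calc ∫ φ in (π/2:ℝ)..π, f φ = ∫ φ in (π/2:ℝ)..π, f (π - φ) := by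
          simp only [hsym]
      _ = ∫ φ in (π - π:ℝ)..(π - π/2), f φ := integral_comp_sub_left f π
      _ = ∫ φ in (0:ℝ)..(π/2), f φ := by norm_num [sub_half]
  have h3 : ∫ φ in (0:ℝ)..(2*π), f φ = (∫ φ in (0:ℝ)..π, f φ) + ∫ φ in (π:ℝ)..(2*π), f φ :=
    (integral_add_adjacent_intervals (hint 0 π) (hint π (2*π))).symm
  have h4 : ∫ φ in (0:ℝ)..π, f φ = (∫ φ in (0:ℝ)..(π/2), f φ) + ∫ φ in (π/2:ℝ)..π, f φ :=
    (integral_add_adjacent_intervals (hint 0 (π/2)) (hint (π/2) π)).symm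
  have he : ellipticE r = ∫ φ in (0:ℝ)..(π/2), f φ := rfl
  rw [h3, h1, h4, h2, he]; ring

lemma int_cos_sqrt_aux (r : ℝ) :
    ∫ φ in (0:ℝ)..(2*π), Real.cos φ * Real.sqrt (1 - r^2 * Real.sin φ ^ 2) = 0 := by
  have h : ∀ x ∈ Set.uIcc (0:ℝ) (2*π), HasDerivAt Real.sin (Real.cos x) x :=
    fun x _ => Real.hasDerivAt_sin x
  have h' : ContinuousOn Real.cos (Set.uIcc (0:ℝ) (2*π)) := Real.continuous_cos.continuousOn
  have hg : Continuous fun u : ℝ => Real.sqrt (1 - r^2 * u ^ 2) :=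
    Real.continuous_sqrt.comp (by fun_prop)
  have := integral_comp_smul_deriv h h' hg
  simp only [smul_eq_mul, Real.sin_zero, Real.sin_two_pi] at this
  rw [integral_same] at this
  simpa [Function.comp] using this

lemma ggAux_integral_one (r : ℝ) :
    ∫ φ in (0:ℝ)..(2*π), ggAux r φ = 4 * ellipticE r := by
  have hi1 : IntervalIntegrable (fun φ : ℝ => -(r * Real.cos φ)) volume 0 (2*π) :=
    (by fun_prop : Continuous fun φ : ℝ => -(r * Real.cos φ)).intervalIntegrable _ _
  have hi2 : IntervalIntegrable (fun φ : ℝ => Real.sqrt (1 - r^2 * Real.sin φ ^ 2))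
      volume 0 (2*π) := (cont_sq_aux r).intervalIntegrable _ _
  have : ∫ φ in (0:ℝ)..(2*π), ggAux r φ
      = (∫ φ in (0:ℝ)..(2*π), -(r * Real.cos φ))
        + ∫ φ in (0:ℝ)..(2*π), Real.sqrt (1 - r^2 * Real.sin φ ^ 2) :=
    integral_add hi1 hi2
  rw [this, int_sqrt_aux]
  have : ∫ φ in (0:ℝ)..(2*π), -(r * Real.cos φ) = 0 := by
    rw [intervalIntegral.integral_neg, intervalIntegral.integral_const_mul, integral_cos]
    simp
  rw [this, zero_add]

lemma ggAux_integral_sq (r : ℝ) (hr0 : 0 ≤ r) (hr1 : r < 1) :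
    ∫ φ in (0:ℝ)..(2*π), (ggAux r φ)^2 = 2*π := by
  have hpt : ∀ φ : ℝ, (ggAux r φ)^2
      = (r^2 * Real.cos φ^2 + (1 - r^2 * Real.sin φ^2))
        - 2*r*(Real.cos φ * Real.sqrt (1 - r^2 * Real.sin φ^2)) := by
    intro φ
    have hs : Real.sqrt (1 - r^2 * Real.sin φ^2)^2 = 1 - r^2 * Real.sin φ^2 :=
      Real.sq_sqrt (by nlinarith [Real.sin_sq_le_one φ])
    calc (ggAux r φ)^2
        = r^2 * Real.cos φ^2 - 2*r*(Real.cos φ * Real.sqrt (1 - r^2 * Real.sin φ^2))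
          + (Real.sqrt (1 - r^2 * Real.sin φ^2))^2 := by rw [ggAux]; ring
      _ = _ := by rw [hs]; ring
  simp only [hpt]
  have hiA : IntervalIntegrable (fun φ : ℝ => r^2 * Real.cos φ^2 + (1 - r^2 * Real.sin φ^2))
      volume 0 (2*π) :=
    (by fun_prop : Continuous fun φ : ℝ => r^2 * Real.cos φ^2 + (1 - r^2 * Real.sin φ^2)).intervalIntegrable _ _
  have hiB : IntervalIntegrable
      (fun φ : ℝ => 2*r*(Real.cos φ * Real.sqrt (1 - r^2 * Real.sin φ^2))) volume 0 (2*π) :=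
    (continuous_const.mul (Real.continuous_cos.mul (cont_sq_aux r))).intervalIntegrable _ _
  rw [integral_sub hiA hiB]
  have hB : ∫ φ in (0:ℝ)..(2*π), 2*r*(Real.cos φ * Real.sqrt (1 - r^2 * Real.sin φ^2)) = 0 := by
    rw [intervalIntegral.integral_const_mul, int_cos_sqrt_aux, mul_zero]
  have hA : ∫ φ in (0:ℝ)..(2*π), (r^2 * Real.cos φ^2 + (1 - r^2 * Real.sin φ^2)) = 2*π := by
    have hc2 : IntervalIntegrable (fun φ : ℝ => r^2 * Real.cos φ^2) volume 0 (2*π) :=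
      (by fun_prop : Continuous fun φ : ℝ => r^2 * Real.cos φ^2).intervalIntegrable _ _
    have hs2 : IntervalIntegrable (fun φ : ℝ => 1 - r^2 * Real.sin φ^2) volume 0 (2*π) :=
      (by fun_prop : Continuous fun φ : ℝ => 1 - r^2 * Real.sin φ^2).intervalIntegrable _ _
    rw [integral_add hc2 hs2]
    have h1 : ∫ φ in (0:ℝ)..(2*π), r^2 * Real.cos φ^2 = r^2 * π := by
      rw [intervalIntegral.integral_const_mul, integral_cos_sq]
      norm_num [Real.sin_two_pi, Real.cos_two_pi]
    have hconst : IntervalIntegrable (fun _ : ℝ => (1:ℝ)) volume 0 (2*π) :=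
      intervalIntegrable_const
    have hsin : IntervalIntegrable (fun φ : ℝ => r^2 * Real.sin φ^2) volume 0 (2*π) :=
      (by fun_prop : Continuous fun φ : ℝ => r^2 * Real.sin φ^2).intervalIntegrable _ _
    have h2 : ∫ φ in (0:ℝ)..(2*π), (1 - r^2 * Real.sin φ^2) = 2*π - r^2*π := by
      rw [integral_sub hconst hsin, intervalIntegral.integral_const_mul, integral_sin_sq]
      norm_num [Real.sin_two_pi, Real.cos_two_pi]
    rw [h1, h2]; ring
  rw [hA, hB]; ring

lemma integral_ray_pow_aux (z : ℂ) (hz : ‖z‖ < 1) (k : ℕ) :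
    ∫ φ in (0:ℝ)..(2*π), (rayDist2 (Metric.ball 0 1) z φ)^k
      = ∫ φ in (0:ℝ)..(2*π), (ggAux ‖z‖ φ)^k := by
  have h1 : ∀ φ : ℝ, (rayDist2 (Metric.ball 0 1) z φ)^k
      = (ggAux ‖z‖ (φ - Complex.arg z))^k :=
    fun φ => by rw [rayDist_eq_aux z hz]
  simp only [h1]
  rw [integral_comp_sub_right (fun φ => (ggAux ‖z‖ φ)^k) (Complex.arg z)]
  have hper : Function.Periodic (fun φ : ℝ => (ggAux ‖z‖ φ)^k) (2*π) := by
    intro x; simp [ggAux, Real.cos_add_two_pi, Real.sin_add_two_pi]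
  have hval := hper.intervalIntegral_add_eq (0 - Complex.arg z) 0
  have h2 : (2*π - Complex.arg z) = (0 - Complex.arg z) + 2*π := by ring
  rw [h2, hval]
  norm_num

/-- The variance of the distance to the boundary for the unit disk. -/
theorem varDist2_unitDisk (z : ℂ) (hz : z ∈ Metric.ball (0 : ℂ) 1) :
    varDist2 (Metric.ball (0 : ℂ) 1) z = 1 - 4 * (ellipticE ‖z‖) ^ 2 / π ^ 2 ∧
      varDist2 (Metric.ball (0 : ℂ) 1) 0 = 0 := by
  have hπ : (π:ℝ) ≠ 0 := Real.pi_ne_zero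
  have main : ∀ w : ℂ, w ∈ Metric.ball (0:ℂ) 1 →
      varDist2 (Metric.ball 0 1) w = 1 - 4 * (ellipticE ‖w‖)^2 / π^2 := by
    intro w hw
    have hw1 : ‖w‖ < 1 := by
      simpa using mem_ball_zero_iff.mp hw
    have hr0 : 0 ≤ ‖w‖ := norm_nonneg w
    have hI1 : Imom2 (Metric.ball 0 1) 1 w = 2 * ellipticE ‖w‖ / π := by
      rw [Imom2, integral_ray_pow_aux w hw1 1]
      simp only [pow_one]
      rw [ggAux_integral_one]
      field_simp
      ring
    have hI2 : Imom2 (Metric.ball 0 1) 2 w = 1 := by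
      rw [Imom2, integral_ray_pow_aux w hw1 2, ggAux_integral_sq _ hr0 hw1]
      field_simp
    rw [varDist2, hI1, hI2]
    field_simp
    ring
  refine ⟨main z hz, ?_⟩
  have h0 := main 0 (by simp)
  rw [h0]
  have hE0 : ellipticE ‖(0:ℂ)‖ = π/2 := by
    simp [ellipticE]
  rw [hE0]
  field_simp
  ring
end

section
/- Let U be a bounded convex domain in R², z₀ ∈ U with r = d(z₀,∂U) and w = z₀ + r e^{iσ} ∈ ∂U, and z_δ = (1−δ)w + δz₀ for δ ∈ (0,1). Then for every angle φ with |φ − σ| < π/2, d_U(z_δ, φ) ≤ δr / cos(φ − σ), and for |φ − σ| < π/2, d_U(z_δ, φ + π) ≥ r√(2δ − δ²). -/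
open MeasureTheory Real

/-- Geometric bounds on the distance to the boundary from a point near the boundary. -/
theorem rayDist2_bounds_near_boundary (U : Set ℂ) (hU_open : IsOpen U)
    (hU_conv : Convex ℝ U) (hU_bdd : Bornology.IsBounded U) (hU_ne : U.Nonempty)
    (z₀ : ℂ) (hz₀ : z₀ ∈ U) (σ : ℝ) (r : ℝ) (hr : r = Metric.infDist z₀ (frontier U))
    (w : ℂ) (hw : w = z₀ + (r : ℂ) * Complex.exp (σ * Complex.I)) (hwb : w ∈ frontier U)
    (δ : ℝ) (hδ : δ ∈ Set.Ioo (0:ℝ) 1) (φ : ℝ) (hφ : |φ - σ| < π / 2) :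
    rayDist2 U ((1 - (δ:ℂ)) * w + (δ:ℂ) * z₀) φ ≤ δ * r / cos (φ - σ) ∧
      rayDist2 U ((1 - (δ:ℂ)) * w + (δ:ℂ) * z₀) (φ + π) ≥ r * Real.sqrt (2 * δ - δ ^ 2) := by
  obtain ⟨hδ0, hδ1⟩ := hδ
  have habs := abs_lt.mp hφ
  have hcos : 0 < Real.cos (φ - σ) := Real.cos_pos_of_mem_Ioo ⟨habs.1, habs.2⟩
  have hdisjf : Disjoint (frontier U) U := disjoint_frontier_iff_isOpen.mpr hU_open
  have hwU : w ∉ U := fun h => Set.disjoint_left.mp hdisjf hwb h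
  have hz₀f : z₀ ∉ frontier U := fun h => Set.disjoint_left.mp hdisjf h hz₀
  have hr0 : 0 < r := by
    rw [hr]; exact (isClosed_frontier.notMem_iff_infDist_pos ⟨w, hwb⟩).mp hz₀f
  -- the ball of radius r around z₀ is contained in U
  have hball : Metric.ball z₀ r ⊆ U := by
    have hdisj : Disjoint (Metric.ball z₀ r) (frontier U) := by
      rw [hr]; exact Metric.disjoint_ball_infDist
    refine IsPreconnected.subset_left_of_subset_union hU_open
      isClosed_closure.isOpen_compl
      (Set.disjoint_left.mpr fun x hx hx' => hx' (subset_closure hx)) ?_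
      ⟨z₀, Metric.mem_ball_self hr0, hz₀⟩ (convex_ball z₀ r).isPreconnected
    intro x hx
    by_cases hxc : x ∈ closure U
    · left
      rw [closure_eq_self_union_frontier] at hxc
      rcases hxc with h | h
      · exact h
      · exact absurd h (Set.disjoint_left.mp hdisj hx)
    · exact Or.inr hxc
  -- separating functional at w
  obtain ⟨f, hf⟩ := geometric_hahn_banach_open_point hU_conv hU_open hwU
  set a : ℂ := (f 1 : ℂ) + (f Complex.I : ℂ) * Complex.I with ha
  have hfa : ∀ x : ℂ, f x = ((starRingEnd ℂ) a * x).re := by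
    intro x
    have hx : x = x.re • (1:ℂ) + x.im • Complex.I := by
      rw [Complex.real_smul, Complex.real_smul, mul_one, Complex.re_add_im]
    conv_lhs => rw [hx]
    rw [map_add, _root_.map_smul, _root_.map_smul, smul_eq_mul, smul_eq_mul]
    simp [ha, Complex.mul_re]
    ring
  have hfexp_pos : 0 < f (Complex.exp (σ * Complex.I)) := by
    have h1 : f z₀ < f w := hf z₀ hz₀
    have h2 : f w = f z₀ + r * f (Complex.exp (σ * Complex.I)) := by
      rw [hw, map_add, ← Complex.real_smul, _root_.map_smul, smul_eq_mul]
    nlinarith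
  have ha0 : a ≠ 0 := by
    intro h
    rw [hfa, h, map_zero, zero_mul] at hfexp_pos
    simp at hfexp_pos
  have hna : 0 < ‖a‖ := norm_pos_iff.mpr ha0
  -- ‖a‖ ≤ f(e^{iσ})
  have hle : ‖a‖ ≤ f (Complex.exp (σ * Complex.I)) := by
    by_contra hlt
    push_neg at hlt
    set s : ℝ := r * f (Complex.exp (σ * Complex.I)) / ‖a‖ with hs
    have hs_pos : 0 < s := by positivity
    have hs_lt : s < r := by
      rw [hs, div_lt_iff₀ hna]
      nlinarith
    have hvmem : z₀ + (s / ‖a‖) • a ∈ U := by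
      apply hball
      rw [Metric.mem_ball, dist_eq_norm]
      rw [add_sub_cancel_left, norm_smul, Real.norm_eq_abs, abs_of_pos (by positivity),
        div_mul_cancel₀ _ (ne_of_gt hna)]
      exact hs_lt
    have hfv : f (z₀ + (s / ‖a‖) • a) = f z₀ + s * ‖a‖ := by
      rw [map_add, _root_.map_smul, smul_eq_mul]
      congr 1
      rw [hfa a, mul_comm ((starRingEnd ℂ) a) a, Complex.mul_conj, Complex.ofReal_re,
        ← Complex.sq_norm]
      field_simp [ne_of_gt hna]
    have h1 := hf _ hvmem
    have h2 : f w = f z₀ + r * f (Complex.exp (σ * Complex.I)) := by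
      rw [hw, map_add, ← Complex.real_smul, _root_.map_smul, smul_eq_mul]
    rw [hfv, h2] at h1
    have : s * ‖a‖ = r * f (Complex.exp (σ * Complex.I)) := by
      rw [hs]; field_simp
    linarith
  have hge : f (Complex.exp (σ * Complex.I)) ≤ ‖a‖ := by
    rw [hfa]
    calc ((starRingEnd ℂ) a * Complex.exp (σ * Complex.I)).re
        ≤ ‖(starRingEnd ℂ) a * Complex.exp (σ * Complex.I)‖ := Complex.re_le_norm _
      _ = ‖a‖ := by
          rw [norm_mul, Complex.norm_conj, Complex.norm_exp_ofReal_mul_I, mul_one]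
  have hfeq : ((starRingEnd ℂ) a * Complex.exp (σ * Complex.I)).re = ‖a‖ :=
    le_antisymm (by rw [← hfa]; exact hge) (by rw [← hfa]; exact hle)
  have habsz : ‖(starRingEnd ℂ) a * Complex.exp (σ * Complex.I)‖ = ‖a‖ := by
    rw [norm_mul, Complex.norm_conj, Complex.norm_exp_ofReal_mul_I, mul_one]
  have him : ((starRingEnd ℂ) a * Complex.exp (σ * Complex.I)).im = 0 := by
    have h2 := Complex.sq_norm ((starRingEnd ℂ) a * Complex.exp (σ * Complex.I))
    rw [Complex.normSq_apply, habsz, ← hfeq] at h2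
    nlinarith
  have hza : (starRingEnd ℂ) a * Complex.exp (σ * Complex.I) = (‖a‖ : ℂ) := by
    apply Complex.ext
    · rw [hfeq, Complex.ofReal_re]
    · rw [him, Complex.ofReal_im]
  have e1 : Complex.exp ((σ:ℂ) * Complex.I) * Complex.exp ((↑(-σ)) * Complex.I) = 1 := by
    rw [← Complex.exp_add, ← Complex.exp_zero]
    congr 1
    push_cast
    ring
  have hconja : (starRingEnd ℂ) a = (‖a‖ : ℂ) * Complex.exp ((↑(-σ)) * Complex.I) := by
    rw [← hza, mul_assoc, e1, mul_one]
  -- the half-plane condition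
  have hkey : ∀ u ∈ U, ((u - w) * Complex.exp ((↑(-σ)) * Complex.I)).re < 0 := by
    intro u hu
    have h1 : f u < f w := hf u hu
    rw [hfa u, hfa w] at h1
    have h2 : ((starRingEnd ℂ) a * u).re - ((starRingEnd ℂ) a * w).re
        = ‖a‖ * (((u - w) * Complex.exp ((↑(-σ)) * Complex.I)).re) := by
      rw [← Complex.sub_re, ← mul_sub, hconja,
        show (‖a‖ : ℂ) * Complex.exp ((↑(-σ)) * Complex.I) * (u - w)
          = (‖a‖ : ℂ) * ((u - w) * Complex.exp ((↑(-σ)) * Complex.I)) from by ring,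
        Complex.re_ofReal_mul]
    nlinarith
  constructor
  · -- upper bound
    apply Real.sSup_le
    · rintro t ⟨ht0, htU⟩
      have h := hkey _ htU
      have e2 : Complex.exp ((φ:ℂ) * Complex.I) * Complex.exp ((↑(-σ)) * Complex.I)
          = Complex.exp ((↑(φ - σ)) * Complex.I) := by
        rw [← Complex.exp_add]
        congr 1
        push_cast
        ring
      have hcalc : ((1 - (δ:ℂ)) * w + (δ:ℂ) * z₀ + (t:ℂ) * Complex.exp ((φ:ℂ) * Complex.I) - w)
            * Complex.exp ((↑(-σ)) * Complex.I)
          = (↑(-(δ * r)) : ℂ) + (t:ℂ) * Complex.exp ((↑(φ - σ)) * Complex.I) := by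
        have expand : ((1 - (δ:ℂ)) * w + (δ:ℂ) * z₀ + (t:ℂ) * Complex.exp ((φ:ℂ) * Complex.I) - w)
              * Complex.exp ((↑(-σ)) * Complex.I)
            = (↑(-(δ * r)) : ℂ) * (Complex.exp ((σ:ℂ) * Complex.I) * Complex.exp ((↑(-σ)) * Complex.I))
              + (t:ℂ) * (Complex.exp ((φ:ℂ) * Complex.I) * Complex.exp ((↑(-σ)) * Complex.I)) := by
          rw [hw]
          push_cast
          ring
        rw [expand, e1, e2, mul_one]
      rw [hcalc] at h
      have hre : ((↑(-(δ * r)) : ℂ) + (t:ℂ) * Complex.exp ((↑(φ - σ)) * Complex.I)).re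
          = -(δ * r) + t * Real.cos (φ - σ) := by
        rw [Complex.add_re, Complex.ofReal_re, Complex.re_ofReal_mul,
          Complex.exp_ofReal_mul_I_re]
      rw [hre] at h
      rw [le_div_iff₀ hcos]
      linarith
    · positivity
  · -- lower bound
    set c : ℝ := r * Real.sqrt (2 * δ - δ ^ 2) with hc
    have h2δ : 0 < 2 * δ - δ ^ 2 := by nlinarith
    have hcpos : 0 < c := mul_pos hr0 (Real.sqrt_pos.mpr h2δ)
    have hc2 : c ^ 2 = r ^ 2 * (2 * δ - δ ^ 2) := by
      rw [hc, mul_pow, Real.sq_sqrt h2δ.le]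
    have hmem : ((1 - (δ:ℂ)) * w + (δ:ℂ) * z₀) + (c : ℂ) * Complex.exp ((↑(φ + π)) * Complex.I) ∈ U := by
      apply hball
      have hexpπ : Complex.exp ((↑(φ + π)) * Complex.I) = -Complex.exp ((φ:ℂ) * Complex.I) := by
        push_cast
        rw [add_mul, Complex.exp_add, Complex.exp_pi_mul_I]
        ring
      have hpt : ((1 - (δ:ℂ)) * w + (δ:ℂ) * z₀) + (c : ℂ) * Complex.exp ((↑(φ + π)) * Complex.I) - z₀
          = ((↑((1 - δ) * r) : ℂ) * Complex.exp ((σ:ℂ) * Complex.I) - (c:ℂ) * Complex.exp ((φ:ℂ) * Complex.I)) := by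
        rw [hexpπ, hw]
        push_cast
        ring
      rw [Metric.mem_ball, Complex.dist_eq, hpt]
      have e2 : Complex.exp ((φ:ℂ) * Complex.I) * Complex.exp ((↑(-σ)) * Complex.I)
          = Complex.exp ((↑(φ - σ)) * Complex.I) := by
        rw [← Complex.exp_add]
        congr 1
        push_cast
        ring
      have habs1 : ‖Complex.exp ((↑(-σ)) * Complex.I)‖ = 1 :=
        Complex.norm_exp_ofReal_mul_I (-σ)
      have hmul : ‖(↑((1 - δ) * r) : ℂ) * Complex.exp ((σ:ℂ) * Complex.I) - (c:ℂ) * Complex.exp ((φ:ℂ) * Complex.I)‖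
          = ‖(↑((1 - δ) * r) : ℂ) - (c:ℂ) * Complex.exp ((↑(φ - σ)) * Complex.I)‖ := by
        have habsX : ‖((↑((1 - δ) * r) : ℂ) * Complex.exp ((σ:ℂ) * Complex.I) - (c:ℂ) * Complex.exp ((φ:ℂ) * Complex.I)) * Complex.exp ((↑(-σ)) * Complex.I)‖
            = ‖(↑((1 - δ) * r) : ℂ) * Complex.exp ((σ:ℂ) * Complex.I) - (c:ℂ) * Complex.exp ((φ:ℂ) * Complex.I)‖ := by
          rw [norm_mul, habs1, mul_one]
        rw [← habsX]
        congr 1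
        rw [show ((↑((1 - δ) * r) : ℂ) * Complex.exp ((σ:ℂ) * Complex.I) - (c:ℂ) * Complex.exp ((φ:ℂ) * Complex.I))
              * Complex.exp ((↑(-σ)) * Complex.I)
            = (↑((1 - δ) * r) : ℂ) * (Complex.exp ((σ:ℂ) * Complex.I) * Complex.exp ((↑(-σ)) * Complex.I))
              - (c:ℂ) * (Complex.exp ((φ:ℂ) * Complex.I) * Complex.exp ((↑(-σ)) * Complex.I)) from by ring,
          e1, e2, mul_one]
      rw [hmul, Complex.norm_def, Complex.normSq_apply]
      have hre2 : ((↑((1 - δ) * r) : ℂ) - (c:ℂ) * Complex.exp ((↑(φ - σ)) * Complex.I)).re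
          = (1 - δ) * r - c * Real.cos (φ - σ) := by
        rw [Complex.sub_re, Complex.ofReal_re, Complex.re_ofReal_mul, Complex.exp_ofReal_mul_I_re]
      have him2 : ((↑((1 - δ) * r) : ℂ) - (c:ℂ) * Complex.exp ((↑(φ - σ)) * Complex.I)).im
          = -(c * Real.sin (φ - σ)) := by
        rw [Complex.sub_im, Complex.ofReal_im, Complex.im_ofReal_mul, Complex.exp_ofReal_mul_I_im]
        ring
      rw [hre2, him2]
      rw [Real.sqrt_lt' hr0]
      have htrig := Real.sin_sq_add_cos_sq (φ - σ)
      nlinarith [mul_pos (mul_pos (mul_pos (sub_pos.mpr hδ1) hr0) hcpos) hcos]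
    have hbdd : BddAbove {t : ℝ | 0 ≤ t ∧ ((1 - (δ:ℂ)) * w + (δ:ℂ) * z₀) + (t : ℂ) * Complex.exp ((↑(φ + π)) * Complex.I) ∈ U} := by
      obtain ⟨R, hR⟩ := hU_bdd.subset_closedBall 0
      refine ⟨R + ‖(1 - (δ:ℂ)) * w + (δ:ℂ) * z₀‖, ?_⟩
      rintro t ⟨ht0, htU⟩
      have h1 := hR htU
      rw [Metric.mem_closedBall, Complex.dist_eq, sub_zero] at h1
      have h2 : t = ‖(t : ℂ) * Complex.exp ((↑(φ + π)) * Complex.I)‖ := by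
        rw [norm_mul, Complex.norm_exp_ofReal_mul_I, mul_one, Complex.norm_real, Real.norm_eq_abs, abs_of_nonneg ht0]
      rw [h2]
      calc ‖(t : ℂ) * Complex.exp ((↑(φ + π)) * Complex.I)‖
          = ‖(((1 - (δ:ℂ)) * w + (δ:ℂ) * z₀) + (t : ℂ) * Complex.exp ((↑(φ + π)) * Complex.I))
            - ((1 - (δ:ℂ)) * w + (δ:ℂ) * z₀)‖ := by congr 1; ring
        _ ≤ ‖((1 - (δ:ℂ)) * w + (δ:ℂ) * z₀) + (t : ℂ) * Complex.exp ((↑(φ + π)) * Complex.I)‖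
            + ‖(1 - (δ:ℂ)) * w + (δ:ℂ) * z₀‖ := by
            simpa using norm_sub_le
              ((((1 - (δ:ℂ)) * w + (δ:ℂ) * z₀) + (t : ℂ) * Complex.exp ((↑(φ + π)) * Complex.I)))
              ((1 - (δ:ℂ)) * w + (δ:ℂ) * z₀)
        _ ≤ R + ‖(1 - (δ:ℂ)) * w + (δ:ℂ) * z₀‖ := by linarith
    have := le_csSup hbdd ⟨hcpos.le, hmem⟩
    exact this
end

section
/- Let B³ be the open unit ball in R³ and x a point with |x| = r, 0 ≤ r < 1. Then the mean squared distance to the boundary is I_2^{B³}(x) = 1 − r²/3. -/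
open MeasureTheory Metric

section Aux
open Set Measure

local notation "E3" => EuclideanSpace ℝ (Fin 3)

lemma rayDist_ball {n : ℕ} (x σ : EuclideanSpace ℝ (Fin n)) (hx : ‖x‖ < 1) (hσ : ‖σ‖ = 1) :
    rayDist (ball 0 1) x σ =
      -(inner ℝ x σ : ℝ) + Real.sqrt (1 - ‖x‖^2 + (inner ℝ x σ : ℝ)^2) := by
  set a : ℝ := inner ℝ x σ with ha
  set s : ℝ := Real.sqrt (1 - ‖x‖^2 + a^2) with hs
  have hpos : (0:ℝ) < 1 - ‖x‖^2 + a^2 := by nlinarith [norm_nonneg x, abs_real_inner_le_norm x σ]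
  have hs0 : 0 ≤ s := Real.sqrt_nonneg _
  have hs2 : s^2 = 1 - ‖x‖^2 + a^2 := Real.sq_sqrt hpos.le
  have hsa : |a| < s := abs_lt_of_sq_lt_sq (by nlinarith [norm_nonneg x, hx]) hs0
  have hsa' := abs_lt.1 hsa
  have hset : {t : ℝ | 0 ≤ t ∧ x + t • σ ∈ ball (0 : EuclideanSpace ℝ (Fin n)) 1}
      = Ico 0 (-a + s) := by
    ext t
    have hnorm : ‖x + t • σ‖^2 = ‖x‖^2 + 2 * t * a + t^2 := by
      rw [norm_add_sq_real, real_inner_smul_right, norm_smul, hσ, Real.norm_eq_abs, ← ha,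
        mul_one, sq_abs]
      ring
    simp only [mem_setOf_eq, mem_ball, dist_zero_right, mem_Ico]
    constructor
    · rintro ⟨ht0, ht1⟩
      refine ⟨ht0, ?_⟩
      have h2 : ‖x + t • σ‖^2 < 1 := by
        nlinarith [norm_nonneg (x + t • σ)]
      rw [hnorm] at h2
      nlinarith [sq_nonneg (t + a - s)]
    · rintro ⟨ht0, ht1⟩
      refine ⟨ht0, ?_⟩
      have h2 : ‖x + t • σ‖^2 < 1 := by
        rw [hnorm]; nlinarith
      have := norm_nonneg (x + t • σ)
      nlinarith
  rw [rayDist, hset, csSup_Ico (by linarith)]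

lemma radial_int : ∫ t : Ioi (0:ℝ), (Ioo (0:ℝ) 1).indicator (fun _ => (1:ℝ)) (t:ℝ) ∂(volumeIoiPow 2)
    = 1/3 := by
  rw [volumeIoiPow]
  simp only [ENNReal.ofReal]
  rw [integral_withDensity_eq_integral_smul (by exact (measurable_subtype_coe.pow_const _).real_toNNReal),
    integral_subtype_comap measurableSet_Ioi
      (fun a : ℝ => Real.toNNReal (a ^ 2) • (Ioo (0:ℝ) 1).indicator (fun _ => (1:ℝ)) a)]
  have : ∀ a ∈ Ioi (0:ℝ), Real.toNNReal (a ^ 2) • (Ioo (0:ℝ) 1).indicator (fun _ => (1:ℝ)) a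
      = (Ioo (0:ℝ) 1).indicator (fun a => a ^ 2) a := by
    intro a ha
    by_cases h : a ∈ Ioo (0:ℝ) 1
    · simp [h, NNReal.smul_def, Real.coe_toNNReal _ (sq_nonneg a)]
    · simp [h]
  rw [setIntegral_congr_fun measurableSet_Ioi this, integral_indicator measurableSet_Ioo,
    restrict_restrict measurableSet_Ioo]
  have : Ioo (0:ℝ) 1 ∩ Ioi 0 = Ioo 0 1 := by
    ext t; simp only [mem_inter_iff, mem_Ioo, mem_Ioi]; tauto
  rw [this, restrict_congr_set Ioo_ae_eq_Ioc, ← intervalIntegral.integral_of_le zero_le_one]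
  simp [integral_pow]
  norm_num

lemma sphere_to_ball (g : EuclideanSpace ℝ (Fin 3) → ℝ) :
    ∫ σ : sphere (0 : EuclideanSpace ℝ (Fin 3)) 1, g σ ∂((volume : Measure E3).toSphere)
      = 3 * ∫ y in ball (0 : EuclideanSpace ℝ (Fin 3)) 1, g (‖y‖⁻¹ • y) := by
  have hdim : Module.finrank ℝ E3 = 3 := finrank_euclideanSpace_fin
  set w : ℝ → ℝ := (Ioo (0:ℝ) 1).indicator (fun _ => (1:ℝ)) with hw
  have key := (volume : Measure E3).measurePreserving_homeomorphUnitSphereProd.integral_comp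
    (Homeomorph.measurableEmbedding _)
    (fun p : sphere (0:E3) 1 × Ioi (0:ℝ) => g p.1 * w p.2)
  have hprod : ∫ p : sphere (0:E3) 1 × Ioi (0:ℝ), g p.1 * w p.2
      ∂((volume : Measure E3).toSphere.prod (volumeIoiPow (Module.finrank ℝ E3 - 1)))
      = (∫ σ : sphere (0:E3) 1, g σ ∂((volume : Measure E3).toSphere)) * (1/3) := by
    rw [hdim]
    rw [integral_prod_mul (fun σ : sphere (0:E3) 1 => g σ) (fun t : Ioi (0:ℝ) => w t)]
    norm_num [radial_int]
    exact Or.inl radial_int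
  rw [hprod] at key
  -- LHS of key: integral over {0}ᶜ
  have hleft : (∫ x : ({0}ᶜ : Set E3), g ((homeomorphUnitSphereProd E3 x).1 : E3)
        * w ((homeomorphUnitSphereProd E3 x).2 : ℝ) ∂((volume : Measure E3).comap Subtype.val))
      = ∫ y in ball (0:E3) 1, g (‖y‖⁻¹ • y) := by
    simp only [homeomorphUnitSphereProd_apply_fst_coe, homeomorphUnitSphereProd_apply_snd_coe]
    rw [integral_subtype_comap (measurableSet_singleton (0:E3)).compl
      (fun y => g (‖y‖⁻¹ • y) * w ‖y‖), restrict_compl_singleton]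
    have : ∀ y : E3, g (‖y‖⁻¹ • y) * w ‖y‖
        = (ball (0:E3) 1 \ {0}).indicator (fun y => g (‖y‖⁻¹ • y)) y := by
      intro y
      by_cases h : y ∈ ball (0:E3) 1 \ {0}
      · have h1 : ‖y‖ ∈ Ioo (0:ℝ) 1 := by
          simp only [mem_diff, mem_ball, dist_zero_right, mem_singleton_iff] at h
          exact ⟨norm_pos_iff.2 h.2, h.1⟩
        simp [h, hw, indicator_of_mem h1]
      · have h1 : ‖y‖ ∉ Ioo (0:ℝ) 1 := by
          simp only [mem_diff, mem_ball, dist_zero_right, mem_singleton_iff, not_and_or] at h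
          rcases h with h | h
          · simp only [mem_Ioo, not_and_or, not_lt]; right; linarith [not_lt.1 h]
          · push_neg at h; simp [h]
        simp [h, hw, indicator_of_notMem h1]
    rw [integral_congr_ae (Filter.Eventually.of_forall this), integral_indicator
      ((measurableSet_ball).diff (measurableSet_singleton 0)),
      restrict_congr_set (diff_ae_eq_self.2 (measure_mono_null Set.inter_subset_right
        (measure_singleton 0)))]
  rw [hleft] at key
  linarith

lemma odd_ball_int (f : EuclideanSpace ℝ (Fin 3) → ℝ) (hf : ∀ y, f (-y) = -f y) :
    ∫ y in ball (0 : EuclideanSpace ℝ (Fin 3)) 1, f y = 0 := by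
  have h1 : ∫ y in ball (0:E3) 1, f y = ∫ y, (ball (0:E3) 1).indicator f y :=
    (integral_indicator measurableSet_ball).symm
  have h2 : ∀ y : E3, (ball (0:E3) 1).indicator f (-y) = -(ball (0:E3) 1).indicator f y := by
    intro y
    by_cases h : y ∈ ball (0:E3) 1
    · have h' : -y ∈ ball (0:E3) 1 := by simpa [mem_ball, dist_zero_right] using h
      simp [indicator_of_mem h, indicator_of_mem h', hf]
    · have h' : -y ∉ ball (0:E3) 1 := by simpa [mem_ball, dist_zero_right] using h
      simp [indicator_of_notMem h, indicator_of_notMem h']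
  have h3 : ∫ y : E3, (ball (0:E3) 1).indicator f (-y) = ∫ y, (ball (0:E3) 1).indicator f y :=
    integral_neg_eq_self _ _
  rw [h1]
  have := h3
  simp only [h2] at this
  rw [integral_neg] at this
  linarith

lemma norm_sq_sum (y : EuclideanSpace ℝ (Fin 3)) : ‖y‖^2 = ∑ i, (y i)^2 := by
  rw [EuclideanSpace.norm_eq, Real.sq_sqrt (by positivity)]
  simp [sq_abs]

lemma coord_int_integrable (i : Fin 3) :
    IntegrableOn (fun y : EuclideanSpace ℝ (Fin 3) => (y i)^2 / ‖y‖^2)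
      (ball (0 : EuclideanSpace ℝ (Fin 3)) 1) volume := by
  have hmeas : Measurable fun y : E3 => (y i)^2 / ‖y‖^2 :=
    (((measurable_pi_apply i).comp (WithLp.measurable_ofLp 2 _)).pow_const 2).div ((measurable_norm (α := E3)).pow_const 2)
  refine Integrable.mono' (g := fun _ => (1:ℝ)) (integrableOn_const measure_ball_lt_top.ne)
    hmeas.aestronglyMeasurable ?_
  · refine Filter.Eventually.of_forall fun y => ?_
    have h1 : (y i)^2 ≤ ‖y‖^2 := by
      rw [norm_sq_sum]
      exact Finset.single_le_sum (f := fun j => (y j)^2) (fun j _ => sq_nonneg _)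
        (Finset.mem_univ i)
    rw [Real.norm_eq_abs, abs_div, abs_of_nonneg (sq_nonneg _), abs_of_nonneg (sq_nonneg _)]
    rcases eq_or_ne y 0 with rfl | hy
    · simp
    · exact div_le_one_of_le₀ h1 (sq_nonneg _)

lemma coord_swap (i : Fin 3) :
    ∫ y in ball (0 : EuclideanSpace ℝ (Fin 3)) 1, (y i)^2 / ‖y‖^2
      = ∫ y in ball (0 : EuclideanSpace ℝ (Fin 3)) 1, (y 0)^2 / ‖y‖^2 := by
  set P : E3 ≃ₗᵢ[ℝ] E3 := LinearIsometryEquiv.piLpCongrLeft 2 ℝ ℝ (Equiv.swap (0 : Fin 3) i)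
  have hP := P.measurePreserving
  have hemb : MeasurableEmbedding (P : E3 → E3) :=
    P.toHomeomorph.measurableEmbedding
  have hball : (P : E3 → E3) ⁻¹' (ball 0 1) = ball 0 1 := by
    ext y
    simp [mem_ball, dist_zero_right, P.norm_map]
  have := hP.setIntegral_preimage_emb hemb (fun y : E3 => (y 0)^2 / ‖y‖^2) (ball 0 1)
  rw [hball] at this
  rw [← this]
  refine setIntegral_congr_fun measurableSet_ball fun y _ => ?_
  have h1 : (P y) 0 = y i := by
    simp [P, LinearIsometryEquiv.piLpCongrLeft_apply, Equiv.piCongrLeft'_apply,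
      Equiv.symm_symm, Equiv.swap_apply_left]
  rw [h1, P.norm_map]


lemma coord_sq_int : ∫ y in ball (0 : EuclideanSpace ℝ (Fin 3)) 1, (y 0)^2 / ‖y‖^2
    = (volume (ball (0 : EuclideanSpace ℝ (Fin 3)) 1)).toReal / 3 := by
  have hsum : ∑ i : Fin 3, ∫ y in ball (0:E3) 1, (y i)^2 / ‖y‖^2
      = ∫ y in ball (0:E3) 1, ∑ i : Fin 3, (y i)^2 / ‖y‖^2 :=
    (integral_finset_sum Finset.univ fun i _ => coord_int_integrable i).symm
  have hne : ∀ᵐ y : E3 ∂(volume.restrict (ball (0:E3) 1)), y ≠ 0 := by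
    refine ae_restrict_of_ae ?_
    rw [ae_iff]
    have : {a : E3 | ¬a ≠ 0} = {0} := by ext a; simp
    rw [this]
    exact measure_singleton (0:E3)
  have hone : ∫ y in ball (0:E3) 1, ∑ i : Fin 3, (y i)^2 / ‖y‖^2
      = (volume (ball (0:E3) 1)).toReal := by
    rw [integral_congr_ae (g := fun _ => (1:ℝ))]
    · rw [setIntegral_const, smul_eq_mul, mul_one]; rfl
    · filter_upwards [hne] with y hy
      have h2 : ‖y‖^2 ≠ 0 := pow_ne_zero 2 (norm_ne_zero_iff.2 hy)
      rw [← Finset.sum_div, ← norm_sq_sum, div_self h2]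
  have heach : ∀ i : Fin 3, ∫ y in ball (0:E3) 1, (y i)^2 / ‖y‖^2
      = ∫ y in ball (0:E3) 1, (y 0)^2 / ‖y‖^2 := coord_swap
  rw [hone] at hsum
  rw [Fin.sum_univ_three, heach 1, heach 2] at hsum
  linarith

lemma rotate_int (x : EuclideanSpace ℝ (Fin 3)) (G : ℝ → ℝ → ℝ) :
    ∫ y in ball (0 : EuclideanSpace ℝ (Fin 3)) 1, G (inner ℝ x y : ℝ) ‖y‖
      = ∫ y in ball (0 : EuclideanSpace ℝ (Fin 3)) 1, G (‖x‖ * y 0) ‖y‖ := by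
  set v : E3 := EuclideanSpace.single (0 : Fin 3) ‖x‖ with hv
  have hnv : ‖x‖ = ‖v‖ := by
    rw [hv, EuclideanSpace.norm_single, Real.norm_eq_abs, abs_of_nonneg (norm_nonneg x)]
  set R := Submodule.reflection (ℝ ∙ (x - v))ᗮ with hR
  have hRx : R x = v := Submodule.reflection_sub hnv
  have hRR : ∀ y, R (R y) = y := fun y => Submodule.reflection_reflection (p := y) ..
  have hball : (R : E3 → E3) ⁻¹' (ball 0 1) = ball 0 1 := by
    ext y; simp [mem_ball, dist_zero_right, R.norm_map]
  have key := (R.measurePreserving).setIntegral_preimage_emb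
    (R.toHomeomorph.measurableEmbedding)
    (fun y : E3 => G (inner ℝ x y : ℝ) ‖y‖) (ball 0 1)
  rw [hball] at key
  rw [← key]
  refine setIntegral_congr_fun measurableSet_ball fun y _ => ?_
  have h1 : (inner ℝ x (R y) : ℝ) = inner ℝ v y := by
    calc (inner ℝ x (R y) : ℝ) = inner ℝ (R x) (R (R y)) := by
          rw [LinearIsometryEquiv.inner_map_map]
      _ = inner ℝ v y := by rw [hRx, hRR]
  have h2 : (inner ℝ v y : ℝ) = ‖x‖ * y 0 := by
    rw [hv]
    simp [EuclideanSpace.inner_single_left]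
  simp only [h1, h2, R.norm_map]


/-- The mean squared distance to the boundary of the unit ball in ℝ³ from a point at
distance r from the centre. -/
theorem I2_unitBall3 (r : ℝ) (hr0 : 0 ≤ r) (hr1 : r < 1)
    (x : EuclideanSpace ℝ (Fin 3)) (hx : ‖x‖ = r) :
    sphereMoment (Metric.ball (0 : EuclideanSpace ℝ (Fin 3)) 1) 2 x = 1 - r ^ 2 / 3 := by
  have hx1 : ‖x‖ < 1 := by rw [hx]; exact hr1
  set V : ℝ := (volume (ball (0:E3) 1)).toReal with hV
  have hVpos : 0 < V := ENNReal.toReal_pos (measure_ball_pos volume 0 one_pos).ne'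
    measure_ball_lt_top.ne
  have hdim : Module.finrank ℝ E3 = 3 := finrank_euclideanSpace_fin
  have htot : ((volume : Measure E3).toSphere Set.univ).toReal = 3 * V := by
    rw [Measure.toSphere_apply_univ, hdim, ENNReal.toReal_mul, hV]
    norm_num
  set g : E3 → ℝ :=
    fun y => (-(inner ℝ x y : ℝ) + Real.sqrt (1 - r^2 + (inner ℝ x y : ℝ)^2))^2 with hg
  have hray : ∫ σ : sphere (0:E3) 1, (rayDist (ball (0:E3) 1) x σ)^2
        ∂((volume : Measure E3).toSphere)
      = ∫ σ : sphere (0:E3) 1, g σ ∂((volume : Measure E3).toSphere) := by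
    refine integral_congr_ae (Filter.Eventually.of_forall fun σ => ?_)
    show (rayDist (ball (0:E3) 1) x σ)^2 = g σ
    rw [rayDist_ball x σ hx1 (mem_sphere_zero_iff_norm.1 σ.2), hx]
  rw [sphereMoment, hray, sphere_to_ball g, htot]
  set G : ℝ → ℝ → ℝ :=
    fun a c => (-(c⁻¹ * a) + Real.sqrt (1 - r^2 + (c⁻¹ * a)^2))^2 with hG
  have h1 : ∀ y : E3, g (‖y‖⁻¹ • y) = G (inner ℝ x y : ℝ) ‖y‖ := by
    intro y
    rw [hg, hG]
    simp only [real_inner_smul_right]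
  rw [setIntegral_congr_fun measurableSet_ball (fun y _ => h1 y), rotate_int x G, hx]
  set b : E3 → ℝ := fun y => ‖y‖⁻¹ * (r * y 0) with hb
  have hb1 : ∀ y : E3, |b y| ≤ 1 := by
    intro y
    rcases eq_or_ne y 0 with rfl | hy
    · simp [hb]
    · have h0 : 0 < ‖y‖ := norm_pos_iff.2 hy
      have hy0 : |y 0| ≤ ‖y‖ := by
        have h2 : (y 0)^2 ≤ ‖y‖^2 := by
          rw [norm_sq_sum]
          exact Finset.single_le_sum (f := fun j => (y j)^2) (fun j _ => sq_nonneg _)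
            (Finset.mem_univ 0)
        rw [abs_le]
        constructor <;> nlinarith
      rw [hb, abs_mul, abs_mul, abs_inv, abs_norm, abs_of_nonneg hr0]
      calc ‖y‖⁻¹ * (r * |y 0|) ≤ ‖y‖⁻¹ * (1 * ‖y‖) := by
            apply mul_le_mul_of_nonneg_left _ (by positivity)
            apply mul_le_mul hr1.le hy0 (abs_nonneg _) zero_le_one
        _ = 1 := by field_simp
  have hsnn : ∀ y : E3, (0:ℝ) ≤ 1 - r^2 + (b y)^2 := fun y => by nlinarith
  have hexp : ∀ y : E3, G (r * y 0) ‖y‖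
      = 2 * r^2 * ((y 0)^2 / ‖y‖^2) + (1 - r^2)
        + (-2) * (b y * Real.sqrt (1 - r^2 + (b y)^2)) := by
    intro y
    have hs2 : (Real.sqrt (1 - r^2 + (b y)^2))^2 = 1 - r^2 + (b y)^2 :=
      Real.sq_sqrt (hsnn y)
    have hb2 : (b y)^2 = r^2 * ((y 0)^2 / ‖y‖^2) := by
      rw [hb, div_eq_mul_inv, ← inv_pow]
      ring
    have hb' : ‖y‖⁻¹ * (r * y 0) = b y := rfl
    rw [hG]
    simp only [hb']
    linear_combination hs2 + 2 * hb2
  rw [setIntegral_congr_fun measurableSet_ball (fun y _ => hexp y)]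
  have hI1 : IntegrableOn (fun y : E3 => 2 * r^2 * ((y 0)^2 / ‖y‖^2)) (ball (0:E3) 1) volume :=
    (coord_int_integrable 0).const_mul _
  have hI2 : IntegrableOn (fun _ : E3 => (1 - r^2 : ℝ)) (ball (0:E3) 1) volume :=
    integrableOn_const measure_ball_lt_top.ne
  have hm0 : Measurable fun y : E3 => (y 0 : ℝ) := (measurable_pi_apply 0).comp (WithLp.measurable_ofLp 2 _)
  have hmb : Measurable b := ((measurable_norm (α := E3)).inv).mul (hm0.const_mul r)
  have hI3 : IntegrableOn (fun y : E3 => (-2:ℝ) * (b y * Real.sqrt (1 - r^2 + (b y)^2)))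
      (ball (0:E3) 1) volume := by
    refine Integrable.mono' (g := fun _ => (4:ℝ))
      (integrableOn_const measure_ball_lt_top.ne)
      ((((hmb.mul ((measurable_const.add (hmb.pow_const 2)).sqrt)).const_mul (-2))).aestronglyMeasurable)
      (Filter.Eventually.of_forall fun y => ?_)
    have hs1 : Real.sqrt (1 - r^2 + (b y)^2) ≤ 2 := by
      rw [show (2:ℝ) = Real.sqrt 4 by
        rw [show (4:ℝ) = 2^2 by norm_num, Real.sqrt_sq (by norm_num)]]
      apply Real.sqrt_le_sqrt
      nlinarith [hb1 y, abs_nonneg (b y), sq_abs (b y), neg_abs_le (b y), le_abs_self (b y)]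
    rw [Real.norm_eq_abs, abs_mul, abs_mul,
      abs_of_nonneg (Real.sqrt_nonneg _)]
    have := hb1 y
    have h4 : |(-2:ℝ)| = 2 := by norm_num
    rw [h4]
    have h5 : |b y| * Real.sqrt (1 - r ^ 2 + b y ^ 2) ≤ 1 * 2 :=
      mul_le_mul this hs1 (Real.sqrt_nonneg _) zero_le_one
    show 2 * (|b y| * Real.sqrt (1 - r ^ 2 + b y ^ 2)) ≤ (4:ℝ)
    linarith
  have hI12 : IntegrableOn (fun y : E3 => 2 * r^2 * ((y 0)^2 / ‖y‖^2) + (1 - r^2 : ℝ))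
      (ball (0:E3) 1) volume := hI1.add hI2
  rw [integral_add hI12 hI3, integral_add hI1 hI2]
  have e1 : ∫ y in ball (0:E3) 1, 2 * r^2 * ((y 0)^2 / ‖y‖^2) = 2 * r^2 * (V / 3) := by
    rw [integral_const_mul, coord_sq_int]
  have e2 : ∫ _ in ball (0:E3) 1, (1 - r^2 : ℝ) = (1 - r^2) * V := by
    rw [setIntegral_const, smul_eq_mul, mul_comm]; rfl
  have e3 : ∫ y in ball (0:E3) 1, (-2:ℝ) * (b y * Real.sqrt (1 - r^2 + (b y)^2)) = 0 := by
    rw [integral_const_mul]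
    have hodd : ∀ y : E3, b (-y) * Real.sqrt (1 - r^2 + (b (-y))^2)
        = -(b y * Real.sqrt (1 - r^2 + (b y)^2)) := by
      intro y
      have h5 : b (-y) = -(b y) := by
        rw [hb]
        simp only [norm_neg]
        have : (-y) 0 = -(y 0) := rfl
        rw [this]; ring
      rw [h5]
      ring_nf
    rw [odd_ball_int _ hodd]
    ring
  rw [e1, e2, e3]
  field_simp
  ring

end Aux
end
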